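/- arXiv:2311.17793 — 7 statements merged into one kernel-verified Lean document; each statement's English description precedes it below -/
import Mathlib

section
/- Let (G, λ) be an edge-labeled graph with at least 2 vertices and let v be an MAT-simplicial vertex of (G, λ). Then λ is an MAT-labeling of G if and only if the restriction of λ to the edges of G \ v is an MAT-labeling of G \ v. -/
/-- An edge-labeling `lab : Sym2 V → ℕ` of a simple graph `G` is an MAT-labeling if
labels of edges are positive, (ML1) for every `k`, no edge of label `≤ k` forms a cycle
with edges of label `k` (i.e. the graph whose edges are the label-`k` edges together
with that edge is acyclic), and (ML2) every edge of label `k` forms exactly `k - 1`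
triangles with edges of smaller label. -/
def MATLabeling {V : Type*} (G : SimpleGraph V) (lab : Sym2 V → ℕ) : Prop :=
  (∀ e ∈ G.edgeSet, 1 ≤ lab e) ∧
  (∀ k : ℕ, ∀ e ∈ G.edgeSet, lab e ≤ k →
    (SimpleGraph.fromEdgeSet {f | (f ∈ G.edgeSet ∧ lab f = k) ∨ f = e}).IsAcyclic) ∧
  (∀ i j : V, G.Adj i j →
    {w : V | G.Adj w i ∧ G.Adj w j ∧ lab s(w, i) < lab s(i, j) ∧
      lab s(w, j) < lab s(i, j)}.ncard = lab s(i, j) - 1)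

/-- A vertex `v` is MAT-simplicial in the edge-labeled graph `(G, lab)`:
(MS1) `v` is simplicial; (MS2) the labels of the edges incident on `v` are exactly
`{1, …, deg v}`; (MS3) for distinct neighbors `u₁ u₂` of `v`,
`lab (u₁, u₂) < max (lab (u₁, v)) (lab (u₂, v))`. -/
def MATSimplicial {V : Type*} (G : SimpleGraph V) (lab : Sym2 V → ℕ) (v : V) : Prop :=
  (∀ u₁ ∈ G.neighborSet v, ∀ u₂ ∈ G.neighborSet v, u₁ ≠ u₂ → G.Adj u₁ u₂) ∧
  ((fun u => lab s(u, v)) '' G.neighborSet v = Set.Icc 1 (G.neighborSet v).ncard) ∧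
  (∀ u₁ ∈ G.neighborSet v, ∀ u₂ ∈ G.neighborSet v, u₁ ≠ u₂ →
    lab s(u₁, u₂) < max (lab s(u₁, v)) (lab s(u₂, v)))

namespace MATAux

open SimpleGraph

section lift
variable {V : Type*} {P : V → Prop} {H : SimpleGraph V} {H' : SimpleGraph {x // P x}}

/-- Lift a walk whose support avoids the forbidden vertices to the subtype graph. -/
def liftWalk (hAdj : ∀ a b (ha : P a) (hb : P b), H.Adj a b → H'.Adj ⟨a, ha⟩ ⟨b, hb⟩) :
    ∀ {a b : V} (ha : P a) (hb : P b) (p : H.Walk a b),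
      (∀ x ∈ p.support, P x) → H'.Walk ⟨a, ha⟩ ⟨b, hb⟩
  | _, _, _, _, .nil, _ => .nil
  | _, _, ha, hb, .cons (v := c) h q, hs =>
      .cons (hAdj _ _ ha (hs c (by simp)) h)
        (liftWalk hAdj (hs c (by simp)) hb q (fun x hx => hs x (by simp [hx])))

lemma liftWalk_support (hAdj : ∀ a b (ha : P a) (hb : P b), H.Adj a b → H'.Adj ⟨a, ha⟩ ⟨b, hb⟩)
    {a b : V} (ha : P a) (hb : P b) (p : H.Walk a b) (hs : ∀ x ∈ p.support, P x) :
    (liftWalk hAdj ha hb p hs).support.map Subtype.val = p.support := by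
  induction p with
  | nil => simp [liftWalk]
  | cons h q ih => simp [liftWalk, ih]

lemma liftWalk_edges (hAdj : ∀ a b (ha : P a) (hb : P b), H.Adj a b → H'.Adj ⟨a, ha⟩ ⟨b, hb⟩)
    {a b : V} (ha : P a) (hb : P b) (p : H.Walk a b) (hs : ∀ x ∈ p.support, P x) :
    (liftWalk hAdj ha hb p hs).edges.map (Sym2.map Subtype.val) = p.edges := by
  induction p with
  | nil => simp [liftWalk]
  | cons h q ih => simp [liftWalk, ih]

lemma liftWalk_length (hAdj : ∀ a b (ha : P a) (hb : P b), H.Adj a b → H'.Adj ⟨a, ha⟩ ⟨b, hb⟩)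
    {a b : V} (ha : P a) (hb : P b) (p : H.Walk a b) (hs : ∀ x ∈ p.support, P x) :
    (liftWalk hAdj ha hb p hs).length = p.length := by
  induction p with
  | nil => simp [liftWalk]
  | cons h q ih => simp [liftWalk, ih]

lemma liftWalk_isCycle (hAdj : ∀ a b (ha : P a) (hb : P b), H.Adj a b → H'.Adj ⟨a, ha⟩ ⟨b, hb⟩)
    {a : V} (ha : P a) (p : H.Walk a a) (hs : ∀ x ∈ p.support, P x) (hc : p.IsCycle) :
    (liftWalk hAdj ha ha p hs).IsCycle := by
  rw [SimpleGraph.Walk.isCycle_def] at hc ⊢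
  refine ⟨?_, ?_, ?_⟩
  · rw [SimpleGraph.Walk.isTrail_def]
    have := hc.1.edges_nodup
    rw [← liftWalk_edges hAdj ha ha p hs] at this
    exact this.of_map _
  · intro hnil
    have := liftWalk_length hAdj ha ha p hs
    rw [hnil] at this
    simp only [SimpleGraph.Walk.length_nil] at this
    have h3 : 3 ≤ p.length :=
      (show p.IsCycle by rw [SimpleGraph.Walk.isCycle_def]; exact hc).three_le_length
    omega
  · have := hc.2.2
    rw [← liftWalk_support hAdj ha ha p hs, ← List.map_tail] at this
    exact this.of_map _

end lift

variable {V : Type*}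

lemma ncard_Icc_nat (a b : ℕ) : (Set.Icc a b).ncard = b + 1 - a := by
  rw [← Finset.coe_Icc, Set.ncard_coe_finset, Nat.card_Icc]

lemma injOn_of_MS2 {G : SimpleGraph V} {lab : Sym2 V → ℕ} {v : V} [Finite V]
    (h2 : (fun u => lab s(u, v)) '' G.neighborSet v
        = Set.Icc 1 (G.neighborSet v).ncard) :
    Set.InjOn (fun u => lab s(u, v)) (G.neighborSet v) := by
  apply Set.injOn_of_ncard_image_eq _ (Set.toFinite _)
  rw [h2, ncard_Icc_nat]
  omega

lemma count_lt_of_MS2 {G : SimpleGraph V} {lab : Sym2 V → ℕ} {v : V} [Finite V]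
    (h2 : (fun u => lab s(u, v)) '' G.neighborSet v
        = Set.Icc 1 (G.neighborSet v).ncard)
    {u : V} (hu : u ∈ G.neighborSet v) :
    {w : V | w ∈ G.neighborSet v ∧ lab s(w, v) < lab s(u, v)}.ncard
      = lab s(u, v) - 1 := by
  set N := G.neighborSet v
  set φ : V → ℕ := fun u => lab s(u, v) with hφ
  have hinj := injOn_of_MS2 h2
  have hmem : φ u ∈ Set.Icc 1 N.ncard := h2 ▸ Set.mem_image_of_mem φ hu
  have himage : φ '' {w | w ∈ N ∧ φ w < φ u} = Set.Icc 1 (φ u - 1) := by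
    apply Set.Subset.antisymm
    · rintro m ⟨w, ⟨hwN, hwlt⟩, rfl⟩
      have : φ w ∈ Set.Icc 1 N.ncard := h2 ▸ Set.mem_image_of_mem φ hwN
      simp only [Set.mem_Icc] at this ⊢
      omega
    · intro m hm
      simp only [Set.mem_Icc] at hm hmem
      have : m ∈ Set.Icc 1 N.ncard := by simp only [Set.mem_Icc]; omega
      rw [← h2] at this
      obtain ⟨w, hwN, hwm⟩ := this
      exact ⟨w, ⟨hwN, by omega⟩, hwm⟩
  have hcard := Set.ncard_image_of_injOn (hinj.mono (fun w hw => hw.1) :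
    Set.InjOn φ {w | w ∈ N ∧ φ w < φ u})
  rw [himage, ncard_Icc_nat] at hcard
  simp only [Set.mem_Icc] at hmem
  have hfinal : {w | w ∈ N ∧ φ w < φ u}.ncard = φ u - 1 := by omega
  exact hfinal

/-- The number of small-label triangles over an edge `(u, v)` at an MAT-simplicial
vertex `v`. -/
lemma ML2_at_v {G : SimpleGraph V} {lab : Sym2 V → ℕ} {v : V} [Finite V]
    (hv : MATSimplicial G lab v) {u : V} (hu : u ∈ G.neighborSet v) :
    {w : V | G.Adj w u ∧ G.Adj w v ∧ lab s(w, u) < lab s(u, v) ∧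
      lab s(w, v) < lab s(u, v)}.ncard = lab s(u, v) - 1 := by
  have hset : {w : V | G.Adj w u ∧ G.Adj w v ∧ lab s(w, u) < lab s(u, v) ∧
      lab s(w, v) < lab s(u, v)} = {w : V | w ∈ G.neighborSet v ∧ lab s(w, v) < lab s(u, v)} := by
    ext w
    simp only [Set.mem_setOf_eq, SimpleGraph.mem_neighborSet]
    constructor
    · rintro ⟨h1, h2, h3, h4⟩
      exact ⟨h2.symm, h4⟩
    · rintro ⟨h1, h2⟩
      have hne : w ≠ u := by rintro rfl; omega
      have hadj := hv.1 w h1 u hu hne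
      refine ⟨hadj, h1.symm, ?_, h2⟩
      have := hv.2.2 w h1 u hu hne
      omega
  rw [hset]
  exact count_lt_of_MS2 hv.2.1 hu

/-- Variant of `ML2_at_v` with the edge oriented as `(v, u)`. -/
lemma ML2_at_v' {G : SimpleGraph V} {lab : Sym2 V → ℕ} {v : V} [Finite V]
    (hv : MATSimplicial G lab v) {u : V} (hu : u ∈ G.neighborSet v) :
    {w : V | G.Adj w v ∧ G.Adj w u ∧ lab s(w, v) < lab s(v, u) ∧
      lab s(w, u) < lab s(v, u)}.ncard = lab s(v, u) - 1 := by
  have hswap : (s(v, u) : Sym2 V) = s(u, v) := Sym2.eq_swap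
  rw [hswap]
  rw [show {w : V | G.Adj w v ∧ G.Adj w u ∧ lab s(w, v) < lab s(u, v) ∧
      lab s(w, u) < lab s(u, v)} = {w : V | G.Adj w u ∧ G.Adj w v ∧ lab s(w, u) < lab s(u, v) ∧
      lab s(w, v) < lab s(u, v)} from by ext w; simp only [Set.mem_setOf_eq]; tauto]
  exact ML2_at_v hv hu

/-- Transfer of the triangle count between `G` and `G \ v` for edges avoiding `v`. -/
lemma triangle_ncard {G : SimpleGraph V} {lab : Sym2 V → ℕ} {v : V}
    (hv : MATSimplicial G lab v) {i j : V} (hiv : i ≠ v) (hjv : j ≠ v) (hadj : G.Adj i j) :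
    {w : {u : V | u ≠ v} | (G.induce {u : V | u ≠ v}).Adj w (⟨i, hiv⟩ : {u : V | u ≠ v}) ∧
      (G.induce {u : V | u ≠ v}).Adj w (⟨j, hjv⟩ : {u : V | u ≠ v}) ∧
      (fun e => lab (Sym2.map Subtype.val e)) s(w, (⟨i, hiv⟩ : {u : V | u ≠ v})) <
        (fun e => lab (Sym2.map Subtype.val e)) s((⟨i, hiv⟩ : {u : V | u ≠ v}), (⟨j, hjv⟩ : {u : V | u ≠ v})) ∧
      (fun e => lab (Sym2.map Subtype.val e)) s(w, (⟨j, hjv⟩ : {u : V | u ≠ v})) <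
        (fun e => lab (Sym2.map Subtype.val e)) s((⟨i, hiv⟩ : {u : V | u ≠ v}), (⟨j, hjv⟩ : {u : V | u ≠ v}))}.ncard
    = {w : V | G.Adj w i ∧ G.Adj w j ∧ lab s(w, i) < lab s(i, j) ∧
        lab s(w, j) < lab s(i, j)}.ncard := by
  have hkey : {w : V | G.Adj w i ∧ G.Adj w j ∧ lab s(w, i) < lab s(i, j) ∧
        lab s(w, j) < lab s(i, j)}
      = Subtype.val '' {w : {u : V | u ≠ v} | (G.induce {u : V | u ≠ v}).Adj w (⟨i, hiv⟩ : {u : V | u ≠ v}) ∧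
          (G.induce {u : V | u ≠ v}).Adj w (⟨j, hjv⟩ : {u : V | u ≠ v}) ∧
          (fun e => lab (Sym2.map Subtype.val e)) s(w, (⟨i, hiv⟩ : {u : V | u ≠ v})) <
            (fun e => lab (Sym2.map Subtype.val e)) s((⟨i, hiv⟩ : {u : V | u ≠ v}), (⟨j, hjv⟩ : {u : V | u ≠ v})) ∧
          (fun e => lab (Sym2.map Subtype.val e)) s(w, (⟨j, hjv⟩ : {u : V | u ≠ v})) <
            (fun e => lab (Sym2.map Subtype.val e)) s((⟨i, hiv⟩ : {u : V | u ≠ v}), (⟨j, hjv⟩ : {u : V | u ≠ v}))} := by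
    ext w
    simp only [Set.mem_setOf_eq, Set.mem_image]
    constructor
    · rintro ⟨h1, h2, h3, h4⟩
      have hwv : w ≠ v := by
        intro hweq
        rw [hweq] at h1 h2 h3 h4
        have hij : i ≠ j := hadj.ne
        have hiN : i ∈ G.neighborSet v := h1
        have hjN : j ∈ G.neighborSet v := h2
        have := hv.2.2 i hiN j hjN hij
        rw [(Sym2.eq_swap : (s(v, i) : Sym2 V) = s(i, v))] at h3
        rw [(Sym2.eq_swap : (s(v, j) : Sym2 V) = s(j, v))] at h4
        omega
      refine ⟨⟨w, hwv⟩, ⟨?_, ?_, ?_, ?_⟩, rfl⟩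
      · simpa using h1
      · simpa using h2
      · simpa [Sym2.map_pair_eq] using h3
      · simpa [Sym2.map_pair_eq] using h4
    · rintro ⟨⟨w', hw'⟩, ⟨h1, h2, h3, h4⟩, rfl⟩
      refine ⟨by simpa using h1, by simpa using h2, ?_, ?_⟩
      · simpa [Sym2.map_pair_eq] using h3
      · simpa [Sym2.map_pair_eq] using h4
  rw [hkey, Set.ncard_image_of_injective _ Subtype.val_injective]

lemma map_edge_mem {G : SimpleGraph V} {v : V} {e' : Sym2 {u : V | u ≠ v}}
    (h : e' ∈ (G.induce {u : V | u ≠ v}).edgeSet) :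
    Sym2.map Subtype.val e' ∈ G.edgeSet := by
  obtain ⟨a, b, rfl⟩ : ∃ a b, e' = s(a, b) := by
    induction e' using Sym2.ind with | _ a b => exact ⟨a, b, rfl⟩
  rw [Sym2.map_pair_eq, SimpleGraph.mem_edgeSet]
  rw [SimpleGraph.mem_edgeSet] at h
  simpa using h

lemma lemA (G : SimpleGraph V) (lab : Sym2 V → ℕ) (v : V) (k : ℕ)
    (e' : Sym2 {u : V | u ≠ v})
    (hacyc : (SimpleGraph.fromEdgeSet {f | (f ∈ (G.induce {u : V | u ≠ v}).edgeSet ∧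
        lab (Sym2.map Subtype.val f) = k) ∨ f = e'}).IsAcyclic)
    {x : V} (hx : x ≠ v)
    (c : (SimpleGraph.fromEdgeSet {f : Sym2 V |
        (f ∈ G.edgeSet ∧ lab f = k ∧ v ∉ f) ∨ f = Sym2.map Subtype.val e'}).Walk x x)
    (hc : c.IsCycle) (hsupp : ∀ y ∈ c.support, y ≠ v) : False := by
  have hAdj : ∀ a b (ha : a ∈ {u : V | u ≠ v}) (hb : b ∈ {u : V | u ≠ v}),
      (SimpleGraph.fromEdgeSet {f : Sym2 V |
        (f ∈ G.edgeSet ∧ lab f = k ∧ v ∉ f) ∨ f = Sym2.map Subtype.val e'}).Adj a b →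
      (SimpleGraph.fromEdgeSet {f | (f ∈ (G.induce {u : V | u ≠ v}).edgeSet ∧
        lab (Sym2.map Subtype.val f) = k) ∨ f = e'}).Adj ⟨a, ha⟩ ⟨b, hb⟩ := by
    intro a b ha hb hadj
    rw [fromEdgeSet_adj] at hadj ⊢
    obtain ⟨hf, hne⟩ := hadj
    refine ⟨?_, by simpa [Subtype.ext_iff] using hne⟩
    rcases hf with ⟨hG, hlab, _⟩ | hfe
    · exact Or.inl ⟨by simpa [mem_edgeSet] using hG, by simpa using hlab⟩
    · refine Or.inr (Sym2.map.injective Subtype.val_injective ?_)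
      simpa using hfe
  exact hacyc _ (liftWalk_isCycle hAdj hx c hsupp hc)

lemma ML1_back [Finite V] (G : SimpleGraph V) (lab : Sym2 V → ℕ) (v : V)
    (hv : MATSimplicial G lab v)
    (hacyc' : ∀ k : ℕ, ∀ e ∈ (G.induce {u : V | u ≠ v}).edgeSet,
      lab (Sym2.map Subtype.val e) ≤ k →
      (SimpleGraph.fromEdgeSet {f | (f ∈ (G.induce {u : V | u ≠ v}).edgeSet ∧
        lab (Sym2.map Subtype.val f) = k) ∨ f = e}).IsAcyclic)
    (k : ℕ) (e : Sym2 V) (he : e ∈ G.edgeSet) (hek : lab e ≤ k) :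
    (SimpleGraph.fromEdgeSet {f | (f ∈ G.edgeSet ∧ lab f = k) ∨ f = e}).IsAcyclic := by
  classical
  set H := SimpleGraph.fromEdgeSet {f | (f ∈ G.edgeSet ∧ lab f = k) ∨ f = e} with hH
  intro x c hc
  have hedgeS : ∀ f ∈ c.edges, (f ∈ G.edgeSet ∧ lab f = k) ∨ f = e := by
    intro f hf
    have := c.edges_subset_edgeSet hf
    rw [hH, edgeSet_fromEdgeSet] at this
    exact this.1
  have hedgeG : ∀ f ∈ c.edges, f ∈ G.edgeSet := by
    intro f hf
    rcases hedgeS f hf with ⟨h, _⟩ | rfl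
    exacts [h, he]
  by_cases hvs : v ∈ c.support
  · -- the cycle passes through v
    obtain ⟨u₁, h1, q, hdec⟩ : ∃ (u₁ : V) (h1 : H.Adj v u₁) (q : H.Walk u₁ v),
        c.rotate v hvs = SimpleGraph.Walk.cons h1 q := by
      cases hrot : c.rotate v hvs with
      | nil => exact absurd (hrot ▸ hc.rotate hvs) (by simp)
      | cons h q => exact ⟨_, h, q, rfl⟩
    have hmemc : ∀ f ∈ q.edges, f ∈ c.edges := by
      intro f hf
      have : f ∈ (c.rotate v hvs).edges := by
        rw [hdec, SimpleGraph.Walk.edges_cons]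
        exact List.mem_cons_of_mem _ hf
      exact (c.rotate_edges v hvs).mem_iff.mp this
    have hfirstc : s(v, u₁) ∈ c.edges := by
      apply (c.rotate_edges v hvs).mem_iff.mp
      rw [hdec, SimpleGraph.Walk.edges_cons]
      exact List.mem_cons_self
    have hc2 : (SimpleGraph.Walk.cons h1 q).IsCycle := hdec ▸ hc.rotate hvs
    rw [SimpleGraph.Walk.cons_isCycle_iff] at hc2
    obtain ⟨u₂, h2, r2, hrev⟩ : ∃ (u₂ : V) (h2 : H.Adj v u₂) (r2 : H.Walk u₂ u₁),
        q.reverse = SimpleGraph.Walk.cons h2 r2 := by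
      cases hrev : q.reverse with
      | nil => exact absurd h1 (by simp)
      | cons h r => exact ⟨_, h, r, rfl⟩
    have hq : q = r2.reverse.concat h2.symm := by
      have h' := congrArg SimpleGraph.Walk.reverse hrev
      rw [SimpleGraph.Walk.reverse_reverse] at h'
      rw [h', SimpleGraph.Walk.reverse_cons, ← SimpleGraph.Walk.concat_eq_append]
    set r := r2.reverse with hr
    have hqsupp : q.support = r.support ++ [v] := by
      rw [hq, SimpleGraph.Walk.support_concat]
    have hnd : r.support.Nodup ∧ v ∉ r.support := by
      have := hc2.1.support_nodup
      rw [hqsupp, List.nodup_append] at this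
      exact ⟨this.1, fun hvv => this.2.2 v hvv v (List.mem_singleton_self v) rfl⟩
    have hqedges : q.edges = r.edges ++ [s(u₂, v)] := by
      rw [hq, SimpleGraph.Walk.edges_concat, List.concat_eq_append]
    have hlastc : s(u₂, v) ∈ c.edges := by
      apply hmemc
      rw [hqedges]
      exact List.mem_append_right _ (List.mem_singleton_self _)
    have hS1 := hedgeS _ hfirstc
    have hS2 := hedgeS _ hlastc
    have hu₁N : u₁ ∈ G.neighborSet v := by
      rw [mem_neighborSet, ← mem_edgeSet]
      exact hedgeG _ hfirstc
    have hu₂N : u₂ ∈ G.neighborSet v := by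
      rw [mem_neighborSet, ← mem_edgeSet]
      have := hedgeG _ hlastc
      rwa [Sym2.eq_swap] at this
    have hne12 : u₁ ≠ u₂ := by
      rintro rfl
      apply hc2.2
      rw [hqedges]
      apply List.mem_append_right
      rw [Sym2.eq_swap]
      exact List.mem_singleton_self _
    have hinj := injOn_of_MS2 hv.2.1
    have hvee : v ∈ e := by
      by_contra hve
      have hl1 : lab s(u₁, v) = k := by
        rw [Sym2.eq_swap]
        rcases hS1 with ⟨_, h⟩ | h
        · exact h
        · exact absurd (h ▸ Sym2.mem_mk_left v u₁) hve
      have hl2 : lab s(u₂, v) = k := by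
        rcases hS2 with ⟨_, h⟩ | h
        · exact h
        · exact absurd (h ▸ Sym2.mem_mk_right u₂ v) hve
      apply hne12
      apply hinj hu₁N hu₂N
      show lab s(u₁, v) = lab s(u₂, v)
      rw [hl1, hl2]
    have hl1k : lab s(v, u₁) ≤ k := by
      rcases hS1 with ⟨_, h⟩ | h
      · exact h.le
      · rw [h]; exact hek
    have hl2k : lab s(u₂, v) ≤ k := by
      rcases hS2 with ⟨_, h⟩ | h
      · exact h.le
      · rw [h]; exact hek
    have hchordlt : lab s(u₁, u₂) < k := by
      have := hv.2.2 u₁ hu₁N u₂ hu₂N hne12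
      have h1' : lab s(u₁, v) ≤ k := by rwa [Sym2.eq_swap]
      have h2' : lab s(u₂, v) ≤ k := hl2k
      omega
    have hchordadj : G.Adj u₁ u₂ := hv.1 u₁ hu₁N u₂ hu₂N hne12
    have hu₁v : u₁ ∈ {u : V | u ≠ v} := h1.ne'
    have hu₂v : u₂ ∈ {u : V | u ≠ v} := h2.ne'
    set e' : Sym2 {u : V | u ≠ v} := s(⟨u₁, hu₁v⟩, ⟨u₂, hu₂v⟩) with he'
    have hmape' : Sym2.map Subtype.val e' = s(u₁, u₂) := by
      rw [he', Sym2.map_pair_eq]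
    have hredge : ∀ f ∈ r.edges, f ∈ G.edgeSet ∧ lab f = k ∧ v ∉ f := by
      intro f hf
      have hfq : f ∈ q.edges := by rw [hqedges]; exact List.mem_append_left _ hf
      have hvf : v ∉ f := by
        intro hvmem
        apply hnd.2
        obtain ⟨a, b, rfl⟩ : ∃ a b, f = s(a, b) := by
          induction f using Sym2.ind with | _ a b => exact ⟨a, b, rfl⟩
        rcases Sym2.mem_iff.mp hvmem with rfl | rfl
        · exact r.fst_mem_support_of_mem_edges hf
        · exact r.snd_mem_support_of_mem_edges hf
      rcases hedgeS f (hmemc f hfq) with ⟨hG, hl⟩ | rfl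
      · exact ⟨hG, hl, hvf⟩
      · exact absurd hvee hvf
    set K := SimpleGraph.fromEdgeSet {f : Sym2 V |
        (f ∈ G.edgeSet ∧ lab f = k ∧ v ∉ f) ∨ f = Sym2.map Subtype.val e'} with hK
    have hsub : ∀ f ∈ r.edges, f ∈ K.edgeSet := by
      intro f hf
      rw [hK, edgeSet_fromEdgeSet]
      exact ⟨Or.inl (hredge f hf), G.not_isDiag_of_mem_edgeSet (hredge f hf).1⟩
    have hKadj : K.Adj u₂ u₁ := by
      rw [hK, fromEdgeSet_adj]
      exact ⟨Or.inr (by rw [hmape', Sym2.eq_swap]), hne12.symm⟩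
    have hc₂ : (SimpleGraph.Walk.cons hKadj (r.transfer K hsub)).IsCycle := by
      rw [SimpleGraph.Walk.cons_isCycle_iff]
      refine ⟨(SimpleGraph.Walk.IsPath.mk' hnd.1).transfer hsub, ?_⟩
      intro hmem
      rw [SimpleGraph.Walk.edges_transfer] at hmem
      have := (hredge _ hmem).2.1
      rw [Sym2.eq_swap] at this
      omega
    have hsupp₂ : ∀ y ∈ (SimpleGraph.Walk.cons hKadj (r.transfer K hsub)).support, y ≠ v := by
      intro y hy
      rw [SimpleGraph.Walk.support_cons, SimpleGraph.Walk.support_transfer,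
        List.mem_cons] at hy
      rcases hy with rfl | hy
      · exact h2.ne'
      · exact fun hyv => hnd.2 (hyv ▸ hy)
    have he'mem : e' ∈ (G.induce {u : V | u ≠ v}).edgeSet := by
      rw [he', mem_edgeSet]
      simpa using hchordadj
    have he'lab : lab (Sym2.map Subtype.val e') ≤ k := by
      rw [hmape']; exact hchordlt.le
    exact lemA G lab v k e' (hacyc' k e' he'mem he'lab) h2.ne'
      (SimpleGraph.Walk.cons hKadj (r.transfer K hsub)) hc₂ hsupp₂
  · -- the cycle avoids v
    have hvnotedge : ∀ f ∈ c.edges, v ∉ f := by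
      intro f hf hvf
      obtain ⟨a, b, rfl⟩ : ∃ a b, f = s(a, b) := by
        induction f using Sym2.ind with | _ a b => exact ⟨a, b, rfl⟩
      rcases Sym2.mem_iff.mp hvf with rfl | rfl
      · exact hvs (c.fst_mem_support_of_mem_edges hf)
      · exact hvs (c.snd_mem_support_of_mem_edges hf)
    have hxv : x ≠ v := fun h => hvs (h ▸ c.start_mem_support)
    obtain ⟨a, b, ha, hb, hadj, hlab, hmap⟩ :
        ∃ (a b : V) (ha : a ∈ {u : V | u ≠ v}) (hb : b ∈ {u : V | u ≠ v}),
          G.Adj a b ∧ lab s(a, b) ≤ k ∧ (∀ f ∈ c.edges, f = e → f = s(a, b)) := by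
      by_cases hve : v ∈ e
      · have hlen := hc.three_le_length
        have hne : c.edges ≠ [] := by
          have : c.edges.length = c.length := SimpleGraph.Walk.length_edges c
          intro h; rw [h] at this; simp at this; omega
        obtain ⟨f₀, hf₀⟩ := List.exists_mem_of_ne_nil _ hne
        obtain ⟨a, b, rfl⟩ : ∃ a b, f₀ = s(a, b) := by
          induction f₀ using Sym2.ind with | _ a b => exact ⟨a, b, rfl⟩
        have hf₀e : s(a, b) ≠ e := fun h => hvnotedge _ hf₀ (h ▸ hve)
        have hf₀k : s(a, b) ∈ G.edgeSet ∧ lab s(a, b) = k := by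
          rcases hedgeS _ hf₀ with h | h
          · exact h
          · exact absurd h hf₀e
        have hav : a ≠ v := fun h => hvnotedge _ hf₀ (by rw [h]; exact Sym2.mem_mk_left _ _)
        have hbv : b ≠ v := fun h => hvnotedge _ hf₀ (by rw [h]; exact Sym2.mem_mk_right _ _)
        refine ⟨a, b, hav, hbv, (G.mem_edgeSet).mp hf₀k.1, hf₀k.2.le, ?_⟩
        intro f hf hfe
        exact absurd (hfe.symm ▸ hve : v ∈ f) (hvnotedge f hf)
      · obtain ⟨a, b, rfl⟩ : ∃ a b, e = s(a, b) := by
          induction e using Sym2.ind with | _ a b => exact ⟨a, b, rfl⟩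
        have hav : a ≠ v := fun h => hve (by rw [h]; exact Sym2.mem_mk_left _ _)
        have hbv : b ≠ v := fun h => hve (by rw [h]; exact Sym2.mem_mk_right _ _)
        exact ⟨a, b, hav, hbv, (G.mem_edgeSet).mp he, hek, fun f hf hfe => hfe⟩
    set e' : Sym2 {u : V | u ≠ v} := s(⟨a, ha⟩, ⟨b, hb⟩) with he'
    have hmape' : Sym2.map Subtype.val e' = s(a, b) := by rw [he', Sym2.map_pair_eq]
    set K := SimpleGraph.fromEdgeSet {f : Sym2 V |
        (f ∈ G.edgeSet ∧ lab f = k ∧ v ∉ f) ∨ f = Sym2.map Subtype.val e'} with hK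
    have hsub : ∀ f ∈ c.edges, f ∈ K.edgeSet := by
      intro f hf
      rw [hK, edgeSet_fromEdgeSet]
      refine ⟨?_, G.not_isDiag_of_mem_edgeSet (hedgeG f hf)⟩
      rcases hedgeS f hf with ⟨hG, hl⟩ | hfe
      · exact Or.inl ⟨hG, hl, hvnotedge f hf⟩
      · exact Or.inr (by rw [hmape']; exact hmap f hf hfe)
    have he'mem : e' ∈ (G.induce {u : V | u ≠ v}).edgeSet := by
      rw [he', mem_edgeSet]; simpa using hadj
    have he'lab : lab (Sym2.map Subtype.val e') ≤ k := by rw [hmape']; exact hlab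
    refine lemA G lab v k e' (hacyc' k e' he'mem he'lab) hxv (c.transfer K hsub)
      (hc.transfer hsub) ?_
    intro y hy
    rw [SimpleGraph.Walk.support_transfer] at hy
    exact fun hyv => hvs (hyv ▸ hy)

lemma ML1_forward (G : SimpleGraph V) (lab : Sym2 V → ℕ) (v : V)
    (hacyc : ∀ k : ℕ, ∀ e ∈ G.edgeSet, lab e ≤ k →
      (SimpleGraph.fromEdgeSet {f | (f ∈ G.edgeSet ∧ lab f = k) ∨ f = e}).IsAcyclic)
    (k : ℕ) (e' : Sym2 {u : V | u ≠ v}) (he' : e' ∈ (G.induce {u : V | u ≠ v}).edgeSet)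
    (hek : lab (Sym2.map Subtype.val e') ≤ k) :
    (SimpleGraph.fromEdgeSet {f | (f ∈ (G.induce {u : V | u ≠ v}).edgeSet ∧
      lab (Sym2.map Subtype.val f) = k) ∨ f = e'}).IsAcyclic := by
  intro x c hc
  have hAdjF : ∀ {a b : {u : V | u ≠ v}},
      (SimpleGraph.fromEdgeSet {f | (f ∈ (G.induce {u : V | u ≠ v}).edgeSet ∧
        lab (Sym2.map Subtype.val f) = k) ∨ f = e'}).Adj a b →
      (SimpleGraph.fromEdgeSet {f | (f ∈ G.edgeSet ∧ lab f = k) ∨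
        f = Sym2.map Subtype.val e'}).Adj a.val b.val := by
    intro a b hadj
    rw [SimpleGraph.fromEdgeSet_adj] at hadj ⊢
    obtain ⟨hf, hne⟩ := hadj
    refine ⟨?_, fun h => hne (Subtype.val_injective h)⟩
    rcases hf with ⟨hmem, hlab⟩ | rfl
    · refine Or.inl ⟨?_, ?_⟩
      · rw [show (s(a.val, b.val) : Sym2 V) = Sym2.map Subtype.val s(a, b) from
          (Sym2.map_pair_eq _ _ _).symm]
        exact map_edge_mem hmem
      · rw [show (s(a.val, b.val) : Sym2 V) = Sym2.map Subtype.val s(a, b) from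
          (Sym2.map_pair_eq _ _ _).symm]
        exact hlab
    · exact Or.inr (Sym2.map_pair_eq _ _ _).symm
  let F : (SimpleGraph.fromEdgeSet {f | (f ∈ (G.induce {u : V | u ≠ v}).edgeSet ∧
      lab (Sym2.map Subtype.val f) = k) ∨ f = e'}) →g
      (SimpleGraph.fromEdgeSet {f | (f ∈ G.edgeSet ∧ lab f = k) ∨
        f = Sym2.map Subtype.val e'}) := ⟨Subtype.val, hAdjF⟩
  have hinj : Function.Injective ⇑F := fun a b h => Subtype.val_injective h
  exact hacyc k (Sym2.map Subtype.val e') (map_edge_mem he') hek (c.map F)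
    ((SimpleGraph.Walk.map_isCycle_iff_of_injective hinj).mpr hc)

end MATAux

open MATAux SimpleGraph in
/-- Deletion of an MAT-simplicial vertex: for an edge-labeled graph with at least two
vertices and an MAT-simplicial vertex `v`, `lab` is an MAT-labeling of `G` iff its
restriction is an MAT-labeling of `G \ v`. -/
theorem MATLabeling_iff_delete_MATSimplicial {V : Type*} [Finite V]
    (G : SimpleGraph V) (lab : Sym2 V → ℕ) (hcard : 2 ≤ Nat.card V)
    (v : V) (hv : MATSimplicial G lab v) :
    MATLabeling G lab ↔
      MATLabeling (G.induce {u : V | u ≠ v})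
        (fun e => lab (Sym2.map Subtype.val e)) := by
  constructor
  · rintro ⟨hpos, hacyc, htri⟩
    refine ⟨?_, ?_, ?_⟩
    · intro e' he'
      exact hpos _ (map_edge_mem he')
    · intro k e' he' hek
      exact ML1_forward G lab v hacyc k e' he' hek
    · intro i j hadj
      have hadjV : G.Adj i.val j.val := by simpa using hadj
      have h1 := triangle_ncard hv i.prop j.prop hadjV
      have h2 := htri i.val j.val hadjV
      exact h1.trans h2
  · rintro ⟨hpos', hacyc', htri'⟩
    refine ⟨?_, ?_, ?_⟩
    · -- positivity of labels
      intro e he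
      obtain ⟨a, b, rfl⟩ : ∃ a b, e = s(a, b) := by
        induction e using Sym2.ind with | _ a b => exact ⟨a, b, rfl⟩
      rw [mem_edgeSet] at he
      by_cases hav : a = v
      · subst hav
        have hbN : b ∈ G.neighborSet a := he
        have : lab s(b, a) ∈ Set.Icc 1 (G.neighborSet a).ncard :=
          hv.2.1 ▸ Set.mem_image_of_mem _ hbN
        rw [Sym2.eq_swap]
        exact (Set.mem_Icc.mp this).1
      · by_cases hbv : b = v
        · subst hbv
          have haN : a ∈ G.neighborSet b := he.symm
          have : lab s(a, b) ∈ Set.Icc 1 (G.neighborSet b).ncard :=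
            hv.2.1 ▸ Set.mem_image_of_mem _ haN
          exact (Set.mem_Icc.mp this).1
        · have h := hpos' s(⟨a, hav⟩, ⟨b, hbv⟩)
            (by rw [mem_edgeSet]; simpa using he)
          simpa [Sym2.map_pair_eq] using h
    · -- (ML1)
      intro k e he hek
      exact ML1_back G lab v hv hacyc' k e he hek
    · -- (ML2)
      intro i j hadj
      by_cases hiv : i = v
      · subst hiv
        exact ML2_at_v' hv hadj
      · by_cases hjv : j = v
        · subst hjv
          exact ML2_at_v hv hadj.symm
        · have h1 := triangle_ncard hv hiv hjv hadj
          have h2 := htri' ⟨i, hiv⟩ ⟨j, hjv⟩ (by simpa using hadj)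
          rw [← h1, h2]
          simp [Sym2.map_pair_eq]
end

section
/- Let (G, λ) be an MAT-labeled graph and let F_1, F_2 ⊆ E_G. If the restrictions λ|_{F_1} and λ|_{F_2} are MAT-labelings of the subgraphs (N_G, F_1) and (N_G, F_2) respectively, then λ|_{F_1 ∪ F_2} is an MAT-labeling of (N_G, F_1 ∪ F_2). -/
/-- Acyclicity is antitone with respect to the subgraph relation. -/
lemma isAcyclic_anti {V : Type*} {G H : SimpleGraph V} (hle : G ≤ H)
    (hH : H.IsAcyclic) : G.IsAcyclic :=
  fun _ c hc => hH (c.mapLe hle) (hc.mapLe hle)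

/-- Auxiliary lemma: the triangle-count condition (ML2) for an edge of `F ⊆ F'`. -/
lemma MAT_union_aux {V : Type*} (G : SimpleGraph V) (lab : Sym2 V → ℕ)
    (h : MATLabeling G lab) (F F' : Set (Sym2 V))
    (hF' : F' ⊆ G.edgeSet) (hFF' : F ⊆ F')
    (hMF : MATLabeling (SimpleGraph.fromEdgeSet F) lab) (i j : V)
    (hij : (SimpleGraph.fromEdgeSet F').Adj i j) (he : s(i, j) ∈ F) :
    {w : V | (SimpleGraph.fromEdgeSet F').Adj w i ∧ (SimpleGraph.fromEdgeSet F').Adj w j ∧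
      lab s(w, i) < lab s(i, j) ∧ lab s(w, j) < lab s(i, j)}.ncard = lab s(i, j) - 1 := by
  have hAdjG : ∀ a b : V, (SimpleGraph.fromEdgeSet F').Adj a b → G.Adj a b := by
    intro a b hab
    rw [SimpleGraph.fromEdgeSet_adj] at hab
    exact (SimpleGraph.mem_edgeSet _).1 (hF' hab.1)
  have hijG : G.Adj i j := hAdjG i j hij
  have hijF : (SimpleGraph.fromEdgeSet F).Adj i j :=
    (SimpleGraph.fromEdgeSet_adj _).2 ⟨he, hijG.ne⟩
  set S' := {w : V | (SimpleGraph.fromEdgeSet F').Adj w i ∧ (SimpleGraph.fromEdgeSet F').Adj w j ∧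
      lab s(w, i) < lab s(i, j) ∧ lab s(w, j) < lab s(i, j)} with hS'
  set SG := {w : V | G.Adj w i ∧ G.Adj w j ∧ lab s(w, i) < lab s(i, j) ∧
      lab s(w, j) < lab s(i, j)} with hSG
  set SF := {w : V | (SimpleGraph.fromEdgeSet F).Adj w i ∧ (SimpleGraph.fromEdgeSet F).Adj w j ∧
      lab s(w, i) < lab s(i, j) ∧ lab s(w, j) < lab s(i, j)} with hSF
  have hsub1 : SF ⊆ S' := by
    intro w hw
    refine ⟨SimpleGraph.fromEdgeSet_mono hFF' hw.1, SimpleGraph.fromEdgeSet_mono hFF' hw.2.1,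
      hw.2.2⟩
  have hsub2 : S' ⊆ SG := by
    intro w hw
    exact ⟨hAdjG _ _ hw.1, hAdjG _ _ hw.2.1, hw.2.2.1, hw.2.2.2⟩
  have hG : SG.ncard = lab s(i, j) - 1 := h.2.2 i j hijG
  have hF : SF.ncard = lab s(i, j) - 1 := hMF.2.2 i j hijF
  rcases Nat.lt_or_ge (lab s(i, j)) 2 with hk | hk
  · -- lab s(i,j) ≤ 1 : the set is empty
    have : S' = ∅ := by
      ext w
      simp only [Set.mem_empty_iff_false, iff_false]
      intro hw
      have h1 : 1 ≤ lab s(w, i) := h.1 _ ((SimpleGraph.mem_edgeSet _).2 (hAdjG _ _ hw.1))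
      have h2 := hw.2.2.1
      omega
    rw [this, Set.ncard_empty]
    omega
  · -- lab s(i,j) ≥ 2 : sandwich between two finite sets of equal cardinality
    have hGfin : SG.Finite := by
      rcases SG.finite_or_infinite with hf | hinf
      · exact hf
      · rw [hinf.ncard] at hG; omega
    have hle1 : SF.ncard ≤ S'.ncard := Set.ncard_le_ncard hsub1 (hGfin.subset hsub2)
    have hle2 : S'.ncard ≤ SG.ncard := Set.ncard_le_ncard hsub2 hGfin
    omega

/-- If the restrictions of an MAT-labeling `lab` of `G` to edge subsets `F₁, F₂ ⊆ E_G`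
are MAT-labelings of the spanning subgraphs `(N_G, F₁)` and `(N_G, F₂)`, then the
restriction to `F₁ ∪ F₂` is an MAT-labeling of `(N_G, F₁ ∪ F₂)`. -/
theorem MATLabeling_union {V : Type*} (G : SimpleGraph V) (lab : Sym2 V → ℕ)
    (h : MATLabeling G lab) (F₁ F₂ : Set (Sym2 V))
    (hF₁ : F₁ ⊆ G.edgeSet) (hF₂ : F₂ ⊆ G.edgeSet)
    (h₁ : MATLabeling (SimpleGraph.fromEdgeSet F₁) lab)
    (h₂ : MATLabeling (SimpleGraph.fromEdgeSet F₂) lab) :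
    MATLabeling (SimpleGraph.fromEdgeSet (F₁ ∪ F₂)) lab := by
  have hFU : F₁ ∪ F₂ ⊆ G.edgeSet := Set.union_subset hF₁ hF₂
  have hsubE : (SimpleGraph.fromEdgeSet (F₁ ∪ F₂)).edgeSet ⊆ G.edgeSet := by
    rw [SimpleGraph.edgeSet_fromEdgeSet]
    exact fun e hme => hFU hme.1
  refine ⟨?_, ?_, ?_⟩
  · intro e he
    exact h.1 e (hsubE he)
  · intro k e he hke
    have hacy := h.2.1 k e (hsubE he) hke
    refine isAcyclic_anti (SimpleGraph.fromEdgeSet_mono ?_) hacy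
    intro f hf
    rcases hf with ⟨hf1, hf2⟩ | hf
    · exact Or.inl ⟨hsubE hf1, hf2⟩
    · exact Or.inr hf
  · intro i j hij
    have hmem : s(i, j) ∈ F₁ ∪ F₂ := ((SimpleGraph.fromEdgeSet_adj _).1 hij).1
    rcases hmem with hm | hm
    · exact MAT_union_aux G lab h F₁ (F₁ ∪ F₂) hFU Set.subset_union_left h₁ i j hij hm
    · exact MAT_union_aux G lab h F₂ (F₁ ∪ F₂) hFU Set.subset_union_right h₂ i j hij hm
end

section
/- Let (G, λ) be an MAT-labeled graph with clique number ω(G). Then the largest edge label occurring in (G, λ) equals ω(G) − 1. -/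
namespace MATaux

open SimpleGraph

variable {V : Type*}

def Wset (G : SimpleGraph V) (lab : Sym2 V → ℕ) (i j : V) : Set V :=
  {w : V | G.Adj w i ∧ G.Adj w j ∧ lab s(w, i) < lab s(i, j) ∧
      lab s(w, j) < lab s(i, j)}

lemma ncard_Wset {G : SimpleGraph V} {lab : Sym2 V → ℕ} (h : MATLabeling G lab)
    {i j : V} (hij : G.Adj i j) : (Wset G lab i j).ncard = lab s(i, j) - 1 :=
  h.2.2 i j hij

lemma labcomm (lab : Sym2 V → ℕ) (u v : V) : lab s(u, v) = lab s(v, u) := by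
  rw [Sym2.eq_swap]

lemma Wset_comm (G : SimpleGraph V) (lab : Sym2 V → ℕ) (i j : V) :
    Wset G lab i j = Wset G lab j i := by
  ext w
  simp only [Wset, Set.mem_setOf_eq]
  rw [labcomm lab i j]
  tauto

lemma isAcyclic_anti {G H : SimpleGraph V} (hle : G ≤ H) (h : H.IsAcyclic) : G.IsAcyclic :=
  fun _v c hc => h (c.mapLe hle) (hc.mapLe hle)

lemma tri_unique_max {G : SimpleGraph V} {lab : Sym2 V → ℕ} (h : MATLabeling G lab)
    {a b c : V} (hab : G.Adj a b) (hac : G.Adj a c) (hbc : G.Adj b c)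
    (h1 : lab s(a, b) = lab s(a, c)) (h2 : lab s(b, c) ≤ lab s(a, b)) : False := by
  set k := lab s(a, b) with hk
  have hbcE : s(b, c) ∈ G.edgeSet := hbc
  have hacyc := h.2.1 k s(b, c) hbcE h2
  set Γ := SimpleGraph.fromEdgeSet
    {f | (f ∈ G.edgeSet ∧ lab f = k) ∨ f = s(b, c)} with hΓ
  have hΓab : Γ.Adj a b := by
    rw [hΓ, fromEdgeSet_adj]
    exact ⟨Or.inl ⟨hab, rfl⟩, hab.ne⟩
  have hΓac : Γ.Adj a c := by
    rw [hΓ, fromEdgeSet_adj]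
    exact ⟨Or.inl ⟨hac, h1.symm⟩, hac.ne⟩
  have hΓbc : Γ.Adj b c := by
    rw [hΓ, fromEdgeSet_adj]
    exact ⟨Or.inr rfl, hbc.ne⟩
  have hbridge := (isAcyclic_iff_forall_adj_isBridge.mp hacyc) hΓbc
  rw [isBridge_iff] at hbridge
  apply hbridge
  have h1' : (Γ \ fromEdgeSet {s(b, c)}).Adj b a := by
    rw [sdiff_adj]
    constructor
    · exact hΓab.symm
    · rw [fromEdgeSet_adj]
      rintro ⟨hmem, -⟩
      rw [Set.mem_singleton_iff, Sym2.eq_iff] at hmem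
      rcases hmem with ⟨-, h'⟩ | ⟨h', -⟩
      · exact hac.ne h'
      · exact hbc.ne h'
  have h2' : (Γ \ fromEdgeSet {s(b, c)}).Adj a c := by
    rw [sdiff_adj]
    constructor
    · exact hΓac
    · rw [fromEdgeSet_adj]
      rintro ⟨hmem, -⟩
      rw [Set.mem_singleton_iff, Sym2.eq_iff] at hmem
      rcases hmem with ⟨h', -⟩ | ⟨h', -⟩
      · exact hab.ne h'
      · exact hac.ne h'
  exact h1'.reachable.trans h2'.reachable

lemma MAT_deleteEdges {G : SimpleGraph V} {lab : Sym2 V → ℕ} (h : MATLabeling G lab)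
    (S : Set (Sym2 V))
    (hS : ∀ f ∈ G.edgeSet, f ∉ S → ∀ g, lab g < lab f → g ∉ S) :
    MATLabeling (G.deleteEdges S) lab := by
  have hE : (G.deleteEdges S).edgeSet = G.edgeSet \ S := G.edgeSet_deleteEdges S
  refine ⟨?_, ?_, ?_⟩
  · intro e he
    rw [hE] at he
    exact h.1 e he.1
  · intro k e he hlabe
    rw [hE] at he
    have := h.2.1 k e he.1 hlabe
    refine isAcyclic_anti ?_ this
    apply fromEdgeSet_mono
    intro f hf
    rcases hf with ⟨hf1, hf2⟩ | hf1
    · exact Or.inl ⟨(hE ▸ hf1).1, hf2⟩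
    · exact Or.inr hf1
  · intro i j hij
    rw [deleteEdges_adj] at hij
    have hWeq : {w : V | (G.deleteEdges S).Adj w i ∧ (G.deleteEdges S).Adj w j ∧
        lab s(w, i) < lab s(i, j) ∧ lab s(w, j) < lab s(i, j)} =
        {w : V | G.Adj w i ∧ G.Adj w j ∧ lab s(w, i) < lab s(i, j) ∧
        lab s(w, j) < lab s(i, j)} := by
      ext w
      simp only [Set.mem_setOf_eq, deleteEdges_adj]
      constructor
      · rintro ⟨⟨h1, -⟩, ⟨h2, -⟩, h3, h4⟩
        exact ⟨h1, h2, h3, h4⟩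
      · rintro ⟨h1, h2, h3, h4⟩
        exact ⟨⟨h1, hS s(i,j) hij.1 hij.2 _ h3⟩, ⟨h2, hS s(i,j) hij.1 hij.2 _ h4⟩, h3, h4⟩
    rw [hWeq]
    exact h.2.2 i j hij.1

def ChordlessCycle (G : SimpleGraph V) {n : ℕ} (c : ZMod n → V) : Prop :=
  Function.Injective c ∧ (∀ i, G.Adj (c i) (c (i + 1))) ∧
  (∀ i j, j ≠ i → j ≠ i + 1 → i ≠ j + 1 → ¬G.Adj (c i) (c j))

section zmod
variable {m : ℕ} [NeZero m]

lemma zval_add_one (k : ZMod m) (h : k.val + 1 < m) : (k + 1).val = k.val + 1 := by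
  haveI : Fact (1 < m) := ⟨by omega⟩
  rw [ZMod.val_add_of_lt (by rw [ZMod.val_one]; omega), ZMod.val_one]

lemma zadd_one_eq_zero (k : ZMod m) (h : k.val = m - 1) : k + 1 = 0 := by
  have h1 : k = ((m - 1 : ℕ) : ZMod m) := by
    rw [← h, ZMod.natCast_zmod_val]
  rw [h1]
  have : ((m - 1 : ℕ) : ZMod m) + 1 = ((m - 1 + 1 : ℕ) : ZMod m) := by push_cast; ring
  rw [this]
  have hm : m - 1 + 1 = m := by have := NeZero.pos m; omega
  rw [hm, ZMod.natCast_self]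

lemma zval_cases (k : ZMod m) : k.val + 1 < m ∨ k.val = m - 1 := by
  have := ZMod.val_lt k
  omega

lemma zval_eq_iff (k j : ZMod m) : k = j ↔ k.val = j.val :=
  ⟨fun h => h ▸ rfl, fun h => ZMod.val_injective m h⟩

lemma zeq_zero_iff (k : ZMod m) : k = 0 ↔ k.val = 0 := by
  rw [zval_eq_iff, ZMod.val_zero]

lemma zcast_inj {a b : ℕ} (ha : a < m) (hb : b < m) (hab : (a : ZMod m) = (b : ZMod m)) :
    a = b := by
  have := congrArg ZMod.val hab
  rwa [ZMod.val_cast_of_lt ha, ZMod.val_cast_of_lt hb] at this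

end zmod

lemma acyclic_no_cycle {n : ℕ} (hn : 3 ≤ n) {c : ZMod n → V} (hinj : Function.Injective c)
    {Γ : SimpleGraph V} (hac : Γ.IsAcyclic) (hadj : ∀ i, Γ.Adj (c i) (c (i + 1))) : False := by
  haveI : NeZero n := ⟨by omega⟩
  have h01 : Γ.Adj (c 0) (c 1) := by simpa using hadj 0
  have hbridge := (isAcyclic_iff_forall_adj_isBridge.mp hac) h01
  rw [isBridge_iff] at hbridge
  apply hbridge
  have key : ∀ j : ℕ, j ≤ n - 1 →
      (Γ \ fromEdgeSet {s(c 0, c 1)}).Reachable (c 1) (c (1 + (j : ZMod n))) := by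
    intro j
    induction j with
    | zero =>
      intro _
      simp only [Nat.cast_zero, add_zero]
      exact Reachable.refl _
    | succ j ih =>
      intro hj
      have prev := ih (by omega)
      have hcast : ((j + 1 : ℕ) : ZMod n) = (j : ZMod n) + 1 := by push_cast; ring
      rw [hcast, ← add_assoc]
      refine prev.trans (Adj.reachable ?_)
      have hadj' : Γ.Adj (c (1 + (j : ZMod n))) (c (1 + (j : ZMod n) + 1)) := hadj _
      have hne : s(c (1 + (j : ZMod n)), c (1 + (j : ZMod n) + 1)) ≠ s(c 0, c 1) := by
        intro heq
        rw [Sym2.eq_iff] at heq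
        have hv1 : (1 + (j : ZMod n)) = ((1 + j : ℕ) : ZMod n) := by push_cast; ring
        have hv2 : (1 + (j : ZMod n) + 1) = ((1 + j + 1 : ℕ) : ZMod n) := by push_cast; ring
        have hlt1 : 1 + j < n := by omega
        rcases heq with ⟨ha, hb⟩ | ⟨ha, hb⟩
        · have h0 : (1 + (j : ZMod n)) = 0 := hinj ha
          rw [hv1] at h0
          have := congrArg ZMod.val h0
          rw [ZMod.val_cast_of_lt hlt1, ZMod.val_zero] at this
          omega
        · have e1 : (1 + (j : ZMod n)) = 1 := hinj ha
          have e2 : (1 + (j : ZMod n) + 1) = 0 := hinj hb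
          rw [hv1] at e1
          rw [hv2] at e2
          rw [show (1 : ZMod n) = ((1 : ℕ) : ZMod n) by norm_num] at e1
          have v1 := congrArg ZMod.val e1
          rw [ZMod.val_cast_of_lt hlt1, ZMod.val_cast_of_lt (by omega : (1:ℕ) < n)] at v1
          have hj0 : j = 0 := by omega
          subst hj0
          have v2 := congrArg ZMod.val e2
          rw [show ((1 + 0 + 1 : ℕ) : ZMod n) = ((2 : ℕ) : ZMod n) by norm_num] at v2
          rw [ZMod.val_cast_of_lt (by omega : (2:ℕ) < n), ZMod.val_zero] at v2
          omega
      rw [sdiff_adj, fromEdgeSet_adj]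
      exact ⟨hadj', fun hmem => hne (Set.mem_singleton_iff.mp hmem.1)⟩
  have hfin := key (n - 1) le_rfl
  have hz : (1 + ((n - 1 : ℕ) : ZMod n)) = 0 := by
    have h1 : (1 + ((n - 1 : ℕ) : ZMod n)) = ((1 + (n - 1) : ℕ) : ZMod n) := by push_cast; ring
    rw [h1, show 1 + (n - 1) = n by omega, ZMod.natCast_self]
  rw [hz] at hfin
  exact hfin.symm

lemma fan {H : SimpleGraph V}
    (hNCC : ∀ (n : ℕ), 4 ≤ n → ∀ c : ZMod n → V, ¬ ChordlessCycle H c) :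
    ∀ (t : ℕ), 1 ≤ t → ∀ (p : ℕ → V) (z : V),
    (∀ i j, i < j → j ≤ t → p i ≠ p j) →
    (∀ i, i < t → H.Adj (p i) (p (i + 1))) →
    (∀ i j, i + 1 < j → j ≤ t → ¬H.Adj (p i) (p j)) →
    (∀ i, i ≤ t → z ≠ p i) →
    H.Adj z (p 0) → H.Adj z (p t) →
    ∀ i, i ≤ t → H.Adj z (p i) := by
  intro t
  induction t using Nat.strong_induction_on with
  | _ t IH =>
  intro ht p z hinj hadj hind hz hz0 hzt i hi
  rcases Nat.lt_or_ge t 2 with ht2 | ht2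
  · -- t = 1
    have : t = 1 := by omega
    subst this
    interval_cases i
    · exact hz0
    · exact hzt
  · classical
    have hex : ∃ i, 1 ≤ i ∧ i ≤ t ∧ H.Adj z (p i) := ⟨t, by omega, le_rfl, hzt⟩
    set i1 := Nat.find hex with hi1def
    have hspec : 1 ≤ i1 ∧ i1 ≤ t ∧ H.Adj z (p i1) := Nat.find_spec hex
    have hmin : ∀ a, a < i1 → ¬(1 ≤ a ∧ a ≤ t ∧ H.Adj z (p a)) :=
      fun a ha => Nat.find_min hex ha
    by_cases hi1 : i1 = 1
    · -- first interior neighbor is p 1 : recurse on the tail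
      have hres := IH (t - 1) (by omega) (by omega) (fun j => p (j + 1)) z
        (fun i j hij hj => hinj (i + 1) (j + 1) (by omega) (by omega))
        (fun i hit => by
          have := hadj (i + 1) (by omega)
          convert this using 2)
        (fun i j hij hj => hind (i + 1) (j + 1) (by omega) (by omega))
        (fun i hit => hz (i + 1) (by omega))
        (by rw [hi1] at hspec; exact hspec.2.2)
        (by show H.Adj z (p (t - 1 + 1))
            have h' : t - 1 + 1 = t := by omega
            rw [h']; exact hzt)
      rcases Nat.eq_zero_or_pos i with rfl | hipos
      · exact hz0
      · have h2 := hres (i - 1) (by omega)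
        have h' : i - 1 + 1 = i := by omega
        have h2 : H.Adj z (p (i - 1 + 1)) := h2
        rwa [h'] at h2
    · -- first interior neighbor is at distance ≥ 2 : chordless cycle, contradiction
      exfalso
      have hi2 : 2 ≤ i1 := by have := hspec.1; omega
      have hi1t : i1 ≤ t := hspec.2.1
      set m := i1 + 2 with hm
      haveI : NeZero m := ⟨by omega⟩
      have hm4 : 4 ≤ m := by omega
      set cc : ZMod m → V := fun k => if k.val = 0 then z else p (k.val - 1) with hcc
      have hccz : ∀ k : ZMod m, k.val = 0 → cc k = z := by
        intro k hk
        show (if k.val = 0 then z else p (k.val - 1)) = z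
        rw [if_pos hk]
      have hccp : ∀ k : ZMod m, k.val ≠ 0 → cc k = p (k.val - 1) := by
        intro k hk
        show (if k.val = 0 then z else p (k.val - 1)) = p (k.val - 1)
        rw [if_neg hk]
      have hvlt : ∀ k : ZMod m, k.val < m := fun k => ZMod.val_lt k
      -- injectivity
      have cinj : Function.Injective cc := by
        intro k k' hkk'
        by_cases h1 : k.val = 0 <;> by_cases h2 : k'.val = 0
        · rw [zval_eq_iff]; omega
        · rw [hccz k h1, hccp k' h2] at hkk'
          exact absurd hkk' (hz (k'.val - 1) (by have := hvlt k'; omega))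
        · rw [hccp k h1, hccz k' h2] at hkk'
          exact absurd hkk'.symm (hz (k.val - 1) (by have := hvlt k; omega))
        · rw [hccp k h1, hccp k' h2] at hkk'
          rw [zval_eq_iff]
          by_contra hne
          rcases Nat.lt_or_ge (k.val) (k'.val) with hlt | hge
          · exact hinj (k.val - 1) (k'.val - 1) (by omega)
              (by have := hvlt k'; omega) hkk'
          · have hlt : k'.val < k.val := by omega
            exact hinj (k'.val - 1) (k.val - 1) (by omega)
              (by have := hvlt k; omega) hkk'.symm
      -- adjacency
      have cadj : ∀ k, H.Adj (cc k) (cc (k + 1)) := by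
        intro k
        rcases zval_cases k with hlt | hmax
        · have hv1 : (k + 1).val = k.val + 1 := zval_add_one k hlt
          by_cases h0 : k.val = 0
          · rw [hccz k h0, hccp (k + 1) (by omega)]
            have : (k + 1).val - 1 = 0 := by omega
            rw [this]
            exact hz0
          · rw [hccp k h0, hccp (k + 1) (by omega)]
            have h' : (k + 1).val - 1 = (k.val - 1) + 1 := by omega
            rw [h']
            exact hadj (k.val - 1) (by omega)
        · have h1 : k + 1 = 0 := zadd_one_eq_zero k hmax
          rw [h1, hccz 0 ZMod.val_zero, hccp k (by omega)]
          have h' : k.val - 1 = i1 := by omega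
          rw [h']
          exact hspec.2.2.symm
      -- no chords
      have cnadj : ∀ k j, j ≠ k → j ≠ k + 1 → k ≠ j + 1 → ¬H.Adj (cc k) (cc j) := by
        intro k j hjk hjk1 hkj1 hAdj
        have hvk := hvlt k
        have hvj := hvlt j
        by_cases h1 : k.val = 0 <;> by_cases h2 : j.val = 0
        · exact hjk (by rw [zval_eq_iff]; omega)
        · -- k = "z", j on path
          have hk0 : k = 0 := (zeq_zero_iff k).mpr h1
          -- j ≠ k + 1 = 1 : j.val ≠ 1
          have hj1 : j.val ≠ 1 := by
            intro hv
            apply hjk1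
            rw [hk0, zero_add, zval_eq_iff, hv]
            haveI : Fact (1 < m) := ⟨by omega⟩
            rw [ZMod.val_one]
          -- k ≠ j + 1 : j + 1 ≠ 0 : j.val ≠ m - 1
          have hjm : j.val ≠ m - 1 := by
            intro hv
            exact hkj1 (by rw [hk0, zadd_one_eq_zero j hv])
          rw [hccz k h1, hccp j h2] at hAdj
          exact hmin (j.val - 1) (by omega) ⟨by omega, by omega, hAdj⟩
        · -- j = "z", k on path
          have hj0 : j = 0 := (zeq_zero_iff j).mpr h2
          have hk1 : k.val ≠ 1 := by
            intro hv
            apply hkj1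
            rw [hj0, zero_add, zval_eq_iff, hv]
            haveI : Fact (1 < m) := ⟨by omega⟩
            rw [ZMod.val_one]
          have hkm : k.val ≠ m - 1 := by
            intro hv
            exact hjk1 (by rw [hj0, zadd_one_eq_zero k hv])
          rw [hccp k h1, hccz j h2] at hAdj
          exact hmin (k.val - 1) (by omega) ⟨by omega, by omega, hAdj.symm⟩
        · -- both on path
          rw [hccp k h1, hccp j h2] at hAdj
          have hne : k.val ≠ j.val := fun hv => hjk (by rw [zval_eq_iff, hv])
          have hnotsucc1 : j.val ≠ k.val + 1 := by
            intro hv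
            have hlt : k.val + 1 < m := by omega
            exact hjk1 (by rw [zval_eq_iff, zval_add_one k hlt, hv])
          have hnotsucc2 : k.val ≠ j.val + 1 := by
            intro hv
            have hlt : j.val + 1 < m := by omega
            exact hkj1 (by rw [zval_eq_iff, zval_add_one j hlt, hv])
          rcases Nat.lt_or_ge k.val j.val with hlt | hge
          · exact hind (k.val - 1) (j.val - 1) (by omega) (by omega) hAdj
          · exact hind (j.val - 1) (k.val - 1) (by omega) (by omega) hAdj.symm
      exact hNCC m hm4 cc ⟨cinj, cadj, cnadj⟩

lemma four_cycle_chord {Gs : SimpleGraph V}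
    (hNCC : ∀ (m : ℕ), 4 ≤ m → ∀ cc : ZMod m → V, ¬ChordlessCycle Gs cc)
    {x y w1 w2 : V} (hxy : ¬Gs.Adj x y) (hxyne : x ≠ y) (hw : w1 ≠ w2)
    (h1x : Gs.Adj w1 x) (h1y : Gs.Adj w1 y) (h2x : Gs.Adj w2 x) (h2y : Gs.Adj w2 y) :
    Gs.Adj w1 w2 := by
  by_contra hcon
  set cc : ZMod 4 → V := fun k => if k.val = 0 then x else if k.val = 1 then w1
    else if k.val = 2 then y else w2 with hccdef
  have e0 : cc 0 = x := rfl
  have e1 : cc 1 = w1 := rfl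
  have e2 : cc 2 = y := rfl
  have e3 : cc 3 = w2 := rfl
  have hv : ∀ k : ZMod 4, k = 0 ∨ k = 1 ∨ k = 2 ∨ k = 3 := by decide
  have d01 : x ≠ w1 := h1x.ne'
  have d02 : x ≠ y := hxyne
  have d03 : x ≠ w2 := h2x.ne'
  have d12 : w1 ≠ y := h1y.ne
  have d13 : w1 ≠ w2 := hw
  have d23 : y ≠ w2 := h2y.ne'
  apply hNCC 4 le_rfl cc
  refine ⟨?_, ?_, ?_⟩
  · intro a b hab
    rcases hv a with rfl|rfl|rfl|rfl <;> rcases hv b with rfl|rfl|rfl|rfl <;>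
      first
        | rfl
        | exact absurd hab d01 | exact absurd hab d02 | exact absurd hab d03
        | exact absurd hab d12 | exact absurd hab d13 | exact absurd hab d23
        | exact absurd hab d01.symm | exact absurd hab d02.symm
        | exact absurd hab d03.symm | exact absurd hab d12.symm
        | exact absurd hab d13.symm | exact absurd hab d23.symm
  · intro k
    rcases hv k with rfl|rfl|rfl|rfl
    · exact h1x.symm
    · exact h1y
    · exact h2y.symm
    · show Gs.Adj (cc 3) (cc (3 + 1))
      have h4 : (3 + 1 : ZMod 4) = 0 := by decide
      rw [h4, e3, e0]
      exact h2x
  · intro k j hjk hjk1 hkj1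
    rcases hv k with rfl|rfl|rfl|rfl <;> rcases hv j with rfl|rfl|rfl|rfl <;>
      first
        | exact absurd rfl hjk
        | exact absurd (by decide) hjk1
        | exact absurd (by decide) hkj1
        | exact hxy
        | exact fun hA => hxy hA.symm
        | exact hcon
        | exact fun hA => hcon hA.symm

/-- rotation of a chordless cycle -/
lemma ChordlessCycle.rotate {G : SimpleGraph V} {n : ℕ} {c : ZMod n → V}
    (h : ChordlessCycle G c) (i₀ : ZMod n) :
    ChordlessCycle G (fun j => c (j + i₀)) := by
  obtain ⟨hinj, hadj, hnadj⟩ := h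
  refine ⟨?_, ?_, ?_⟩
  · intro a b hab
    have := hinj hab
    exact add_right_cancel this
  · intro i
    show G.Adj (c (i + i₀)) (c (i + 1 + i₀))
    have e : i + 1 + i₀ = i + i₀ + 1 := by ring
    rw [e]
    exact hadj (i + i₀)
  · intro i j h1 h2 h3
    have := hnadj (i + i₀) (j + i₀) ?_ ?_ ?_
    · exact this
    · intro hc; exact h1 (add_right_cancel hc)
    · intro hc; apply h2; rw [add_right_comm] at hc; exact add_right_cancel hc
    · intro hc; apply h3; rw [add_right_comm] at hc; exact add_right_cancel hc

theorem MAT_no_chordless_cycle [Fintype V] {G : SimpleGraph V} {lab : Sym2 V → ℕ}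
    (h : MATLabeling G lab) {n : ℕ} (hn : 4 ≤ n) (c : ZMod n → V) :
    ¬ChordlessCycle G c := by
  suffices Hmain : ∀ (N : ℕ) (G : SimpleGraph V) (lab : Sym2 V → ℕ),
      G.edgeSet.ncard ≤ N → MATLabeling G lab →
      ∀ (n : ℕ), 4 ≤ n → ∀ c : ZMod n → V, ¬ChordlessCycle G c by
    exact Hmain G.edgeSet.ncard G lab le_rfl h n hn c
  intro N
  induction N with
  | zero =>
    intro G lab hcard h n hn c hCC
    have hedge : s(c 0, c 1) ∈ G.edgeSet := by
      have h0 := hCC.2.1 0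
      rw [zero_add] at h0
      exact (G.mem_edgeSet).mpr h0
    have hpos := (Set.ncard_pos (Set.toFinite _)).mpr ⟨_, hedge⟩
    omega
  | succ N IH =>
    intro G lab hcard h n hn c hCC
    haveI : NeZero n := ⟨by omega⟩
    haveI : Fact (1 < n) := ⟨by omega⟩
    classical
    obtain ⟨cinj, cadj, cnadj⟩ := hCC
    have hEfin : G.edgeSet.Finite := Set.toFinite _
    -- the inductive hypothesis, for deletions of edges
    have hIH : ∀ (S : Set (Sym2 V)), (∃ e ∈ G.edgeSet, e ∈ S) →
        (∀ f ∈ G.edgeSet, f ∉ S → ∀ g, lab g < lab f → g ∉ S) →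
        ∀ (m : ℕ), 4 ≤ m → ∀ cc : ZMod m → V, ¬ChordlessCycle (G.deleteEdges S) cc := by
      intro S hW hSp m hm cc
      apply IH (G.deleteEdges S) lab ?_ (MAT_deleteEdges h S hSp) m hm cc
      have hss : (G.deleteEdges S).edgeSet ⊂ G.edgeSet := by
        rw [edgeSet_deleteEdges]
        obtain ⟨e, heE, heS⟩ := hW
        refine ⟨Set.diff_subset, fun hsub => ?_⟩
        exact (hsub heE).2 heS
      have := Set.ncard_lt_ncard hss hEfin
      omega
    -- the maximal label
    have hE0 : s(c 0, c 1) ∈ G.edgeSet := by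
      have h0 := cadj 0
      rw [zero_add] at h0
      exact (G.mem_edgeSet).mpr h0
    have hFne : ((hEfin.toFinset).image lab).Nonempty :=
      ⟨lab s(c 0, c 1), Finset.mem_image_of_mem lab (hEfin.mem_toFinset.mpr hE0)⟩
    set L := ((hEfin.toFinset).image lab).max' hFne with hLdef
    have hLmax : ∀ e ∈ G.edgeSet, lab e ≤ L := fun e he =>
      Finset.le_max' _ _ (Finset.mem_image_of_mem lab (hEfin.mem_toFinset.mpr he))
    obtain ⟨el, helmem, heleq⟩ := Finset.mem_image.mp (((hEfin.toFinset).image lab).max'_mem hFne)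
    have helE : el ∈ G.edgeSet := hEfin.mem_toFinset.mp helmem
    -- every edge with the maximal label lies on the cycle
    have hTopOnC : ∀ e ∈ G.edgeSet, lab e = L → ∃ i, e = s(c i, c (i + 1)) := by
      intro e heE hlabe
      by_contra hnot
      push_neg at hnot
      refine hIH {e} ⟨e, heE, rfl⟩ ?_ n hn c ⟨cinj, ?_, ?_⟩
      · intro f hf hfS g hg
        simp only [Set.mem_singleton_iff]
        rintro rfl
        have := hLmax f hf
        omega
      · intro i
        rw [deleteEdges_adj]
        refine ⟨cadj i, ?_⟩
        simp only [Set.mem_singleton_iff]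
        intro hfe
        exact hnot i hfe.symm
      · intro i j h1 h2 h3 hadj'
        exact cnadj i j h1 h2 h3 ((deleteEdges_adj).mp hadj').1
    -- rotate the cycle so that a maximal edge is s(d 0, d 1)
    obtain ⟨i₀, hi₀⟩ := hTopOnC el helE heleq
    set d : ZMod n → V := fun j => c (j + i₀) with hddef
    have hCCd : ChordlessCycle G d := ChordlessCycle.rotate ⟨cinj, cadj, cnadj⟩ i₀
    obtain ⟨dinj, dadj, dnadj⟩ := hCCd
    set x := d 0 with hxdef
    set y := d 1 with hydef
    have hd0 : d 0 = c i₀ := by show c (0 + i₀) = c i₀; rw [zero_add]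
    have hd1 : d 1 = c (i₀ + 1) := by show c (1 + i₀) = c (i₀ + 1); rw [add_comm]
    have hf : s(x, y) = el := by rw [hi₀, hxdef, hydef, hd0, hd1]
    have hxy : G.Adj x y := by
      have h0 := dadj 0
      rwa [zero_add] at h0
    have hfE : s(x, y) ∈ G.edgeSet := (G.mem_edgeSet).mpr hxy
    have hfL : lab s(x, y) = L := by rw [hf]; exact heleq
    have hTopOnD : ∀ e ∈ G.edgeSet, lab e = L → ∃ i, e = s(d i, d (i + 1)) := by
      intro e he hl
      obtain ⟨j, hj⟩ := hTopOnC e he hl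
      refine ⟨j - i₀, ?_⟩
      have e1 : d (j - i₀) = c j := by
        show c (j - i₀ + i₀) = c j
        congr 1
        ring
      have e2 : d (j - i₀ + 1) = c (j + 1) := by
        show c (j - i₀ + 1 + i₀) = c (j + 1)
        congr 1
        ring
      rw [hj, ← e1, ← e2]
    have hrimE : ∀ i : ZMod n, s(d i, d (i + 1)) ∈ G.edgeSet :=
      fun i => (G.mem_edgeSet).mpr (dadj i)
    have hL1 : 1 ≤ L := by
      have := h.1 _ hfE
      omega
    -- L is at least 2
    have hL2 : 2 ≤ L := by
      by_contra hlt
      have hacyc := h.2.1 1 s(x, y) hfE (by omega)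
      apply acyclic_no_cycle (by omega : 3 ≤ n) dinj hacyc
      intro i
      rw [fromEdgeSet_adj]
      refine ⟨Or.inl ⟨hrimE i, ?_⟩, (dadj i).ne⟩
      have h1 := hLmax _ (hrimE i)
      have h2 := h.1 _ (hrimE i)
      omega
    -- the hubs
    have hWcard : (Wset G lab x y).ncard = L - 1 := by
      rw [ncard_Wset h hxy, hfL]
    have hWfin : (Wset G lab x y).Finite := Set.toFinite _
    have hone_ne : (1 : ZMod n) ≠ 0 := by
      intro hc
      have := congrArg ZMod.val hc
      rw [ZMod.val_one, ZMod.val_zero] at this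
      omega
    -- hubs are not on the cycle
    have hHubNotC : ∀ w ∈ Wset G lab x y, ∀ j : ZMod n, w ≠ d j := by
      rintro w ⟨hwx, hwy, -, -⟩ j rfl
      have hj0 : j ≠ 0 := by
        rintro rfl
        exact G.irrefl hwx
      have hj1 : j ≠ 1 := by
        rintro rfl
        exact G.irrefl hwy
      by_cases hj0' : (0 : ZMod n) = j + 1
      · -- use nonadjacency to d 1
        have hj2 : j ≠ 1 + 1 := by
          intro hc
          rw [hc] at hj0'
          have : (3 : ZMod n) = 0 := by
            rw [hj0']
            ring
          have := congrArg ZMod.val this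
          rw [show (3 : ZMod n) = ((3 : ℕ) : ZMod n) by norm_num,
            ZMod.val_cast_of_lt (by omega : (3:ℕ) < n), ZMod.val_zero] at this
          omega
        have h11 : (1 : ZMod n) ≠ j + 1 := by
          intro hc
          rw [← hc] at hj0'
          exact hone_ne hj0'.symm
        exact dnadj 1 j hj1 hj2 h11 hwy.symm
      · have hj1' : j ≠ 0 + 1 := by rwa [zero_add]
        exact dnadj 0 j hj0 hj1' hj0' hwx.symm
    -- delete the top edge : no chordless cycles there
    have hHNCC := hIH {s(x, y)} ⟨s(x, y), hfE, rfl⟩ (by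
      intro f hf hfS g hg
      simp only [Set.mem_singleton_iff]
      rintro rfl
      have := hLmax f hf
      rw [hfL] at *
      omega)
    -- every hub is adjacent to every vertex of the cycle (fan argument)
    have hHubAdj : ∀ w ∈ Wset G lab x y, ∀ i : ZMod n, G.Adj w (d i) := by
      intro w hw i
      obtain ⟨hwx, hwy, hlx, hly⟩ := hw
      set H := G.deleteEdges {s(x, y)} with hHdef
      set p : ℕ → V := fun j => d (1 + (j : ZMod n)) with hpdef
      set t := n - 1 with htdef
      have hp0 : p 0 = y := by
        show d (1 + ((0 : ℕ) : ZMod n)) = y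
        norm_num
        rfl
      have hpt : p t = x := by
        show d (1 + ((n - 1 : ℕ) : ZMod n)) = x
        have hz : (1 + ((n - 1 : ℕ) : ZMod n)) = 0 := by
          have e : (1 + ((n - 1 : ℕ) : ZMod n)) = (((1 + (n - 1)) : ℕ) : ZMod n) := by
            push_cast
            ring
          rw [e, show 1 + (n - 1) = n by omega, ZMod.natCast_self]
        rw [hz]
      have hinj' : ∀ a b : ℕ, a < b → b ≤ t → p a ≠ p b := by
        intro a b hab hbt hpe
        have h1 := dinj hpe
        have h2 := add_left_cancel h1
        exact absurd (zcast_inj (by omega) (by omega) h2) (by omega)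
      have hadj' : ∀ a, a < t → H.Adj (p a) (p (a + 1)) := by
        intro a hat
        have hGadj : G.Adj (p a) (p (a + 1)) := by
          show G.Adj (d (1 + (a : ZMod n))) (d (1 + ((a + 1 : ℕ) : ZMod n)))
          have e : (1 + ((a + 1 : ℕ) : ZMod n)) = (1 + (a : ZMod n)) + 1 := by
            push_cast
            ring
          rw [e]
          exact dadj _
        rw [hHdef, deleteEdges_adj]
        refine ⟨hGadj, ?_⟩
        simp only [Set.mem_singleton_iff]
        intro heq
        rw [hxdef, hydef] at heq
        rw [Sym2.eq_iff] at heq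
        have hcast1 : (1 + (a : ZMod n)) = ((1 + a : ℕ) : ZMod n) := by push_cast; ring
        rcases heq with ⟨ha, -⟩ | ⟨ha, hb⟩
        · have h1 := dinj ha
          rw [hcast1] at h1
          have := zcast_inj (by omega : 1 + a < n) (by omega : (0:ℕ) < n)
            (by rw [h1]; norm_num)
          omega
        · have h1 := dinj ha
          rw [hcast1, show (1 : ZMod n) = ((1:ℕ) : ZMod n) by norm_num] at h1
          have h2 := zcast_inj (by omega : 1 + a < n) (by omega : (1:ℕ) < n) h1
          have ha0 : a = 0 := by omega
          subst ha0
          have h3 := dinj hb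
          have hcast2 : (1 + ((0 + 1 : ℕ) : ZMod n)) = ((2 : ℕ) : ZMod n) := by
            push_cast
            ring
          rw [hcast2] at h3
          have := zcast_inj (by omega : (2:ℕ) < n) (by omega : (0:ℕ) < n)
            (by rw [h3]; norm_num)
          omega
      have hind' : ∀ a b, a + 1 < b → b ≤ t → ¬H.Adj (p a) (p b) := by
        intro a b hab hbt hAdj
        by_cases hcase : a = 0 ∧ b = t
        · obtain ⟨rfl, rfl⟩ := hcase
          rw [hp0, hpt, hHdef, deleteEdges_adj] at hAdj
          apply hAdj.2
          rw [Sym2.eq_swap]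
          rfl
        · have hGAdj : G.Adj (d (1 + (a : ZMod n))) (d (1 + (b : ZMod n))) := by
            have := hAdj
            rw [hHdef, deleteEdges_adj] at this
            exact this.1
          refine dnadj (1 + (a : ZMod n)) (1 + (b : ZMod n)) ?_ ?_ ?_ hGAdj
          · intro hc
            have h1 := add_left_cancel hc
            exact absurd (zcast_inj (by omega) (by omega) h1) (by omega)
          · intro hc
            rw [add_assoc] at hc
            have h1 := add_left_cancel hc
            have h2 : ((b : ℕ) : ZMod n) = ((a + 1 : ℕ) : ZMod n) := by
              push_cast
              rw [h1]
            have := zcast_inj (by omega) (by omega) h2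
            omega
          · intro hc
            rw [add_assoc] at hc
            have h1 := add_left_cancel hc
            rcases Nat.lt_or_ge (b + 1) n with hb1 | hb1
            · have h2 : ((a : ℕ) : ZMod n) = ((b + 1 : ℕ) : ZMod n) := by
                push_cast
                rw [h1]
              have := zcast_inj (by omega) hb1 h2
              omega
            · have hbt' : b = t := by omega
              have hzz : ((b : ZMod n)) + 1 = 0 := by
                have e : ((b : ZMod n)) + 1 = (((b + 1) : ℕ) : ZMod n) := by push_cast; ring
                rw [e, show b + 1 = n by omega, ZMod.natCast_self]
              rw [hzz] at h1
              have : a = 0 := by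
                have := zcast_inj (by omega : a < n) (by omega : (0:ℕ) < n)
                  (by rw [h1]; norm_num)
                omega
              exact hcase ⟨this, hbt'⟩
      have hzp : ∀ a, a ≤ t → w ≠ p a := fun a hat =>
        hHubNotC w ⟨hwx, hwy, hlx, hly⟩ (1 + (a : ZMod n))
      have hz0 : H.Adj w (p 0) := by
        rw [hp0, hHdef, deleteEdges_adj]
        refine ⟨hwy, ?_⟩
        simp only [Set.mem_singleton_iff]
        intro hc
        rw [hc] at hly
        exact lt_irrefl _ hly
      have hzt : H.Adj w (p t) := by
        rw [hpt, hHdef, deleteEdges_adj]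
        refine ⟨hwx, ?_⟩
        simp only [Set.mem_singleton_iff]
        intro hc
        rw [hc] at hlx
        exact lt_irrefl _ hlx
      have hfanres := fan hHNCC t (by omega) p w hinj' hadj' hind' hzp hz0 hzt
      have hip : d i = p ((i - 1).val) := by
        show d i = d (1 + (((i - 1).val : ℕ) : ZMod n))
        rw [ZMod.natCast_zmod_val]
        congr 1
        ring
      rw [hip]
      have hres := hfanres ((i - 1).val) (by have := ZMod.val_lt (i - 1); omega)
      rw [hHdef, deleteEdges_adj] at hres
      exact hres.1
    -- spokes have small labels
    have hSpoke : ∀ w ∈ Wset G lab x y, ∀ i : ZMod n, lab s(w, d i) < L := by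
      intro w hw i
      have hadjwd := hHubAdj w hw i
      have hmem : s(w, d i) ∈ G.edgeSet := (G.mem_edgeSet).mpr hadjwd
      rcases Nat.lt_or_ge (lab s(w, d i)) L with hlt | hge
      · exact hlt
      · exfalso
        have heq : lab s(w, d i) = L := le_antisymm (hLmax _ hmem) hge
        obtain ⟨a, ha⟩ := hTopOnD _ hmem heq
        rw [Sym2.eq_iff] at ha
        rcases ha with ⟨h1, -⟩ | ⟨h1, -⟩
        · exact hHubNotC w hw a h1
        · exact hHubNotC w hw (a + 1) h1
    -- hubs are pairwise adjacent with small labels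
    have hGsNCC := hIH {e | L ≤ lab e} ⟨s(x, y), hfE, by
        simp only [Set.mem_setOf_eq]
        omega⟩ (by
      intro f hf hfS g hg
      simp only [Set.mem_setOf_eq] at *
      omega)
    have hGsadj_iff : ∀ u v : V, (G.deleteEdges {e | L ≤ lab e}).Adj u v ↔
        (G.Adj u v ∧ lab s(u, v) < L) := by
      intro u v
      rw [deleteEdges_adj]
      simp only [Set.mem_setOf_eq]
      constructor
      · rintro ⟨h1, h2⟩
        exact ⟨h1, by omega⟩
      · rintro ⟨h1, h2⟩
        exact ⟨h1, by omega⟩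
    have hHubHub : ∀ w1 ∈ Wset G lab x y, ∀ w2 ∈ Wset G lab x y, w1 ≠ w2 →
        G.Adj w1 w2 ∧ lab s(w1, w2) < L := by
      intro w1 hw1 w2 hw2 hne
      have h1x : (G.deleteEdges {e | L ≤ lab e}).Adj w1 x :=
        (hGsadj_iff _ _).mpr ⟨hw1.1, by rw [← hfL]; exact hw1.2.2.1⟩
      have h1y : (G.deleteEdges {e | L ≤ lab e}).Adj w1 y :=
        (hGsadj_iff _ _).mpr ⟨hw1.2.1, by rw [← hfL]; exact hw1.2.2.2⟩
      have h2x : (G.deleteEdges {e | L ≤ lab e}).Adj w2 x :=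
        (hGsadj_iff _ _).mpr ⟨hw2.1, by rw [← hfL]; exact hw2.2.2.1⟩
      have h2y : (G.deleteEdges {e | L ≤ lab e}).Adj w2 y :=
        (hGsadj_iff _ _).mpr ⟨hw2.2.1, by rw [← hfL]; exact hw2.2.2.2⟩
      have hxyGs : ¬(G.deleteEdges {e | L ≤ lab e}).Adj x y := by
        intro hc
        have := ((hGsadj_iff _ _).mp hc).2
        rw [hfL] at this
        omega
      have hchord := four_cycle_chord hGsNCC hxyGs hxy.ne hne h1x h1y h2x h2y
      exact (hGsadj_iff _ _).mp hchord
    -- there is a rim edge with small label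
    have hsmall : ∃ i : ZMod n, lab s(d i, d (i + 1)) < L := by
      by_contra hno
      push_neg at hno
      have hacyc := h.2.1 L s(x, y) hfE (le_of_eq hfL)
      apply acyclic_no_cycle (by omega : 3 ≤ n) dinj hacyc
      intro i
      rw [fromEdgeSet_adj]
      exact ⟨Or.inl ⟨hrimE i, le_antisymm (hLmax _ (hrimE i)) (hno i)⟩, (dadj i).ne⟩
    obtain ⟨irim, hrimlt⟩ := hsmall
    set z := d irim with hzdef
    set z' := d (irim + 1) with hz'def
    have hzz' : G.Adj z z' := dadj irim
    -- the clique K = hubs ∪ {z}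
    set hubsF : Finset V := hWfin.toFinset with hhubsFdef
    have hhubsF_mem : ∀ w, w ∈ hubsF ↔ w ∈ Wset G lab x y := fun w => hWfin.mem_toFinset
    have hhubsF_card : hubsF.card = L - 1 := by
      rw [hhubsFdef, ← Set.ncard_eq_toFinset_card _ hWfin, hWcard]
    have hzNotHub : z ∉ hubsF := fun hc => hHubNotC z ((hhubsF_mem z).mp hc) irim rfl
    have hz'NotHub : z' ∉ hubsF := fun hc => hHubNotC z' ((hhubsF_mem z').mp hc) (irim + 1) rfl
    have hzz'ne : z ≠ z' := (dadj irim).ne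
    set K : Finset V := insert z hubsF with hKdef
    have hKcard : K.card = L := by
      rw [hKdef, Finset.card_insert_of_notMem hzNotHub, hhubsF_card]
      omega
    have hKadj : ∀ u ∈ K, ∀ v ∈ K, u ≠ v → G.Adj u v ∧ lab s(u, v) < L := by
      intro u hu v hv huv
      rw [hKdef, Finset.mem_insert] at hu hv
      rcases hu with rfl | hu <;> rcases hv with rfl | hv
      · exact absurd rfl huv
      · have hvW := (hhubsF_mem v).mp hv
        exact ⟨(hHubAdj v hvW irim).symm, by rw [labcomm lab z v]; exact hSpoke v hvW irim⟩
      · have huW := (hhubsF_mem u).mp hu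
        exact ⟨hHubAdj u huW irim, hSpoke u huW irim⟩
      · exact hHubHub u ((hhubsF_mem u).mp hu) v ((hhubsF_mem v).mp hv) huv
    -- pick the pair with maximal label in K
    have hHubNe : hubsF.Nonempty := by
      rw [← Finset.card_pos, hhubsF_card]
      omega
    obtain ⟨w₀, hw₀⟩ := hHubNe
    have hPne : ((K ×ˢ K).filter (fun pq : V × V => pq.1 ≠ pq.2)).Nonempty := by
      refine ⟨(z, w₀), ?_⟩
      rw [Finset.mem_filter, Finset.mem_product]
      refine ⟨⟨Finset.mem_insert_self _ _, Finset.mem_insert_of_mem hw₀⟩, ?_⟩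
      intro hc
      have hc' : z = w₀ := hc
      rw [hc'] at hzNotHub
      exact hzNotHub hw₀
    obtain ⟨⟨p, q⟩, hpqmem, hpqmax⟩ :=
      Finset.exists_max_image _ (fun pq : V × V => lab s(pq.1, pq.2)) hPne
    rw [Finset.mem_filter, Finset.mem_product] at hpqmem
    obtain ⟨⟨hpK, hqK⟩, hpqne⟩ := hpqmem
    have hpqmax' : ∀ u ∈ K, ∀ v ∈ K, u ≠ v → lab s(u, v) ≤ lab s(p, q) := by
      intro u hu v hv huv
      exact hpqmax (u, v) (by
        rw [Finset.mem_filter, Finset.mem_product]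
        exact ⟨⟨hu, hv⟩, huv⟩)
    have hApq := hKadj p hpK q hqK hpqne
    have hσlt : lab s(p, q) < L := hApq.2
    have hσ1 : 1 ≤ lab s(p, q) := h.1 _ ((G.mem_edgeSet).mpr hApq.1)
    -- K \ {p, q} ⊆ W(p,q)
    have hsub : (↑K : Set V) \ {p, q} ⊆ Wset G lab p q := by
      rintro v ⟨hvK, hvpq⟩
      simp only [Set.mem_insert_iff, Set.mem_singleton_iff] at hvpq
      push_neg at hvpq
      obtain ⟨hvp, hvq⟩ := hvpq
      have hvK' : v ∈ K := hvK
      have hAvp := hKadj v hvK' p hpK hvp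
      have hAvq := hKadj v hvK' q hqK hvq
      refine ⟨hAvp.1, hAvq.1, ?_, ?_⟩
      · rcases Nat.lt_or_ge (lab s(v, p)) (lab s(p, q)) with hlt | hge
        · exact hlt
        · exfalso
          have heq : lab s(v, p) = lab s(p, q) :=
            le_antisymm (hpqmax' v hvK' p hpK hvp) hge
          exact tri_unique_max h hAvp.1.symm hApq.1 hAvq.1
            (by rw [labcomm lab p v]; exact heq)
            (by rw [labcomm lab p v, heq]; exact hpqmax' v hvK' q hqK hvq)
      · rcases Nat.lt_or_ge (lab s(v, q)) (lab s(p, q)) with hlt | hge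
        · exact hlt
        · exfalso
          have heq : lab s(v, q) = lab s(p, q) :=
            le_antisymm (hpqmax' v hvK' q hqK hvq) hge
          exact tri_unique_max h hAvq.1.symm hApq.1.symm hAvp.1
            (by rw [labcomm lab q v, labcomm lab q p]; exact heq)
            (by rw [labcomm lab q v, heq]; exact hpqmax' v hvK' p hpK hvp)
    have hWpq := ncard_Wset h hApq.1
    have hKm2 : ((↑K : Set V) \ {p, q}).ncard = L - 2 := by
      have hqKe : q ∈ K.erase p := Finset.mem_erase.mpr ⟨Ne.symm hpqne, hqK⟩
      have hset : (↑K : Set V) \ {p, q} = ↑((K.erase p).erase q) := by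
        ext v
        simp only [Set.mem_diff, Set.mem_insert_iff, Set.mem_singleton_iff,
          Finset.coe_erase, Set.mem_diff, Finset.mem_coe, Set.mem_singleton_iff]
        constructor
        · rintro ⟨h1, h2⟩
          push_neg at h2
          exact ⟨⟨h1, h2.1⟩, h2.2⟩
        · rintro ⟨⟨h1, h2⟩, h3⟩
          exact ⟨h1, by push_neg; exact ⟨h2, h3⟩⟩
      rw [hset, Set.ncard_coe_finset, Finset.card_erase_of_mem hqKe,
        Finset.card_erase_of_mem hpK, hKcard]
      omega
    have hσeq : lab s(p, q) = L - 1 := by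
      have hle := Set.ncard_le_ncard hsub (Set.toFinite _)
      rw [hWpq, hKm2] at hle
      omega
    have hWeq : Wset G lab p q = (↑K : Set V) \ {p, q} := by
      refine (Set.eq_of_subset_of_ncard_le hsub ?_ (Set.toFinite _)).symm
      rw [hWpq, hKm2, hσeq]
      omega
    -- z' is not in K
    have hz'K : z' ∉ (↑K : Set V) := by
      intro hc
      rw [hKdef] at hc
      simp only [Finset.coe_insert, Set.mem_insert_iff, Finset.mem_coe] at hc
      rcases hc with hc | hc
      · exact hzz'ne hc.symm
      · exact hz'NotHub hc
    -- z must be an endpoint of the maximal pair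
    have hzpq : z = p ∨ z = q := by
      by_contra hno
      push_neg at hno
      have hpHub : p ∈ hubsF := by
        have := hpK
        rw [hKdef, Finset.mem_insert] at this
        rcases this with h1 | h1
        · exact absurd h1.symm hno.1
        · exact h1
      have hqHub : q ∈ hubsF := by
        have := hqK
        rw [hKdef, Finset.mem_insert] at this
        rcases this with h1 | h1
        · exact absurd h1.symm hno.2
        · exact h1
      have hz'W : z' ∉ Wset G lab p q := by
        rw [hWeq]
        exact fun hc => hz'K hc.1
      have hadjp : G.Adj p z' := hHubAdj p ((hhubsF_mem p).mp hpHub) (irim + 1)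
      have hadjq : G.Adj q z' := hHubAdj q ((hhubsF_mem q).mp hqHub) (irim + 1)
      have hlp : lab s(p, z') < L := hSpoke p ((hhubsF_mem p).mp hpHub) (irim + 1)
      have hlq : lab s(q, z') < L := hSpoke q ((hhubsF_mem q).mp hqHub) (irim + 1)
      have hnm : ¬(lab s(z', p) < lab s(p, q) ∧ lab s(z', q) < lab s(p, q)) := by
        intro hc
        exact hz'W ⟨hadjp.symm, hadjq.symm, hc.1, hc.2⟩
      rw [not_and_or] at hnm
      rcases hnm with hge | hge
      · push_neg at hge
        have heq : lab s(z', p) = lab s(p, q) := by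
          rw [labcomm lab p z'] at hlp
          omega
        exact tri_unique_max h hadjp hApq.1 hadjq.symm
          (by rw [labcomm lab p z']; exact heq)
          (by rw [labcomm lab p z', heq, hσeq, labcomm lab z' q]; omega)
      · push_neg at hge
        have heq : lab s(z', q) = lab s(p, q) := by
          rw [labcomm lab q z'] at hlq
          omega
        exact tri_unique_max h hadjq hApq.1.symm hadjp.symm
          (by rw [labcomm lab q z', heq, labcomm lab q p])
          (by rw [labcomm lab q z', heq, hσeq, labcomm lab z' p]; omega)
    -- extract the special hub w_z
    have hfinal : ∀ w_z, w_z ∈ hubsF → lab s(w_z, z) = L - 1 →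
        Wset G lab w_z z = (↑K : Set V) \ {w_z, z} → False := by
      intro w_z hwzHub hlabwz hWzeq
      have hwzW := (hhubsF_mem w_z).mp hwzHub
      have hz'Wz : z' ∉ Wset G lab w_z z := by
        rw [hWzeq]
        rintro ⟨hc, -⟩
        exact hz'K hc
      have hadjwz' : G.Adj w_z z' := hHubAdj w_z hwzW (irim + 1)
      have hadjwzz : G.Adj w_z z := hHubAdj w_z hwzW irim
      have hlwz' : lab s(w_z, z') < L := hSpoke w_z hwzW (irim + 1)
      have hnm : ¬(lab s(z', w_z) < lab s(w_z, z) ∧ lab s(z', z) < lab s(w_z, z)) := by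
        intro hc
        exact hz'Wz ⟨hadjwz'.symm, hzz'.symm, hc.1, hc.2⟩
      rw [not_and_or] at hnm
      rcases hnm with hge | hge
      · push_neg at hge
        have heq : lab s(z', w_z) = L - 1 := by
          rw [labcomm lab w_z z'] at hlwz'
          rw [hlabwz] at hge
          omega
        exact tri_unique_max h hadjwzz hadjwz' hzz'
          (by rw [hlabwz, labcomm lab w_z z', heq])
          (by rw [hlabwz]; omega)
      · push_neg at hge
        rw [hlabwz] at hge
        have h5 : lab s(z', z) < L := by
          rw [← labcomm lab z z']
          exact hrimlt
        have heq : lab s(z', z) = L - 1 := by omega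
        exact tri_unique_max h hadjwzz.symm hzz' hadjwz'
          (by rw [labcomm lab z w_z, hlabwz, labcomm lab z z', heq])
          (by rw [labcomm lab z w_z, hlabwz]; omega)
    rcases hzpq with rfl | rfl
    · -- z = p : the other endpoint is q
      have hqHub : q ∈ hubsF := by
        have := hqK
        rw [hKdef, Finset.mem_insert] at this
        rcases this with h1 | h1
        · exact absurd h1 (Ne.symm hpqne)
        · exact h1
      refine hfinal q hqHub ?_ ?_
      · rw [labcomm lab q z]
        exact hσeq
      · rw [Wset_comm, hWeq, Set.pair_comm]
    · -- z = q : the other endpoint is p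
      have hpHub : p ∈ hubsF := by
        have := hpK
        rw [hKdef, Finset.mem_insert] at this
        rcases this with h1 | h1
        · exact absurd h1 hpqne
        · exact h1
      refine hfinal p hpHub ?_ ?_
      · exact hσeq
      · rw [hWeq, Set.pair_comm]



/-- The clique lemma: the common lower neighbors of an edge, together with its endpoints,
form a clique. -/
lemma Wset_pairwise_adj [Fintype V] {G : SimpleGraph V} {lab : Sym2 V → ℕ}
    (h : MATLabeling G lab) {x y : V} (hxy : G.Adj x y) :
    ∀ w1 ∈ Wset G lab x y, ∀ w2 ∈ Wset G lab x y, w1 ≠ w2 → G.Adj w1 w2 := by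
  intro w1 hw1 w2 hw2 hne
  set k := lab s(x, y) with hkdef
  set Gs := G.deleteEdges {e | k ≤ lab e} with hGsdef
  have hMATs : MATLabeling Gs lab := by
    apply MAT_deleteEdges h
    intro f hf hfS g hg
    simp only [Set.mem_setOf_eq] at *
    omega
  have hNCCs : ∀ (m : ℕ), 4 ≤ m → ∀ cc : ZMod m → V, ¬ChordlessCycle Gs cc :=
    fun m hm cc => MAT_no_chordless_cycle hMATs hm cc
  have hGsadj_iff : ∀ u v : V, Gs.Adj u v ↔ (G.Adj u v ∧ lab s(u, v) < k) := by
    intro u v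
    rw [hGsdef, deleteEdges_adj]
    simp only [Set.mem_setOf_eq]
    constructor
    · rintro ⟨h1, h2⟩
      exact ⟨h1, by omega⟩
    · rintro ⟨h1, h2⟩
      exact ⟨h1, by omega⟩
  have h1x : Gs.Adj w1 x := (hGsadj_iff _ _).mpr ⟨hw1.1, hw1.2.2.1⟩
  have h1y : Gs.Adj w1 y := (hGsadj_iff _ _).mpr ⟨hw1.2.1, hw1.2.2.2⟩
  have h2x : Gs.Adj w2 x := (hGsadj_iff _ _).mpr ⟨hw2.1, hw2.2.2.1⟩
  have h2y : Gs.Adj w2 y := (hGsadj_iff _ _).mpr ⟨hw2.2.1, hw2.2.2.2⟩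
  have hxyGs : ¬Gs.Adj x y := by
    intro hc
    have := ((hGsadj_iff _ _).mp hc).2
    omega
  have hchord := four_cycle_chord hNCCs hxyGs hxy.ne hne h1x h1y h2x h2y
  exact ((hGsadj_iff _ _).mp hchord).1

/-- Each edge gives a clique of size `lab e + 1`. -/
lemma edge_gives_clique [Fintype V] {G : SimpleGraph V} {lab : Sym2 V → ℕ}
    (h : MATLabeling G lab) {x y : V} (hxy : G.Adj x y) :
    ∃ s : Finset V, G.IsNClique (lab s(x, y) + 1) s := by
  classical
  have hWfin : (Wset G lab x y).Finite := Set.toFinite _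
  refine ⟨insert x (insert y hWfin.toFinset), ?_, ?_⟩
  · -- clique
    intro a ha b hb hab
    simp only [Finset.coe_insert, Set.mem_insert_iff, Finset.mem_coe,
      Set.Finite.mem_toFinset] at ha hb
    rcases ha with rfl | rfl | ha <;> rcases hb with rfl | rfl | hb
    · exact absurd rfl hab
    · exact hxy
    · exact hb.1.symm
    · exact hxy.symm
    · exact absurd rfl hab
    · exact hb.2.1.symm
    · exact ha.1
    · exact ha.2.1
    · exact Wset_pairwise_adj h hxy a ha b hb hab
  · -- cardinality
    have hxW : x ∉ Wset G lab x y := fun hc => G.irrefl hc.1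
    have hyW : y ∉ Wset G lab x y := fun hc => G.irrefl hc.2.1
    have h1 : y ∉ hWfin.toFinset := fun hc => hyW (hWfin.mem_toFinset.mp hc)
    have h2 : x ∉ insert y hWfin.toFinset := by
      rw [Finset.mem_insert]
      rintro (rfl | hc)
      · exact G.irrefl hxy
      · exact hxW (hWfin.mem_toFinset.mp hc)
    rw [Finset.card_insert_of_notMem h2, Finset.card_insert_of_notMem h1,
      ← Set.ncard_eq_toFinset_card _ hWfin, ncard_Wset h hxy]
    have := h.1 _ ((G.mem_edgeSet).mpr hxy)
    omega

/-- Any clique of size at least 2 has an edge whose label is at least `card - 1`. -/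
lemma clique_bound [Fintype V] {G : SimpleGraph V} {lab : Sym2 V → ℕ}
    (h : MATLabeling G lab) {s : Finset V} (hs : G.IsClique s) (h2 : 2 ≤ s.card) :
    ∃ p ∈ s, ∃ q ∈ s, p ≠ q ∧ s.card ≤ lab s(p, q) + 1 := by
  classical
  have hPne : ((s ×ˢ s).filter (fun pq : V × V => pq.1 ≠ pq.2)).Nonempty := by
    obtain ⟨p, hp, q, hq, hpq⟩ := Finset.one_lt_card.mp h2
    refine ⟨(p, q), ?_⟩
    rw [Finset.mem_filter, Finset.mem_product]
    exact ⟨⟨hp, hq⟩, hpq⟩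
  obtain ⟨⟨p, q⟩, hpqmem, hpqmax⟩ :=
    Finset.exists_max_image _ (fun pq : V × V => lab s(pq.1, pq.2)) hPne
  rw [Finset.mem_filter, Finset.mem_product] at hpqmem
  obtain ⟨⟨hpK, hqK⟩, hpqne⟩ := hpqmem
  have hpqmax' : ∀ u ∈ s, ∀ v ∈ s, u ≠ v → lab s(u, v) ≤ lab s(p, q) := by
    intro u hu v hv huv
    exact hpqmax (u, v) (by
      rw [Finset.mem_filter, Finset.mem_product]
      exact ⟨⟨hu, hv⟩, huv⟩)
  have hApq : G.Adj p q := hs hpK hqK hpqne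
  refine ⟨p, hpK, q, hqK, hpqne, ?_⟩
  have hsub : (↑s : Set V) \ {p, q} ⊆ Wset G lab p q := by
    rintro v ⟨hvK, hvpq⟩
    simp only [Set.mem_insert_iff, Set.mem_singleton_iff] at hvpq
    push_neg at hvpq
    obtain ⟨hvp, hvq⟩ := hvpq
    have hvK' : v ∈ s := hvK
    have hAvp : G.Adj v p := hs hvK' hpK hvp
    have hAvq : G.Adj v q := hs hvK' hqK hvq
    refine ⟨hAvp, hAvq, ?_, ?_⟩
    · rcases Nat.lt_or_ge (lab s(v, p)) (lab s(p, q)) with hlt | hge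
      · exact hlt
      · exfalso
        have heq : lab s(v, p) = lab s(p, q) :=
          le_antisymm (hpqmax' v hvK' p hpK hvp) hge
        exact tri_unique_max h hAvp.symm hApq hAvq
          (by rw [labcomm lab p v]; exact heq)
          (by rw [labcomm lab p v, heq]; exact hpqmax' v hvK' q hqK hvq)
    · rcases Nat.lt_or_ge (lab s(v, q)) (lab s(p, q)) with hlt | hge
      · exact hlt
      · exfalso
        have heq : lab s(v, q) = lab s(p, q) :=
          le_antisymm (hpqmax' v hvK' q hqK hvq) hge
        exact tri_unique_max h hAvq.symm hApq.symm hAvp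
          (by rw [labcomm lab q v, labcomm lab q p]; exact heq)
          (by rw [labcomm lab q v, heq]; exact hpqmax' v hvK' p hpK hvp)
  have hWpq := ncard_Wset h hApq
  have hle := Set.ncard_le_ncard hsub (Set.toFinite _)
  have hKm2 : ((↑s : Set V) \ {p, q}).ncard = s.card - 2 := by
    have hqKe : q ∈ s.erase p := Finset.mem_erase.mpr ⟨Ne.symm hpqne, hqK⟩
    have hset : (↑s : Set V) \ {p, q} = ↑((s.erase p).erase q) := by
      ext v
      simp only [Set.mem_diff, Set.mem_insert_iff, Set.mem_singleton_iff,
        Finset.coe_erase, Set.mem_diff, Finset.mem_coe, Set.mem_singleton_iff]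
      constructor
      · rintro ⟨h1, h2⟩
        push_neg at h2
        exact ⟨⟨h1, h2.1⟩, h2.2⟩
      · rintro ⟨⟨h1, h2⟩, h3⟩
        exact ⟨h1, by push_neg; exact ⟨h2, h3⟩⟩
    rw [hset, Set.ncard_coe_finset, Finset.card_erase_of_mem hqKe,
      Finset.card_erase_of_mem hpK]
    omega
  rw [hWpq, hKm2] at hle
  have hσ1 : 1 ≤ lab s(p, q) := h.1 _ ((G.mem_edgeSet).mpr hApq)
  omega




theorem main [Fintype V] (G : SimpleGraph V) (lab : Sym2 V → ℕ) (h : MATLabeling G lab)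
    (hne : G.edgeSet.Nonempty) :
    IsGreatest (lab '' G.edgeSet) (G.cliqueNum - 1) := by
  classical
  obtain ⟨e₀, he₀⟩ := hne
  have hEfin : G.edgeSet.Finite := Set.toFinite _
  have hFne : ((hEfin.toFinset).image lab).Nonempty :=
    ⟨lab e₀, Finset.mem_image_of_mem lab (hEfin.mem_toFinset.mpr he₀)⟩
  set L := ((hEfin.toFinset).image lab).max' hFne with hLdef
  have hLmax : ∀ e ∈ G.edgeSet, lab e ≤ L := fun e he =>
    Finset.le_max' _ _ (Finset.mem_image_of_mem lab (hEfin.mem_toFinset.mpr he))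
  obtain ⟨el, helmem, heleq⟩ := Finset.mem_image.mp (((hEfin.toFinset).image lab).max'_mem hFne)
  have helE : el ∈ G.edgeSet := hEfin.mem_toFinset.mp helmem
  have hL1 : 1 ≤ L := le_trans (h.1 e₀ he₀) (hLmax e₀ he₀)
  obtain ⟨⟨x, y⟩, hxyel⟩ := Quot.exists_rep el
  have hxyel' : s(x, y) = el := hxyel
  have hxyadj : G.Adj x y := (G.mem_edgeSet).mp (hxyel' ▸ helE)
  obtain ⟨sC, hsC⟩ := edge_gives_clique h hxyadj
  have hω1 : L + 1 ≤ G.cliqueNum := by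
    have hcl := IsClique.card_le_cliqueNum (tc := hsC.isClique)
    rw [hsC.card_eq, hxyel', heleq] at hcl
    exact hcl
  have hω2 : G.cliqueNum ≤ L + 1 := by
    obtain ⟨t, ht⟩ := G.exists_isNClique_cliqueNum
    rcases Nat.lt_or_ge t.card 2 with h2 | h2
    · rw [← ht.card_eq]
      omega
    · obtain ⟨p, hp, q, hq, hpq, hcb⟩ := clique_bound h ht.isClique h2
      have hApq : G.Adj p q := ht.isClique hp hq hpq
      have := hLmax s(p, q) ((G.mem_edgeSet).mpr hApq)
      rw [← ht.card_eq]
      omega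
  have hω : G.cliqueNum = L + 1 := le_antisymm hω2 hω1
  constructor
  · refine ⟨el, helE, ?_⟩
    rw [hω, heleq]
    omega
  · rintro l ⟨e, heE, rfl⟩
    rw [hω]
    have := hLmax e heE
    omega

end MATaux


/-- In an MAT-labeled graph with at least one edge, the largest label occurring on the
edges equals `ω(G) - 1`, where `ω(G)` is the clique number. -/
theorem greatest_label_eq_cliqueNum_sub_one {V : Type*} [Fintype V]
    (G : SimpleGraph V) (lab : Sym2 V → ℕ) (h : MATLabeling G lab)
    (hne : G.edgeSet.Nonempty) :
    IsGreatest (lab '' G.edgeSet) (G.cliqueNum - 1) :=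
  MATaux.main G lab h hne
end

section
/- Let P be a vine satisfying the proximity condition and let v be a node of P of rank i ≥ 2. Then for every k with 0 ≤ k ≤ i−1, the k-fold union U_v(k) = {x of rank i−k : x ≤ v} has exactly k+1 elements. In particular, the complete union U_v = U_v(i−1) has exactly i = rk(v) elements. -/
/-- The `i`-th associated graph of a graded poset: vertices are the elements of rank `i`,
with `a` and `b` adjacent when they are (distinct, of rank `i` and) covered by a common
element (which then has cover-set `{a, b}`). -/
def coverGraph {P : Type*} [PartialOrder P] (rk : P → ℕ) (i : ℕ) : SimpleGraph P where
  Adj a b := a ≠ b ∧ rk a = i ∧ rk b = i ∧ ∃ v : P, a ⋖ v ∧ b ⋖ v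
  symm := by
    constructor
    rintro a b ⟨hne, ha, hb, v, h1, h2⟩
    exact ⟨hne.symm, hb, ha, v, h2, h1⟩
  loopless := by constructor; rintro a ⟨hne, -⟩; exact hne rfl

/-- A vine: a finite graded poset (with rank function `rk`, minimal elements of rank 1)
in which every non-minimal node covers exactly two nodes, any two distinct nodes of the
same rank are covered by at most one common node, and each associated graph is a
forest. -/
structure IsVine {P : Type*} [PartialOrder P] [Finite P] (rk : P → ℕ) : Prop where
  rk_strictMono : ∀ x y : P, x < y → rk x < rk y
  rk_covBy : ∀ x y : P, x ⋖ y → rk y = rk x + 1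
  rk_min : ∀ x : P, IsMin x → rk x = 1
  covers_two : ∀ v : P, ¬ IsMin v → {a : P | a ⋖ v}.ncard = 2
  cover_unique : ∀ a b : P, a ≠ b → rk a = rk b →
    ∀ v w : P, a ⋖ v → b ⋖ v → a ⋖ w → b ⋖ w → v = w
  forest : ∀ i : ℕ, (coverGraph rk i).IsAcyclic

/-- The rank of a graded poset: the largest rank of an element. -/
noncomputable def vineRank {P : Type*} (rk : P → ℕ) : ℕ := sSup (Set.range rk)

/-- The proximity condition: any two distinct nodes of the same rank `≥ 2` that are
covered by a common node themselves cover a common node. -/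
def Proximity {P : Type*} [PartialOrder P] (rk : P → ℕ) : Prop :=
  ∀ a b : P, a ≠ b → rk a = rk b → 2 ≤ rk a →
    (∃ v : P, a ⋖ v ∧ b ⋖ v) → ∃ c : P, c ⋖ a ∧ c ⋖ b

/-- A regular vine (R-vine): a vine whose rank equals its dimension (the number of
minimal elements), whose associated forests (for `1 ≤ i ≤ rank`) are trees, and
which satisfies the proximity condition. -/
structure IsRVine {P : Type*} [PartialOrder P] [Finite P] (rk : P → ℕ)
    extends IsVine rk : Prop where
  rank_eq_dim : vineRank rk = {x : P | IsMin x}.ncard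
  tree : ∀ i : ℕ, 1 ≤ i → i ≤ vineRank rk →
    ((coverGraph rk i).induce {x : P | rk x = i}).Connected
  proximity : Proximity rk

/-- A locally regular vine (LR-vine): a vine all of whose principal ideals
(with the induced order and rank) are R-vines. -/
def IsLRVine {P : Type*} [PartialOrder P] [Finite P] (rk : P → ℕ) : Prop :=
  IsVine rk ∧ ∀ v : P, IsRVine (P := {x : P // x ≤ v}) (fun x => rk x.val)

/-- The complete union of a node: the set of minimal elements below it. -/
def completeUnion {P : Type*} [PartialOrder P] (a : P) : Set P :=
  {x : P | IsMin x ∧ x ≤ a}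

/-- The conditioned set of a (non-minimal) node `v`: the minimal elements lying below
exactly one of the two nodes covered by `v` (the symmetric difference of the complete
unions of the two covered nodes). -/
def conditionedSet {P : Type*} [PartialOrder P] (v : P) : Set P :=
  {m : P | IsMin m ∧ ∃! a : P, a ⋖ v ∧ m ≤ a}


section VineAux

variable {P : Type*} [PartialOrder P] [Finite P]

private lemma vine_exists_covBy_le {x v : P} (hxv : x < v) : ∃ y : P, x ⋖ y ∧ y ≤ v := by
  have hwf : WellFounded ((· < ·) : P → P → Prop) := Finite.to_wellFoundedLT.wf
  obtain ⟨y, ⟨hy1, hy2⟩, hmin⟩ := hwf.has_min {z : P | x < z ∧ z ≤ v} ⟨v, hxv, le_rfl⟩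
  exact ⟨y, ⟨hy1, fun c hc1 hc2 => hmin c ⟨hc1, hc2.le.trans hy2⟩ hc2⟩, hy2⟩

private lemma vine_exists_min_le (x : P) : ∃ m : P, IsMin m ∧ m ≤ x := by
  have hwf : WellFounded ((· < ·) : P → P → Prop) := Finite.to_wellFoundedLT.wf
  obtain ⟨m, hm, hmin⟩ := hwf.has_min {z : P | z ≤ x} ⟨x, le_rfl⟩
  refine ⟨m, fun c hc => ?_, hm⟩
  by_contra hcm
  exact hmin c (le_trans hc hm) (lt_of_le_not_ge hc hcm)

private lemma vine_rk_one_iff {rk : P → ℕ} (h : IsVine rk) (x : P) : rk x = 1 ↔ IsMin x := by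
  refine ⟨fun hx => ?_, h.rk_min x⟩
  by_contra hmin
  obtain ⟨y, hy⟩ := not_isMin_iff.mp hmin
  obtain ⟨m, hm, hmy⟩ := vine_exists_min_le y
  have h1 := h.rk_min m hm
  have h2 := h.rk_strictMono m x (lt_of_le_of_lt hmy hy)
  omega

private lemma vine_cover_pair {rk : P → ℕ} (h : IsVine rk) {y : P} (hy : 2 ≤ rk y) :
    ∃ a b : P, a ≠ b ∧ {c : P | c ⋖ y} = {a, b} := by
  have hmin : ¬ IsMin y := fun hm => by have := h.rk_min y hm; omega
  exact Set.ncard_eq_two.mp (h.covers_two y hmin)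

end VineAux

def kfoldUnion {P : Type*} [PartialOrder P] (rk : P → ℕ) (v : P) (k : ℕ) : Set P :=
  {x : P | rk x = rk v - k ∧ x ≤ v}

def kfoldGraph {P : Type*} [PartialOrder P] (rk : P → ℕ) (v : P) (k : ℕ) :
    SimpleGraph (kfoldUnion rk v k) where
  Adj a b := a.val ≠ b.val ∧ ∃ y : P, y ≤ v ∧ a.val ⋖ y ∧ b.val ⋖ y
  symm := by constructor; rintro a b ⟨hne, y, hyv, h1, h2⟩; exact ⟨hne.symm, y, hyv, h2, h1⟩
  loopless := by constructor; rintro a ⟨hne, -⟩; exact hne rfl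

private lemma vine_key {P : Type*} [PartialOrder P] [Finite P]
    (rk : P → ℕ) (h : IsVine rk) (hprox : Proximity rk) (v : P) (hv : 2 ≤ rk v) :
    ∀ k : ℕ, k ≤ rk v - 1 →
      (kfoldUnion rk v k).ncard = k + 1 ∧
      ∀ a b : (kfoldUnion rk v k), (kfoldGraph rk v k).Reachable a b := by
  intro k
  induction k with
  | zero =>
    intro _
    have hU : kfoldUnion rk v 0 = {v} := by
      ext x
      simp only [kfoldUnion, Set.mem_setOf_eq, Nat.sub_zero, Set.mem_singleton_iff]
      constructor
      · rintro ⟨hrk, hle⟩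
        rcases hle.lt_or_eq with hlt | heq
        · have := h.rk_strictMono x v hlt; omega
        · exact heq
      · rintro rfl; exact ⟨rfl, le_rfl⟩
    constructor
    · rw [hU]; exact Set.ncard_singleton v
    · intro a b
      have ha : a.val = v := (Set.ext_iff.mp hU a.val).mp a.2
      have hb : b.val = v := (Set.ext_iff.mp hU b.val).mp b.2
      have : a = b := Subtype.ext (ha.trans hb.symm)
      rw [this]
  | succ k ih =>
    intro hk
    obtain ⟨hcard, hconn⟩ := ih (by omega)
    have hk2 : k + 2 ≤ rk v := by omega
    have mem_succ : ∀ {a y : P}, a ⋖ y → y ∈ kfoldUnion rk v k → a ∈ kfoldUnion rk v (k + 1) := by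
      intro a y hay hy
      have h1 := h.rk_covBy a y hay
      have h2 := hy.1
      exact ⟨by omega, hay.le.trans hy.2⟩
    have hrk_mem : ∀ y : P, y ∈ kfoldUnion rk v k → 2 ≤ rk y := by
      intro y hy; have := hy.1; omega
    have exists_up : ∀ x : P, x ∈ kfoldUnion rk v (k + 1) →
        ∃ y : P, x ⋖ y ∧ y ∈ kfoldUnion rk v k := by
      intro x hx
      have hxv : x < v := lt_of_le_of_ne hx.2 (fun he => by
        have h1 := hx.1; rw [he] at h1; omega)
      obtain ⟨y, hxy, hyv⟩ := vine_exists_covBy_le hxv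
      have h1 := h.rk_covBy x y hxy
      have h2 := hx.1
      exact ⟨y, hxy, ⟨by omega, hyv⟩⟩
    have within : ∀ (y : P) (hy : y ∈ kfoldUnion rk v k) (a b : P) (ha : a ⋖ y) (hb : b ⋖ y),
        (kfoldGraph rk v (k+1)).Reachable ⟨a, mem_succ ha hy⟩ ⟨b, mem_succ hb hy⟩ := by
      intro y hy a b ha hb
      rcases eq_or_ne a b with rfl | hne
      · exact SimpleGraph.Reachable.refl _
      · exact SimpleGraph.Adj.reachable ⟨hne, y, hy.2, ha, hb⟩
    have lift : ∀ (y y' : kfoldUnion rk v k) (w : (kfoldGraph rk v k).Walk y y')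
        (a b : P) (ha : a ⋖ y.val) (hb : b ⋖ y'.val),
        (kfoldGraph rk v (k+1)).Reachable ⟨a, mem_succ ha y.2⟩ ⟨b, mem_succ hb y'.2⟩ := by
      intro y y' w
      induction w with
      | @nil y => exact fun a b ha hb => within y.val y.2 a b ha hb
      | @cons y y1 y' hadj w ihw =>
        intro a b ha hb
        obtain ⟨hne, z, hzv, h1, h2⟩ := hadj
        obtain ⟨c, hc1, hc2⟩ := hprox y.val y1.val hne (y.2.1.trans y1.2.1.symm)
          (hrk_mem y.val y.2) ⟨z, h1, h2⟩
        exact (within y.val y.2 a c ha hc1).trans (ihw c b hc2 hb)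
    have hconn1 : ∀ a b : (kfoldUnion rk v (k+1)), (kfoldGraph rk v (k+1)).Reachable a b := by
      intro a b
      obtain ⟨y, hay, hy⟩ := exists_up a.val a.2
      obtain ⟨y', hby, hy'⟩ := exists_up b.val b.2
      obtain ⟨w⟩ := hconn ⟨y, hy⟩ ⟨y', hy'⟩
      have hr := lift ⟨y, hy⟩ ⟨y', hy'⟩ w a.val b.val hay hby
      have e1 : (⟨a.val, mem_succ hay hy⟩ : kfoldUnion rk v (k+1)) = a := Subtype.ext rfl
      have e2 : (⟨b.val, mem_succ hby hy'⟩ : kfoldUnion rk v (k+1)) = b := Subtype.ext rfl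
      rwa [e1, e2] at hr
    refine ⟨?_, hconn1⟩
    classical
    haveI : Fintype (kfoldUnion rk v (k+1) : Set P) := Fintype.ofFinite _
    haveI : Fintype (kfoldGraph rk v (k+1)).edgeSet := Fintype.ofFinite _
    -- acyclicity
    have hac : (kfoldGraph rk v (k+1)).IsAcyclic := by
      have hmap : ∀ {a b : (kfoldUnion rk v (k+1) : Set P)}, (kfoldGraph rk v (k+1)).Adj a b →
          (coverGraph rk (rk v - (k+1))).Adj a.val b.val := by
        rintro a b ⟨hne, y, hyv, h1, h2⟩
        exact ⟨hne, a.2.1, b.2.1, y, h1, h2⟩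
      intro x c hc
      exact h.forest _ (c.map ⟨Subtype.val, hmap⟩)
        (hc.map (f := ⟨Subtype.val, hmap⟩) Subtype.val_injective)
    -- nonemptiness
    have hne' : Nonempty (kfoldUnion rk v (k+1) : Set P) := by
      obtain ⟨y, hy⟩ := Set.nonempty_of_ncard_ne_zero (s := kfoldUnion rk v k) (by omega)
      obtain ⟨a, b, hab, hset⟩ := vine_cover_pair h (hrk_mem y hy)
      have ha : a ⋖ y := by
        have : a ∈ {c : P | c ⋖ y} := by rw [hset]; exact Or.inl rfl
        exact this
      exact ⟨⟨a, mem_succ ha hy⟩⟩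
    have htree : (kfoldGraph rk v (k+1)).IsTree :=
      ⟨(SimpleGraph.connected_iff _).mpr ⟨hconn1, hne'⟩, hac⟩
    -- choose the cover pair of each element of `U k`
    have hpair : ∀ y : (kfoldUnion rk v k : Set P),
        ∃ ab : (kfoldUnion rk v (k+1) : Set P) × (kfoldUnion rk v (k+1) : Set P),
          ab.1.val ≠ ab.2.val ∧ ab.1.val ⋖ y.val ∧ ab.2.val ⋖ y.val := by
      intro y
      obtain ⟨a, b, hab, hset⟩ := vine_cover_pair h (hrk_mem y.val y.2)
      have ha : a ⋖ y.val := by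
        have : a ∈ {c : P | c ⋖ y.val} := by rw [hset]; exact Or.inl rfl
        exact this
      have hb : b ⋖ y.val := by
        have : b ∈ {c : P | c ⋖ y.val} := by rw [hset]; exact Or.inr rfl
        exact this
      exact ⟨(⟨a, mem_succ ha y.2⟩, ⟨b, mem_succ hb y.2⟩), hab, ha, hb⟩
    choose f hf using hpair
    have hΨmem : ∀ y : (kfoldUnion rk v k : Set P),
        s((f y).1, (f y).2) ∈ (kfoldGraph rk v (k+1)).edgeSet := by
      intro y
      exact (SimpleGraph.mem_edgeSet _).mpr ⟨(hf y).1, y.val, y.2.2, (hf y).2.1, (hf y).2.2⟩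
    have hcover_eq : ∀ (y y' : (kfoldUnion rk v k : Set P)) (a b : P),
        a ≠ b → a ⋖ y.val → b ⋖ y.val → a ⋖ y'.val → b ⋖ y'.val → y = y' := by
      intro y y' a b hab h1 h2 h3 h4
      have e1 := h.rk_covBy a y.val h1
      have e2 := h.rk_covBy b y.val h2
      exact Subtype.ext (h.cover_unique a b hab (by omega) y.val y'.val h1 h2 h3 h4)
    have hbij : Function.Bijective (fun y : (kfoldUnion rk v k : Set P) =>
        (⟨s((f y).1, (f y).2), hΨmem y⟩ : (kfoldGraph rk v (k+1)).edgeSet)) := by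
      constructor
      · intro y y' he
        have he2 : s((f y).1, (f y).2) = s((f y').1, (f y').2) := Subtype.ext_iff.mp he
        rcases Sym2.eq_iff.mp he2 with ⟨e1, e2⟩ | ⟨e1, e2⟩
        · exact hcover_eq y y' (f y).1.val (f y).2.val (hf y).1 (hf y).2.1 (hf y).2.2
            (by rw [e1]; exact (hf y').2.1) (by rw [e2]; exact (hf y').2.2)
        · exact hcover_eq y y' (f y).1.val (f y).2.val (hf y).1 (hf y).2.1 (hf y).2.2
            (by rw [e1]; exact (hf y').2.2) (by rw [e2]; exact (hf y').2.1)
      · rintro ⟨e, he⟩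
        revert he
        induction e using Sym2.ind with
        | _ A B =>
          intro he
          obtain ⟨hne, z, hzv, h1, h2⟩ := (SimpleGraph.mem_edgeSet _).mp he
          have hzmem : z ∈ kfoldUnion rk v k := by
            have e1 := h.rk_covBy A.val z h1
            have e2 := A.2.1
            exact ⟨by omega, hzv⟩
          refine ⟨⟨z, hzmem⟩, ?_⟩
          apply Subtype.ext
          dsimp only
          obtain ⟨a0, b0, hab0, hset⟩ := vine_cover_pair h (hrk_mem z hzmem)
          have hmem : ∀ c : P, c ⋖ z → c = a0 ∨ c = b0 := by
            intro c hc
            have : c ∈ ({a0, b0} : Set P) := by rw [← hset]; exact hc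
            exact this
          have hA := hmem A.val h1
          have hB := hmem B.val h2
          have hf1 := hmem (f ⟨z, hzmem⟩).1.val (hf ⟨z, hzmem⟩).2.1
          have hf2 := hmem (f ⟨z, hzmem⟩).2.val (hf ⟨z, hzmem⟩).2.2
          have hne2 := (hf ⟨z, hzmem⟩).1
          rw [Sym2.eq_iff]
          rcases hf1 with e1 | e1 <;> rcases hf2 with e2 | e2 <;>
            rcases hA with e3 | e3 <;> rcases hB with e4 | e4 <;>
            first
              | (exact absurd (e1.trans e2.symm) hne2)
              | (exact absurd (e3.trans e4.symm) hne)
              | (exact Or.inl ⟨Subtype.ext (e1.trans e3.symm), Subtype.ext (e2.trans e4.symm)⟩)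
              | (exact Or.inr ⟨Subtype.ext (e1.trans e4.symm), Subtype.ext (e2.trans e3.symm)⟩)
    have hcount := htree.card_edgeFinset
    have e0 : ((kfoldGraph rk v (k+1)).edgeFinset).card
        = Fintype.card (kfoldGraph rk v (k+1)).edgeSet := SimpleGraph.edgeFinset_card
    have e1 : Nat.card (kfoldUnion rk v k : Set P)
        = Nat.card (kfoldGraph rk v (k+1)).edgeSet := Nat.card_eq_of_bijective _ hbij
    have e2 : Nat.card (kfoldUnion rk v k : Set P) = (kfoldUnion rk v k).ncard :=
      Nat.card_coe_set_eq _
    have e3 : Nat.card (kfoldUnion rk v (k+1) : Set P) = (kfoldUnion rk v (k+1)).ncard :=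
      Nat.card_coe_set_eq _
    have e4 : Nat.card (kfoldUnion rk v (k+1) : Set P)
        = Fintype.card (kfoldUnion rk v (k+1) : Set P) := Nat.card_eq_fintype_card
    have e5 : Nat.card (kfoldGraph rk v (k+1)).edgeSet
        = Fintype.card (kfoldGraph rk v (k+1)).edgeSet := Nat.card_eq_fintype_card
    omega

/-- In a vine satisfying the proximity condition, for a node `v` of rank `i ≥ 2` and any
`0 ≤ k ≤ i - 1`, the `k`-fold union `{x of rank i - k : x ≤ v}` has exactly `k + 1`
elements; in particular the complete union of `v` has exactly `rk v` elements. -/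
theorem kfold_union_ncard {P : Type*} [PartialOrder P] [Finite P]
    (rk : P → ℕ) (h : IsVine rk) (hprox : Proximity rk)
    (v : P) (hv : 2 ≤ rk v) :
    (∀ k : ℕ, k ≤ rk v - 1 →
      {x : P | rk x = rk v - k ∧ x ≤ v}.ncard = k + 1) ∧
    (completeUnion v).ncard = rk v := by
  have key := vine_key rk h hprox v hv
  constructor
  · intro k hk
    exact (key k hk).1
  · have h1 := (key (rk v - 1) (le_refl _)).1
    have hset : completeUnion v = kfoldUnion rk v (rk v - 1) := by
      ext x
      simp only [completeUnion, kfoldUnion, Set.mem_setOf_eq]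
      constructor
      · rintro ⟨hmin, hle⟩
        have := h.rk_min x hmin
        exact ⟨by omega, hle⟩
      · rintro ⟨hrk, hle⟩
        exact ⟨(vine_rk_one_iff h x).mp (by omega), hle⟩
    rw [hset, h1]
    omega
end

section
/- Let P be an LR-vine and let P̂ = {U_a : a ∈ P} be the family of complete unions ordered by set inclusion. Then the map a ↦ U_a is a poset isomorphism from P onto P̂. -/
section Aux

variable {P : Type*} [PartialOrder P] [Finite P] {rk : P → ℕ}

omit [Finite P] in
/-- Covering in a principal ideal coincides with covering in `P`. -/
lemma covBy_subtype_iff {b : P} (x v : {y : P // y ≤ b}) :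
    x ⋖ v ↔ x.val ⋖ v.val := by
  constructor
  · rintro ⟨hlt, hmid⟩
    refine ⟨hlt, fun {z} hxz hzv => ?_⟩
    exact hmid (c := ⟨z, hzv.le.trans v.2⟩) (Subtype.mk_lt_mk.mpr hxz)
      (Subtype.mk_lt_mk.mpr hzv)
  · rintro ⟨hlt, hmid⟩
    refine ⟨Subtype.mk_lt_mk.mpr hlt, fun {z} hxz hzv => ?_⟩
    exact hmid (Subtype.mk_lt_mk.mp hxz) (Subtype.mk_lt_mk.mp hzv)

/-- Every element of a vine has rank at least 1. -/
lemma one_le_rk (hv : IsVine rk) (x : P) : 1 ≤ rk x := by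
  have H : ∀ n, ∀ x : P, rk x = n → 1 ≤ rk x := by
    intro n
    induction n using Nat.strong_induction_on with
    | _ n ih =>
      intro x hx
      by_cases hm : IsMin x
      · rw [hv.rk_min x hm]
      · obtain ⟨y, hy⟩ := not_isMin_iff.mp hm
        have h1 : rk y < rk x := hv.rk_strictMono _ _ hy
        have := ih (rk y) (hx ▸ h1) y rfl
        omega
  exact H (rk x) x rfl

/-- The key order-reflection lemma: in an LR-vine, `U_a ⊆ U_b` implies `a ≤ b`. -/
lemma le_of_completeUnion_subset (h : IsLRVine rk) :
    ∀ a b : P, completeUnion a ⊆ completeUnion b → a ≤ b := by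
  classical
  have H : ∀ n, ∀ a b : P, rk a = n → completeUnion a ⊆ completeUnion b → a ≤ b := by
    intro n
    induction n using Nat.strong_induction_on with
    | _ n ih =>
      intro a b hn hsub
      by_cases hm : IsMin a
      · exact (hsub ⟨hm, le_rfl⟩).2
      · -- `a` covers exactly two distinct elements `c, d`.
        obtain ⟨c, d, hcd, hset⟩ := Set.ncard_eq_two.mp (h.1.covers_two a hm)
        have hc : c ⋖ a := by
          have : c ∈ ({c, d} : Set P) := by simp
          rw [← hset] at this; exact this
        have hd : d ⋖ a := by
          have : d ∈ ({c, d} : Set P) := by simp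
          rw [← hset] at this; exact this
        have hrkc : rk a = rk c + 1 := h.1.rk_covBy _ _ hc
        have hrkd : rk a = rk d + 1 := h.1.rk_covBy _ _ hd
        have hrk_eq : rk c = rk d := by omega
        -- complete unions of `c` and `d` are contained in that of `b`
        have hsubc : completeUnion c ⊆ completeUnion b := fun m hmem =>
          hsub ⟨hmem.1, hmem.2.trans hc.le⟩
        have hsubd : completeUnion d ⊆ completeUnion b := fun m hmem =>
          hsub ⟨hmem.1, hmem.2.trans hd.le⟩
        have hcb : c ≤ b := ih (rk c) (by omega) c b rfl hsubc
        have hdb : d ≤ b := ih (rk d) (by omega) d b rfl hsubd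
        -- Work in the principal ideal of `b`, which is an R-vine.
        set I := {y : P // y ≤ b} with hI
        set rk' : I → ℕ := fun x => rk x.val with hrk'
        have hRV : IsRVine rk' := h.2 b
        set i := rk c with hi
        have hi1 : 1 ≤ i := one_le_rk h.1 c
        have hi2 : i ≤ vineRank rk' := by
          apply le_csSup ((Set.finite_range rk').bddAbove)
          exact ⟨⟨c, hcb⟩, rfl⟩
        have htree := hRV.tree i hi1 hi2
        -- the two vertices in the induced graph
        set S : Set I := {x : I | rk' x = i} with hS
        have hcS : (⟨c, hcb⟩ : I) ∈ S := rfl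
        have hdS : (⟨d, hdb⟩ : I) ∈ S := hrk_eq.symm
        set cI : S := ⟨⟨c, hcb⟩, hcS⟩
        set dI : S := ⟨⟨d, hdb⟩, hdS⟩
        obtain ⟨w⟩ := htree.preconnected cI dI
        -- map the path to the cover graph of `P`
        have hcd' : c ≠ d := hcd
        set F : ((coverGraph rk' i).induce S) →g (coverGraph rk i) :=
          { toFun := fun x => (x.val.val : P)
            map_rel' := by
              rintro x y ⟨hne, hx, hy, v, h1, h2⟩
              refine ⟨?_, hx, hy, v.val, (covBy_subtype_iff _ _).mp h1,
                (covBy_subtype_iff _ _).mp h2⟩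
              intro hxy
              have hxy' : (x.val : I) = y.val := Subtype.ext hxy
              exact hne hxy' } with hF
        have hFinj : Function.Injective F := by
          intro x y hxy
          have hxy' : x.val.val = y.val.val := hxy
          exact Subtype.ext (Subtype.ext hxy')
        set p := w.toPath with hp
        have hmap : ((p : SimpleGraph.Walk _ cI dI).map F).IsPath :=
          SimpleGraph.Walk.map_isPath_of_injective hFinj p.2
        -- the direct edge from `c` to `d` via common cover `a`
        have hAdj : (coverGraph rk i).Adj c d := ⟨hcd', rfl, hrk_eq.symm, a, hc, hd⟩
        have hpq : (⟨(p : SimpleGraph.Walk _ cI dI).map F, hmap⟩ :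
            (coverGraph rk i).Path c d) = SimpleGraph.Path.singleton hAdj :=
          (h.1.forest i).path_unique _ _
        have hlen : ((p : SimpleGraph.Walk _ cI dI).map F).length = 1 :=
          congrArg (fun q : (coverGraph rk i).Path c d => q.val.length) hpq
        rw [SimpleGraph.Walk.length_map] at hlen
        have hadj2 : ((coverGraph rk' i).induce S).Adj cI dI :=
          SimpleGraph.Walk.adj_of_length_eq_one hlen
        obtain ⟨-, -, -, v, h1, h2⟩ := hadj2
        have h1' : c ⋖ v.val := (covBy_subtype_iff _ _).mp h1
        have h2' : d ⋖ v.val := (covBy_subtype_iff _ _).mp h2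
        have : v.val = a := h.1.cover_unique c d hcd' hrk_eq v.val a h1' h2' hc hd
        exact this ▸ v.2
  exact fun a b => H (rk a) a b rfl

end Aux

/-- For an LR-vine `P`, the map `a ↦ U_a` is a poset isomorphism from `P` onto the
family `P̂ = {U_a : a ∈ P}` of complete unions, ordered by set inclusion. -/
theorem orderIso_completeUnion {P : Type*} [PartialOrder P] [Finite P]
    (rk : P → ℕ) (h : IsLRVine rk) :
    ∃ φ : P ≃o {S : Set P // ∃ a : P, S = completeUnion a},
      ∀ a : P, (φ a : Set P) = completeUnion a := by
  have key := le_of_completeUnion_subset h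
  have hmono : ∀ a b : P, a ≤ b → completeUnion a ⊆ completeUnion b :=
    fun a b hab m hm => ⟨hm.1, hm.2.trans hab⟩
  set e : P → {S : Set P // ∃ a : P, S = completeUnion a} :=
    fun a => ⟨completeUnion a, a, rfl⟩ with he
  have hbij : Function.Bijective e := by
    constructor
    · intro a b hab
      have : completeUnion a = completeUnion b := congrArg Subtype.val hab
      exact le_antisymm (key a b this.le) (key b a this.ge)
    · rintro ⟨S, a, rfl⟩
      exact ⟨a, rfl⟩
  refine ⟨⟨Equiv.ofBijective e hbij, ?_⟩, fun a => rfl⟩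
  intro a b
  constructor
  · intro hab
    exact key a b hab
  · intro hab
    exact hmono a b hab
end

section
/- Let F be a forest and let i_1, i_2, i_3 be three distinct vertices of F such that each pair among them is connected by a path in F. If none of the three connecting paths is the concatenation of the other two, then i_1, i_2, i_3 are all leaves (vertices of degree 1) in the subtree of F induced by the union of the vertices of the three paths. -/
open SimpleGraph Walk

section aux

variable {V : Type*} {F : SimpleGraph V}

private lemma myGetVert_mem_support {u v : V} (p : F.Walk u v) (n : ℕ) :
    p.getVert n ∈ p.support := by
  induction p generalizing n with
  | nil => simp [Walk.getVert]
  | cons h p ih =>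
    cases n with
    | zero => simp
    | succ n => simp [Walk.getVert_cons_succ, ih]

private lemma myEqOf (hF : F.IsAcyclic) {u v : V} {p q : F.Walk u v}
    (hp : p.IsPath) (hq : q.IsPath) : p = q := by
  have := hF.path_unique ⟨p, hp⟩ ⟨q, hq⟩
  exact congrArg Subtype.val this

private lemma myIsPath_append {u v w : V} {p : F.Walk u v} {q : F.Walk v w}
    (hp : p.IsPath) (hq : q.IsPath)
    (h : ∀ x, x ∈ p.support → x ∈ q.support → x = v) : (p.append q).IsPath := by
  rw [Walk.isPath_def, Walk.support_append, List.nodup_append]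
  have hqs : q.support = v :: q.support.tail := by
    rw [Walk.support_eq_cons]; rfl
  have hqn : q.support.Nodup := hq.support_nodup
  rw [hqs] at hqn
  refine ⟨hp.support_nodup, (List.nodup_cons.mp hqn).2, ?_⟩
  intro x hx y hx' hxy
  subst hxy
  have hxq : x ∈ q.support := by rw [hqs]; exact List.mem_cons_of_mem _ hx'
  have := h x hx hxq
  subst this
  exact (List.nodup_cons.mp hqn).1 hx'

private lemma myIsPath_concat {u v w : V} {p : F.Walk u v} (hp : p.IsPath)
    (h : F.Adj v w) (hw : w ∉ p.support) : (p.concat h).IsPath := by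
  rw [Walk.concat_eq_append]
  refine myIsPath_append hp ?_ ?_
  · exact (Walk.IsPath.nil).cons (by simpa using h.ne)
  · intro x hx hx'
    simp only [Walk.support_cons, Walk.support_nil, List.mem_cons,
      List.mem_singleton, List.not_mem_nil, or_false] at hx'
    rcases hx' with rfl | rfl
    · rfl
    · exact absurd hx hw

private lemma myGetVert_one_takeUntil [DecidableEq V] {a w v : V} (p : F.Walk a w) (h : v ∈ p.support)
    (hv : a ≠ v) : (p.takeUntil v h).getVert 1 = p.getVert 1 := by
  have hlen : 0 < (p.takeUntil v h).length := by
    rw [← Walk.not_nil_iff_lt_length]; exact Walk.not_nil_of_ne hv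
  conv_rhs => rw [← Walk.take_spec p h]
  rw [Walk.getVert_append]
  rcases lt_or_ge 1 (p.takeUntil v h).length with hl | hl
  · simp [hl]
  · have hl1 : (p.takeUntil v h).length = 1 := le_antisymm hl hlen
    have hend := (p.takeUntil v h).getVert_length
    rw [hl1] at hend
    rw [if_neg (by omega), hend]
    simp [hl1]

private lemma leaf_aux [DecidableEq V] (hF : F.IsAcyclic) (a b c : V) (hab : a ≠ b) (hca : c ≠ a)
    (pab : F.Walk a b) (pbc : F.Walk b c) (pca : F.Walk c a)
    (h1 : pab.IsPath) (h2 : pbc.IsPath) (h3 : pca.IsPath)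
    (hbc : pbc ≠ pab.reverse.append pca.reverse) :
    (F.neighborSet a ∩
      {v : V | v ∈ pab.support ∨ v ∈ pbc.support ∨ v ∈ pca.support}).ncard = 1 := by
  -- a is not on pbc
  have hanot : a ∉ pbc.support := by
    intro h
    apply hbc
    have e1 : pbc.takeUntil a h = pab.reverse :=
      myEqOf hF (h2.takeUntil h) h1.reverse
    have e2 : pbc.dropUntil a h = pca.reverse :=
      myEqOf hF (h2.dropUntil h) h3.reverse
    rw [← Walk.take_spec pbc h, e1, e2]
  set x := pab.getVert 1 with hxdef
  have hnotnil : ¬ pab.Nil := Walk.not_nil_of_ne hab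
  have hax : F.Adj a x := by
    have := pab.adj_snd hnotnil
    simpa using this
  have hnotnil' : ¬ pca.reverse.Nil := Walk.not_nil_of_ne hca.symm
  have h3r : pca.reverse.IsPath := h3.reverse
  -- second vertices of pab and pca.reverse agree
  have hsnd : pca.reverse.getVert 1 = x := by
    by_contra hne
    apply hbc
    have hmeet : ∀ w, w ∈ pab.support → w ∈ pca.reverse.support → w = a := by
      intro w hw1 hw2
      by_contra hwa
      have hwa' : a ≠ w := fun h => hwa h.symm
      have e : pab.takeUntil w hw1 = pca.reverse.takeUntil w hw2 :=
        myEqOf hF (h1.takeUntil hw1) (h3r.takeUntil hw2)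
      apply hne
      calc pca.reverse.getVert 1
          = (pca.reverse.takeUntil w hw2).getVert 1 :=
            (myGetVert_one_takeUntil _ hw2 hwa').symm
        _ = (pab.takeUntil w hw1).getVert 1 := by rw [e]
        _ = pab.getVert 1 := myGetVert_one_takeUntil _ hw1 hwa'
    have hpath : (pab.reverse.append pca.reverse).IsPath := by
      refine myIsPath_append h1.reverse h3r ?_
      intro w hw1 hw2
      exact hmeet w (by rwa [Walk.support_reverse, List.mem_reverse] at hw1) hw2
    exact myEqOf hF h2 hpath
  -- every neighbor of a in the union equals x
  have key : ∀ v, F.Adj a v →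
      (v ∈ pab.support ∨ v ∈ pbc.support ∨ v ∈ pca.support) → v = x := by
    intro v hav hv
    have hva : a ≠ v := hav.ne
    have hsingle : (Walk.cons hav Walk.nil : F.Walk a v).IsPath :=
      (Walk.IsPath.nil).cons (by simpa using hva)
    rcases hv with hv | hv | hv
    · have e : pab.takeUntil v hv = Walk.cons hav Walk.nil :=
        myEqOf hF (h1.takeUntil hv) hsingle
      have := myGetVert_one_takeUntil pab hv hva
      rw [e] at this
      simpa [hxdef] using this
    · -- v on pbc
      have hna : a ∉ (pbc.takeUntil v hv).support :=
        fun h => hanot (Walk.support_takeUntil_subset pbc hv h)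
      have hpath : ((pbc.takeUntil v hv).concat hav.symm).IsPath :=
        myIsPath_concat (h2.takeUntil hv) hav.symm hna
      have e : (pbc.takeUntil v hv).concat hav.symm = pab.reverse :=
        myEqOf hF hpath h1.reverse
      have e2 : pab = Walk.cons (hav.symm.symm) (pbc.takeUntil v hv).reverse := by
        rw [← Walk.reverse_reverse pab, ← e, Walk.reverse_concat]
      have : pab.getVert 1 = v := by rw [e2]; exact Walk.snd_cons _ _
      exact this.symm
    · -- v on pca
      have hv' : v ∈ pca.reverse.support := by
        rw [Walk.support_reverse, List.mem_reverse]; exact hv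
      have e : pca.reverse.takeUntil v hv' = Walk.cons hav Walk.nil :=
        myEqOf hF (h3r.takeUntil hv') hsingle
      have := myGetVert_one_takeUntil pca.reverse hv' hva
      rw [e] at this
      rw [hsnd] at this
      simpa using this
  have hset : F.neighborSet a ∩
      {v : V | v ∈ pab.support ∨ v ∈ pbc.support ∨ v ∈ pca.support} = {x} := by
    ext v
    simp only [Set.mem_inter_iff, SimpleGraph.mem_neighborSet, Set.mem_setOf_eq,
      Set.mem_singleton_iff]
    constructor
    · rintro ⟨h1', h2'⟩; exact key v h1' h2'
    · rintro rfl
      exact ⟨hax, Or.inl (myGetVert_mem_support pab 1)⟩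
  rw [hset, Set.ncard_singleton]

end aux

/-- Let `F` be a forest and `i₁, i₂, i₃` three distinct vertices pairwise connected by
paths `p12, p23, p31`. If none of the three paths is the concatenation of the other two,
then `i₁, i₂, i₃` are leaves (degree-one vertices) of the subtree of `F` induced on the
union of the vertices of the three paths. -/
theorem forest_three_paths_leaves {V : Type*} (F : SimpleGraph V) (hF : F.IsAcyclic)
    (i₁ i₂ i₃ : V) (h12 : i₁ ≠ i₂) (h23 : i₂ ≠ i₃) (h13 : i₁ ≠ i₃)
    (p12 : F.Walk i₁ i₂) (p23 : F.Walk i₂ i₃) (p31 : F.Walk i₃ i₁)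
    (hp12 : p12.IsPath) (hp23 : p23.IsPath) (hp31 : p31.IsPath)
    (hc13 : p31.reverse ≠ p12.append p23)
    (hc12 : p12 ≠ p31.reverse.append p23.reverse)
    (hc23 : p23 ≠ p12.reverse.append p31.reverse) :
    (F.neighborSet i₁ ∩ {v : V | v ∈ p12.support ∨ v ∈ p23.support ∨ v ∈ p31.support}).ncard = 1 ∧
    (F.neighborSet i₂ ∩ {v : V | v ∈ p12.support ∨ v ∈ p23.support ∨ v ∈ p31.support}).ncard = 1 ∧
    (F.neighborSet i₃ ∩ {v : V | v ∈ p12.support ∨ v ∈ p23.support ∨ v ∈ p31.support}).ncard = 1 := by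
  classical
  have hS2 : {v : V | v ∈ p12.support ∨ v ∈ p23.support ∨ v ∈ p31.support}
      = {v : V | v ∈ p23.support ∨ v ∈ p31.support ∨ v ∈ p12.support} := by
    ext v; simp only [Set.mem_setOf_eq]; tauto
  have hS3 : {v : V | v ∈ p12.support ∨ v ∈ p23.support ∨ v ∈ p31.support}
      = {v : V | v ∈ p31.support ∨ v ∈ p12.support ∨ v ∈ p23.support} := by
    ext v; simp only [Set.mem_setOf_eq]; tauto
  have hc31' : p31 ≠ p23.reverse.append p12.reverse := by
    intro h
    apply hc13
    rw [h, Walk.reverse_append, Walk.reverse_reverse, Walk.reverse_reverse]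
  refine ⟨leaf_aux hF i₁ i₂ i₃ h12 (fun h => h13 h.symm) p12 p23 p31 hp12 hp23 hp31 hc23,
    ?_, ?_⟩
  · rw [hS2]
    exact leaf_aux hF i₂ i₃ i₁ h23 h12 p23 p31 p12 hp23 hp31 hp12 hc31'
  · rw [hS3]
    exact leaf_aux hF i₃ i₁ i₂ (fun h => h13 h.symm) h23 p31 p12 p23 hp31 hp12 hp23 hc12
end

section
/- Let P be a vine. Then the following are equivalent: (1) P is an ideal of some R-vine; (2) P satisfies the proximity condition; (3) P is an LR-vine (every principal ideal of P is an R-vine). -/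
/-- `P` (with rank `rk`) is an ideal of some R-vine: there exist an R-vine `Q` and an
order embedding of `P` into `Q` preserving the rank, whose (downward-closed) range is an
ideal of `Q`. -/
def IsIdealOfRVine {P : Type} [PartialOrder P] [Finite P] (rk : P → ℕ) : Prop :=
  ∃ (Q : Type) (iQ : PartialOrder Q) (iF : Finite Q),
    letI := iQ
    letI := iF
    ∃ (rkQ : Q → ℕ) (f : P ↪o Q),
      IsRVine rkQ ∧ (∀ x : P, rkQ (f x) = rk x) ∧ IsLowerSet (Set.range f)

/-! ### Auxiliary graph lemmas -/

open SimpleGraph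

section GraphLemmas

variable {V : Type*} {W : Type*}

lemma reachable_of_pullback {G : SimpleGraph V} {H : SimpleGraph W} (f : V → W)
    (hinj : Function.Injective f)
    (hadj : ∀ x y : V, H.Adj (f x) (f y) → G.Adj x y)
    (hcl : ∀ u w : W, H.Adj u w → ∃ x, u = f x)
    {x y : V} (h : H.Reachable (f x) (f y)) : G.Reachable x y := by
  obtain ⟨p⟩ := h
  have key : ∀ (u v : W) (p : H.Walk u v) (x y : V), u = f x → v = f y → G.Reachable x y := by
    intro u v p
    induction p with
    | nil => intro x y hx hy; subst hx; cases hinj hy; exact Reachable.refl _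
    | cons h q ih =>
      intro x y hx hy
      obtain ⟨z, hz⟩ := hcl _ _ (h.symm)
      subst hx hy hz
      exact (hadj _ _ h).reachable.trans (ih z y rfl rfl)
  exact key _ _ p x y rfl rfl

lemma reachable_of_pushforward {G : SimpleGraph V} {H : SimpleGraph W} (f : V → W)
    (hadj : ∀ x y : V, G.Adj x y → H.Adj (f x) (f y))
    {x y : V} (h : G.Reachable x y) : H.Reachable (f x) (f y) :=
  Reachable.map (⟨f, fun h' => hadj _ _ h'⟩ : G →g H) h

lemma isAcyclic_of_pullback {G : SimpleGraph V} {H : SimpleGraph W} (f : V → W)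
    (hinj : Function.Injective f)
    (hadj : ∀ x y : V, H.Adj (f x) (f y) ↔ G.Adj x y)
    (hcl : ∀ u w : W, H.Adj u w → ∃ x, u = f x)
    (hG : G.IsAcyclic) : H.IsAcyclic := by
  rw [isAcyclic_iff_forall_adj_isBridge]
  intro u v huv
  obtain ⟨x, hx⟩ := hcl _ _ huv
  obtain ⟨y, hy⟩ := hcl _ _ huv.symm
  subst hx hy
  have hGxy : G.Adj x y := (hadj _ _).1 huv
  have hbr := (isAcyclic_iff_forall_adj_isBridge.1 hG) hGxy
  rw [isBridge_iff] at hbr ⊢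
  unfold SimpleGraph.deleteEdges at hbr ⊢
  refine fun hr => hbr ?_
  refine reachable_of_pullback f hinj ?_ ?_ hr
  · intro p q hpq
    rw [sdiff_adj] at hpq ⊢
    refine ⟨(hadj _ _).1 hpq.1, fun hmem => hpq.2 ?_⟩
    rw [fromEdgeSet_adj] at hmem ⊢
    refine ⟨?_, (hpq.1).ne⟩
    have : s(p, q) = s(x, y) := by
      simpa using hmem.1
    rw [Sym2.eq_iff] at this
    rcases this with ⟨h1, h2⟩ | ⟨h1, h2⟩ <;> simp [h1, h2, Sym2.eq_swap]
  · intro p q hpq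
    rw [sdiff_adj] at hpq
    exact hcl _ _ hpq.1

lemma isAcyclic_comap {G : SimpleGraph V} {H : SimpleGraph W} (f : V → W)
    (hinj : Function.Injective f)
    (hadj : ∀ x y : V, G.Adj x y → H.Adj (f x) (f y))
    (hH : H.IsAcyclic) : G.IsAcyclic := by
  rw [isAcyclic_iff_forall_adj_isBridge]
  intro x y hxy
  have hbr := (isAcyclic_iff_forall_adj_isBridge.1 hH) (hadj _ _ hxy)
  rw [isBridge_iff] at hbr ⊢
  unfold SimpleGraph.deleteEdges at hbr ⊢
  refine fun hr => hbr ?_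
  refine reachable_of_pushforward f ?_ hr
  intro p q hpq
  rw [sdiff_adj] at hpq ⊢
  refine ⟨hadj _ _ hpq.1, fun hmem => hpq.2 ?_⟩
  rw [fromEdgeSet_adj] at hmem ⊢
  refine ⟨?_, hpq.1.ne⟩
  have : s(f p, f q) = s(f x, f y) := by simpa using hmem.1
  rw [Sym2.eq_iff] at this
  rcases this with ⟨h1, h2⟩ | ⟨h1, h2⟩
  · simp [hinj h1, hinj h2]
  · simp [hinj h1, hinj h2, Sym2.eq_swap]

lemma reachable_sup_edge {G : SimpleGraph V} {a b x y : V}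
    (h : (G ⊔ fromEdgeSet {s(a, b)}).Reachable x y) :
    G.Reachable x y ∨ (G.Reachable x a ∧ G.Reachable b y) ∨
      (G.Reachable x b ∧ G.Reachable a y) := by
  obtain ⟨p⟩ := h
  induction p with
  | nil => exact Or.inl (Reachable.refl _)
  | cons hadj q ih =>
    rename_i u w v
    rcases hadj with hG | he
    · rcases ih with h1 | ⟨h1, h2⟩ | ⟨h1, h2⟩
      · exact Or.inl (hG.reachable.trans h1)
      · exact Or.inr (Or.inl ⟨hG.reachable.trans h1, h2⟩)
      · exact Or.inr (Or.inr ⟨hG.reachable.trans h1, h2⟩)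
    · rw [fromEdgeSet_adj] at he
      have : s(u, w) = s(a, b) := by simpa using he.1
      rw [Sym2.eq_iff] at this
      rcases this with ⟨h1, h2⟩ | ⟨h1, h2⟩ <;> subst h1 <;> subst h2
      · rcases ih with h1 | ⟨h1, h2⟩ | ⟨h1, h2⟩
        · exact Or.inr (Or.inl ⟨Reachable.refl _, h1⟩)
        · exact Or.inr (Or.inl ⟨h1.symm.trans h1, h2⟩)
        · exact Or.inl h2
      · rcases ih with h1 | ⟨h1, h2⟩ | ⟨h1, h2⟩
        · exact Or.inr (Or.inr ⟨Reachable.refl _, h1⟩)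
        · exact Or.inl h2
        · exact Or.inr (Or.inr ⟨h1.symm.trans h1, h2⟩)

lemma isAcyclic_sup_edge {G : SimpleGraph V} {a b : V}
    (hG : G.IsAcyclic) (hnr : ¬ G.Reachable a b) :
    (G ⊔ fromEdgeSet {s(a, b)}).IsAcyclic := by
  have hnadj : ¬ G.Adj a b := fun h => hnr h.reachable
  rw [isAcyclic_iff_forall_adj_isBridge]
  intro u v huv
  rw [isBridge_iff]
  unfold SimpleGraph.deleteEdges
  refine fun hr => ?_
  rcases huv with hGuv | he
  · have hle : (G ⊔ fromEdgeSet {s(a, b)}) \ fromEdgeSet {s(u, v)} ≤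
        (G \ fromEdgeSet {s(u, v)}) ⊔ fromEdgeSet {s(a, b)} := by
      intro p q hpq
      rw [sdiff_adj] at hpq
      rcases hpq.1 with h1 | h1
      · exact Or.inl (sdiff_adj _ _ _ _ |>.2 ⟨h1, hpq.2⟩)
      · exact Or.inr h1
    have hbr := (isAcyclic_iff_forall_adj_isBridge.1 hG) hGuv
    rw [isBridge_iff] at hbr
    unfold SimpleGraph.deleteEdges at hbr
    have hmono : G \ fromEdgeSet {s(u, v)} ≤ G := sdiff_le
    rcases reachable_sup_edge (hr.mono hle) with h1 | ⟨h1, h2⟩ | ⟨h1, h2⟩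
    · exact hbr h1
    · exact hnr ((h1.mono hmono).symm.trans (hGuv.reachable.trans (h2.mono hmono).symm))
    · exact hnr ((h2.mono hmono).trans (hGuv.reachable.symm.trans (h1.mono hmono)))
  · rw [fromEdgeSet_adj] at he
    have hs : s(u, v) = s(a, b) := by simpa using he.1
    have hle : (G ⊔ fromEdgeSet {s(a, b)}) \ fromEdgeSet {s(u, v)} ≤ G := by
      intro p q hpq
      rw [sdiff_adj] at hpq
      rcases hpq.1 with h1 | h1
      · exact h1
      · exact absurd (hs ▸ h1) hpq.2
    have hGr : G.Reachable u v := hr.mono hle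
    rw [Sym2.eq_iff] at hs
    rcases hs with ⟨h1, h2⟩ | ⟨h1, h2⟩
    · exact hnr (h1 ▸ h2 ▸ hGr)
    · exact hnr (h1 ▸ h2 ▸ hGr).symm

end GraphLemmas

/-! ### Poset lemmas -/

section PosetLemmas

variable {P : Type*} [PartialOrder P]

lemma coverGraph_adj {P : Type*} [PartialOrder P] (rk : P → ℕ) (i : ℕ) (a b : P) :
    (coverGraph rk i).Adj a b ↔ a ≠ b ∧ rk a = i ∧ rk b = i ∧ ∃ v : P, a ⋖ v ∧ b ⋖ v :=
  Iff.rfl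

lemma exists_covBy_between [Finite P] {x y : P} (h : x < y) : ∃ z, x ≤ z ∧ z ⋖ y := by
  have hfin : ({z : P | x ≤ z ∧ z < y}).Finite := Set.toFinite _
  obtain ⟨z, hz, hmax⟩ := hfin.exists_maximalFor id _ ⟨x, le_refl x, h⟩
  refine ⟨z, hz.1, hz.2, fun c hc1 hc2 => ?_⟩
  exact lt_irrefl _ (lt_of_lt_of_le hc1 (hmax ⟨hz.1.trans hc1.le, hc2⟩ hc1.le))

lemma lowerset_covBy_iff {L : Set P} (hL : IsLowerSet L) (x y : L) :
    x ⋖ y ↔ (x : P) ⋖ (y : P) := by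
  constructor
  · rintro ⟨hlt, hmid⟩
    refine ⟨Subtype.coe_lt_coe.2 hlt, fun c hc1 hc2 => ?_⟩
    have hcL : c ∈ L := hL hc2.le y.2
    have h1 : x < (⟨c, hcL⟩ : L) := by exact_mod_cast hc1
    have h2 : (⟨c, hcL⟩ : L) < y := by exact_mod_cast hc2
    exact hmid h1 h2
  · rintro ⟨hlt, hmid⟩
    refine ⟨Subtype.coe_lt_coe.1 hlt, fun c hc1 hc2 => ?_⟩
    exact hmid (Subtype.coe_lt_coe.2 hc1) (Subtype.coe_lt_coe.2 hc2)

lemma lowerset_isMin_iff {L : Set P} (hL : IsLowerSet L) (x : L) :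
    IsMin x ↔ IsMin (x : P) := by
  constructor
  · intro hx z hz
    have hzL : z ∈ L := hL hz x.2
    exact hx (show (⟨z, hzL⟩ : L) ≤ x from hz)
  · intro hx z hz
    exact hx (show (z : P) ≤ (x : P) from hz)

end PosetLemmas

/-! ### Vine lemmas -/

section VineLemmas

variable {P : Type*} [PartialOrder P] [Finite P] {rk : P → ℕ}

lemma IsVine.rk_pos (h : IsVine rk) (x : P) : 1 ≤ rk x := by
  by_contra hc
  have hx0 : rk x = 0 := by omega
  by_cases hm : IsMin x
  · have := h.rk_min x hm; omega
  · obtain ⟨z, hz⟩ := not_isMin_iff.1 hm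
    obtain ⟨w, _, hw⟩ := exists_covBy_between hz
    have := h.rk_covBy _ _ hw
    omega

lemma IsVine.isMin_iff_rk (h : IsVine rk) (x : P) : IsMin x ↔ rk x = 1 := by
  constructor
  · exact h.rk_min x
  · intro h1
    by_contra hm
    obtain ⟨z, hz⟩ := not_isMin_iff.1 hm
    obtain ⟨w, _, hw⟩ := exists_covBy_between hz
    have := h.rk_covBy _ _ hw
    have := h.rk_pos w
    omega

lemma IsVine.rk_mono (h : IsVine rk) {x y : P} (hxy : x ≤ y) : rk x ≤ rk y := by
  rcases eq_or_lt_of_le hxy with rfl | hlt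
  · exact le_refl _
  · exact (h.rk_strictMono _ _ hlt).le

lemma IsVine.covers_pair (h : IsVine rk) {v : P} (hv : ¬ IsMin v) :
    ∃ a b : P, a ≠ b ∧ a ⋖ v ∧ b ⋖ v ∧ {x : P | x ⋖ v} = {a, b} := by
  obtain ⟨a, b, hne, hset⟩ := Set.ncard_eq_two.1 (h.covers_two v hv)
  refine ⟨a, b, hne, ?_, ?_, hset⟩
  · have : a ∈ {x : P | x ⋖ v} := by rw [hset]; exact Set.mem_insert _ _
    exact this
  · have : b ∈ {x : P | x ⋖ v} := by rw [hset]; exact Set.mem_insert_of_mem _ rfl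
    exact this

lemma rk_le_vineRank (rk : P → ℕ) (x : P) : rk x ≤ vineRank rk :=
  le_csSup (Set.Finite.bddAbove (Set.toFinite _)) ⟨x, rfl⟩

lemma IsVine.exists_rk_eq (h : IsVine rk) {i : ℕ} (h1 : 1 ≤ i) (hi : i ≤ vineRank rk) :
    ∃ x : P, rk x = i := by
  have desc : ∀ n (x : P), rk x = n → ∀ j, 1 ≤ j → j ≤ n → ∃ y, rk y = j := by
    intro n
    induction n using Nat.strong_induction_on with
    | _ n ih =>
      intro x hx j hj1 hj2
      rcases eq_or_lt_of_le hj2 with he | hlt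
      · exact ⟨x, hx ▸ he.symm ▸ rfl⟩
      · have hxmin : ¬ IsMin x := by
          intro hm
          have := h.rk_min x hm
          omega
        obtain ⟨z, hz⟩ := not_isMin_iff.1 hxmin
        obtain ⟨w, _, hw⟩ := exists_covBy_between hz
        have hrw := h.rk_covBy _ _ hw
        exact ih (n - 1) (by omega) w (by omega) j hj1 (by omega)
  rcases isEmpty_or_nonempty P with hemp | hne
  · exfalso
    have : vineRank rk = 0 := by
      simp [vineRank, Set.range_eq_empty rk]
    omega
  · have hmem : vineRank rk ∈ Set.range rk :=
      Nat.sSup_mem (Set.range_nonempty _) (Set.Finite.bddAbove (Set.toFinite _))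
    obtain ⟨x, hx⟩ := hmem
    exact desc _ x hx i h1 hi

lemma vineRank_eq_rk_top (h : IsVine rk) {t : P} (ht : ∀ x, x ≤ t) :
    vineRank rk = rk t := by
  have : Nonempty P := ⟨t⟩
  refine le_antisymm ?_ (rk_le_vineRank rk t)
  refine csSup_le (Set.range_nonempty _) ?_
  rintro _ ⟨x, rfl⟩
  exact h.rk_mono (ht x)

lemma IsVine.restrict (h : IsVine rk) {L : Set P} (hL : IsLowerSet L) :
    IsVine (fun x : L => rk x.val) := by
  constructor
  · intro x y hxy; exact h.rk_strictMono _ _ (Subtype.coe_lt_coe.2 hxy)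
  · intro x y hxy; exact h.rk_covBy _ _ ((lowerset_covBy_iff hL x y).1 hxy)
  · intro x hx; exact h.rk_min _ ((lowerset_isMin_iff hL x).1 hx)
  · intro v hv
    have hv' : ¬ IsMin (v : P) := fun hm => hv ((lowerset_isMin_iff hL v).2 hm)
    have him : Subtype.val '' {a : L | a ⋖ v} = {a : P | a ⋖ (v : P)} := by
      ext z
      constructor
      · rintro ⟨w, hw, rfl⟩
        exact (lowerset_covBy_iff hL w v).1 hw
      · intro hz
        have hzL : z ∈ L := hL hz.le v.2
        exact ⟨⟨z, hzL⟩, (lowerset_covBy_iff hL _ v).2 hz, rfl⟩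
    have := h.covers_two _ hv'
    rw [← him, Set.ncard_image_of_injective _ Subtype.coe_injective] at this
    exact this
  · intro a b hne hrk v w hav hbv haw hbw
    have hval := h.cover_unique a.val b.val (fun he => hne (Subtype.ext he)) hrk v.val w.val
      ((lowerset_covBy_iff hL a v).1 hav) ((lowerset_covBy_iff hL b v).1 hbv)
      ((lowerset_covBy_iff hL a w).1 haw) ((lowerset_covBy_iff hL b w).1 hbw)
    exact Subtype.ext hval
  · intro i
    refine isAcyclic_comap Subtype.val Subtype.coe_injective ?_ (h.forest i)
    rintro x y ⟨hne, hx, hy, u, hxu, hyu⟩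
    exact ⟨fun he => hne (Subtype.ext he), hx, hy, u.val,
      (lowerset_covBy_iff hL x u).1 hxu, (lowerset_covBy_iff hL y u).1 hyu⟩

lemma Proximity.restrict (h : IsVine rk) (hp : Proximity rk) {L : Set P} (hL : IsLowerSet L) :
    Proximity (fun x : L => rk x.val) := by
  rintro a b hne hrk h2 ⟨v, hav, hbv⟩
  obtain ⟨c, hca, hcb⟩ := hp a.val b.val (fun he => hne (Subtype.ext he)) hrk h2
    ⟨v.val, (lowerset_covBy_iff hL a v).1 hav, (lowerset_covBy_iff hL b v).1 hbv⟩
  have hcL : c ∈ L := hL hca.le a.2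
  exact ⟨⟨c, hcL⟩, (lowerset_covBy_iff hL _ a).2 hca, (lowerset_covBy_iff hL _ b).2 hcb⟩

lemma slice_connected_iff (rk : P → ℕ) (i : ℕ) :
    ((coverGraph rk i).induce {x : P | rk x = i}).Connected ↔
      (∃ x, rk x = i) ∧ ∀ x y, rk x = i → rk y = i → (coverGraph rk i).Reachable x y := by
  constructor
  · intro hc
    obtain ⟨x⟩ := hc.nonempty
    refine ⟨⟨x.val, x.2⟩, fun u v hu hv => ?_⟩
    have hr := hc.preconnected ⟨u, hu⟩ ⟨v, hv⟩
    exact reachable_of_pushforward Subtype.val (fun x y h => h) hr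
  · rintro ⟨⟨x, hx⟩, hreach⟩
    have hnonempty : Nonempty ↥{x : P | rk x = i} := ⟨⟨x, hx⟩⟩
    refine SimpleGraph.Connected.mk ?_
    intro u v
    refine reachable_of_pullback Subtype.val Subtype.coe_injective (fun p q h => h) ?_
      (hreach u.val v.val u.2 v.2)
    rintro p q ⟨hne, hp, hq, w, hpw, hqw⟩
    exact ⟨⟨p, hp⟩, rfl⟩

lemma IsVine.slice_acyclic (h : IsVine rk) (i : ℕ) :
    ((coverGraph rk i).induce {x : P | rk x = i}).IsAcyclic := by
  exact isAcyclic_comap Subtype.val Subtype.coe_injective (fun x y hxy => hxy) (h.forest i)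

lemma coverGraph_restrict_push {L : Set P} (hL : IsLowerSet L) (i : ℕ) {u v : ↥L}
    (huv : (coverGraph (fun x : ↥L => rk x.val) i).Adj u v) :
    (coverGraph rk i).Adj u.val v.val := by
  obtain ⟨hne, hu, hv, w, huw, hvw⟩ := huv
  exact ⟨fun he => hne (Subtype.ext he), hu, hv, w.val,
    (lowerset_covBy_iff hL u w).1 huw, (lowerset_covBy_iff hL v w).1 hvw⟩

lemma reachable_restrict_push {L : Set P} (hL : IsLowerSet L) (i : ℕ) {u v : ↥L}
    (h : (coverGraph (fun x : ↥L => rk x.val) i).Reachable u v) :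
    (coverGraph rk i).Reachable u.val v.val :=
  reachable_of_pushforward Subtype.val (fun _ _ hxy => coverGraph_restrict_push hL i hxy) h

/-- The key counting step: if the `i`-th slice is a tree, there is one fewer node of
rank `i+1` than of rank `i`. -/
lemma IsVine.count_step (h : IsVine rk) {i : ℕ} (h1 : 1 ≤ i)
    (hconn : ((coverGraph rk i).induce {x : P | rk x = i}).Connected) :
    {x : P | rk x = i}.ncard = {x : P | rk x = i + 1}.ncard + 1 := by
  classical
  set Gs := (coverGraph rk i).induce {x : P | rk x = i} with hGs
  have htree : Gs.IsTree := ⟨hconn, h.slice_acyclic i⟩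
  letI : Fintype ↥{x : P | rk x = i} := Fintype.ofFinite _
  letI : Fintype ↥Gs.edgeSet := Fintype.ofFinite _
  have hcount := htree.card_edgeFinset
  -- extract, for every node of rank `i+1`, its pair of covered nodes
  have hpair : ∀ v : ↥{x : P | rk x = i + 1}, ∃ p : P × P, p.1 ≠ p.2 ∧ p.1 ⋖ (v : P) ∧
      p.2 ⋖ (v : P) ∧ {x : P | x ⋖ (v : P)} = {p.1, p.2} := by
    intro v
    have hv : rk (v : P) = i + 1 := v.2
    have hmin : ¬ IsMin (v : P) := by
      rw [h.isMin_iff_rk]; omega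
    obtain ⟨a, b, hne, ha, hb, hset⟩ := h.covers_pair hmin
    exact ⟨(a, b), hne, ha, hb, hset⟩
  choose pr hne hc1 hc2 hset using hpair
  have hrk1 : ∀ v, rk (pr v).1 = i := by
    intro v
    have h1 := h.rk_covBy _ _ (hc1 v)
    have h2 : rk (v : P) = i + 1 := v.2
    omega
  have hrk2 : ∀ v, rk (pr v).2 = i := by
    intro v
    have h1 := h.rk_covBy _ _ (hc2 v)
    have h2 : rk (v : P) = i + 1 := v.2
    omega
  let f : ↥{x : P | rk x = i + 1} → ↥Gs.edgeSet := fun v =>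
    ⟨s(⟨(pr v).1, hrk1 v⟩, ⟨(pr v).2, hrk2 v⟩), by
      rw [SimpleGraph.mem_edgeSet]
      exact ⟨hne v, hrk1 v, hrk2 v, (v : P), hc1 v, hc2 v⟩⟩
  have hbij : Function.Bijective f := by
    constructor
    · intro v w hvw
      have heq : s((pr v).1, (pr v).2) = s((pr w).1, (pr w).2) := by
        have := Subtype.ext_iff.1 hvw
        simpa [f, Sym2.map_pair_eq, Subtype.ext_iff] using congrArg (Sym2.map Subtype.val) this
      rw [Sym2.eq_iff] at heq
      have hcovs : (pr w).1 ⋖ (v : P) ∧ (pr w).2 ⋖ (v : P) := by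
        rcases heq with ⟨e1, e2⟩ | ⟨e1, e2⟩
        · exact ⟨e1 ▸ hc1 v, e2 ▸ hc2 v⟩
        · exact ⟨e2 ▸ hc2 v, e1 ▸ hc1 v⟩
      have := h.cover_unique (pr w).1 (pr w).2 (hne w) (by rw [hrk1 w, hrk2 w])
        (v : P) (w : P) hcovs.1 hcovs.2 (hc1 w) (hc2 w)
      exact Subtype.ext this
    · rintro ⟨e, he⟩
      induction e using Sym2.ind with
      | _ x y =>
        rw [SimpleGraph.mem_edgeSet] at he
        obtain ⟨hnexy, hx, hy, u, hxu, hyu⟩ := he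
        have hu : rk u = i + 1 := by
          have := h.rk_covBy _ _ hxu
          have hx' : rk (x : P) = i := x.2
          omega
        refine ⟨⟨u, hu⟩, ?_⟩
        apply Subtype.ext
        have hxmem : (x : P) ∈ {z : P | z ⋖ u} := hxu
        have hymem : (y : P) ∈ {z : P | z ⋖ u} := hyu
        rw [hset ⟨u, hu⟩] at hxmem hymem
        have hxyne : (x : P) ≠ (y : P) := hnexy
        show s(⟨(pr ⟨u, hu⟩).1, _⟩, ⟨(pr ⟨u, hu⟩).2, _⟩) = s(x, y)
        rcases hxmem with hx1 | hx1 <;> rcases hymem with hy1 | hy1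
        · exact absurd (hx1.trans hy1.symm) hxyne
        · rw [Sym2.eq_iff]
          exact Or.inl ⟨Subtype.ext hx1.symm, Subtype.ext hy1.symm⟩
        · rw [Sym2.eq_iff]
          exact Or.inr ⟨Subtype.ext hy1.symm, Subtype.ext hx1.symm⟩
        · exact absurd (hx1.trans hy1.symm) hxyne
  have hcards : Nat.card ↥{x : P | rk x = i + 1} = Nat.card ↥Gs.edgeSet :=
    Nat.card_eq_of_bijective f hbij
  have e1 : {x : P | rk x = i}.ncard = Fintype.card ↥{x : P | rk x = i} := by
    rw [← Nat.card_coe_set_eq, Nat.card_eq_fintype_card]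
  have e2 : {x : P | rk x = i + 1}.ncard = Gs.edgeFinset.card := by
    rw [← Nat.card_coe_set_eq, hcards, Nat.card_eq_fintype_card, SimpleGraph.edgeFinset_card]
  omega

/-- A vine with proximity whose slices are all connected is an R-vine. -/
lemma IsVine.rvine_of_connected (h : IsVine rk) (hp : Proximity rk)
    (hconn : ∀ i : ℕ, 1 ≤ i → i ≤ vineRank rk →
      ((coverGraph rk i).induce {x : P | rk x = i}).Connected) :
    IsRVine rk := by
  refine ⟨h, ?_, hconn, hp⟩
  rcases isEmpty_or_nonempty P with hemp | hne
  · have h0 : vineRank rk = 0 := by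
      simp [vineRank, Set.range_eq_empty rk]
    have h1 : {x : P | IsMin x} = ∅ := Set.eq_empty_of_isEmpty _
    rw [h0, h1, Set.ncard_empty]
  · obtain ⟨x0⟩ := hne
    have hR1 : 1 ≤ vineRank rk := le_trans (h.rk_pos x0) (rk_le_vineRank rk x0)
    have hempty : {x : P | rk x = vineRank rk + 1} = ∅ := by
      ext z
      simp only [Set.mem_setOf_eq, Set.mem_empty_iff_false, iff_false]
      intro hz
      have := rk_le_vineRank rk z
      omega
    have key : ∀ d ℓ, 1 ≤ ℓ → ℓ + d = vineRank rk → {x : P | rk x = ℓ}.ncard = d + 1 := by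
      intro d
      induction d with
      | zero =>
        intro ℓ h1 hℓ
        have hstep := h.count_step h1 (hconn ℓ h1 (by omega))
        have h0 : {x : P | rk x = ℓ + 1}.ncard = 0 := by
          rw [show ℓ + 1 = vineRank rk + 1 by omega, hempty, Set.ncard_empty]
        omega
      | succ d ih =>
        intro ℓ h1 hℓ
        have hstep := h.count_step h1 (hconn ℓ h1 (by omega))
        have := ih (ℓ + 1) (by omega) (by omega)
        omega
    have hmins : {x : P | IsMin x} = {x : P | rk x = 1} := by
      ext z
      simp [h.isMin_iff_rk]
    have hfin := key (vineRank rk - 1) 1 le_rfl (by omega)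
    rw [hmins, hfin]
    omega

end VineLemmas

/-! ### A vine with proximity and a top element is an R-vine -/

theorem rvine_of_top : ∀ (n : ℕ) (P : Type) (_ : PartialOrder P) (_ : Finite P)
    (rk : P → ℕ) (t : P), Nat.card P ≤ n → IsVine rk → Proximity rk →
    (∀ x, x ≤ t) → IsRVine rk := by
  intro n
  induction n with
  | zero =>
    intro P _ _ rk t hcard hV hp ht
    have : Nonempty P := ⟨t⟩
    have : 0 < Nat.card P := Nat.card_pos
    omega
  | succ n ih =>
    intro P _ _ rk t hcard hV hp ht
    have hRt : vineRank rk = rk t := vineRank_eq_rk_top hV ht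
    by_cases hmin : IsMin t
    · -- the singleton case
      have hall : ∀ x : P, x = t := fun x => le_antisymm (ht x) (hmin (ht x))
      have hrt : rk t = 1 := hV.rk_min t hmin
      refine hV.rvine_of_connected hp ?_
      intro i h1i hiR
      rw [hRt, hrt] at hiR
      have hi1 : i = 1 := by omega
      subst hi1
      rw [slice_connected_iff]
      refine ⟨⟨t, hrt⟩, fun x y hx hy => ?_⟩
      rw [hall x, hall y]
    · obtain ⟨a, b, hab, hat, hbt, hcovset⟩ := hV.covers_pair hmin
      have hrta : rk t = rk a + 1 := hV.rk_covBy _ _ hat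
      have hrtb : rk t = rk b + 1 := hV.rk_covBy _ _ hbt
      -- every proper element is below a or below b
      have hbelow : ∀ x : P, rk x < rk t → x ≤ a ∨ x ≤ b := by
        intro x hx
        have hxt : x < t := lt_of_le_of_ne (ht x) (fun he => by rw [he] at hx; omega)
        obtain ⟨z, hxz, hzt⟩ := exists_covBy_between hxt
        have hzmem : z ∈ {w : P | w ⋖ t} := hzt
        rw [hcovset] at hzmem
        rcases hzmem with rfl | rfl
        · exact Or.inl hxz
        · exact Or.inr hxz
      -- principal ideals of proper elements are R-vines (by induction)
      have hsub : ∀ s : P, s < t → IsRVine (P := ↥{x : P | x ≤ s}) (fun x => rk x.val) := by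
        intro s hst
        have hLs : IsLowerSet {x : P | x ≤ s} := fun u v huv hu => le_trans huv hu
        have htS : t ∉ {x : P | x ≤ s} := fun hts => absurd (lt_of_lt_of_le hst hts) (lt_irrefl s)
        have hcard' : Nat.card ↥{x : P | x ≤ s} ≤ n := by
          have h1 : {x : P | x ≤ s} ⊂ Set.univ :=
            Set.ssubset_univ_iff.2 (fun he => htS (he.symm ▸ Set.mem_univ t))
          have h2 := Set.ncard_lt_ncard h1 Set.finite_univ
          rw [Set.ncard_univ] at h2
          rw [Nat.card_coe_set_eq]
          omega
        exact ih _ _ _ (fun x : ↥{x : P | x ≤ s} => rk x.val) ⟨s, le_refl s⟩ hcard'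
          (hV.restrict hLs) (Proximity.restrict hV hp hLs) (fun x => x.2)
      have hLa : IsLowerSet {x : P | x ≤ a} := fun u v huv hu => le_trans huv hu
      have hLb : IsLowerSet {x : P | x ≤ b} := fun u v huv hu => le_trans huv hu
      have hA := hsub a hat.lt
      have hB := hsub b hbt.lt
      have hvA : vineRank (fun x : ↥{x : P | x ≤ a} => rk x.val) = rk a :=
        vineRank_eq_rk_top (hV.restrict hLa) (t := ⟨a, le_refl a⟩) (fun x => x.2)
      have hvB : vineRank (fun x : ↥{x : P | x ≤ b} => rk x.val) = rk b :=
        vineRank_eq_rk_top (hV.restrict hLb) (t := ⟨b, le_refl b⟩) (fun x => x.2)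
      -- reachability at each level
      have hreach : ∀ i, 1 ≤ i → i ≤ rk t →
          ∀ x y : P, rk x = i → rk y = i → (coverGraph rk i).Reachable x y := by
        intro i h1i hiR x y hx hy
        rcases Nat.lt_or_ge i (rk t) with hir | hir
        swap
        · -- i = rk t : only t itself
          have hxeq : x = t := by
            rcases eq_or_lt_of_le (ht x) with he | hlt
            · exact he
            · have := hV.rk_strictMono _ _ hlt; omega
          have hyeq : y = t := by
            rcases eq_or_lt_of_le (ht y) with he | hlt
            · exact he
            · have := hV.rk_strictMono _ _ hlt; omega
          rw [hxeq, hyeq]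
        rcases Nat.lt_or_ge i (rk a) with hira | hira
        · -- i ≤ rk a - 1 = rk t - 2 : go through the common child c
          have h2a : 2 ≤ rk a := by omega
          obtain ⟨c, hca, hcb⟩ := hp a b hab (by omega) h2a ⟨t, hat, hbt⟩
          have hLc : IsLowerSet {x : P | x ≤ c} := fun u v huv hu => le_trans huv hu
          have hC := hsub c (hca.lt.trans hat.lt)
          have hvC : vineRank (fun x : ↥{x : P | x ≤ c} => rk x.val) = rk c :=
            vineRank_eq_rk_top (hV.restrict hLc) (t := ⟨c, le_refl c⟩) (fun x => x.2)
          have hrac : rk a = rk c + 1 := hV.rk_covBy _ _ hca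
          have hconnC := hC.tree i h1i (by rw [hvC]; omega)
          obtain ⟨zz⟩ := hconnC.nonempty
          obtain ⟨z, hzc, hzrk⟩ : ∃ z : P, z ≤ c ∧ rk z = i := ⟨zz.val.val, zz.val.2, zz.2⟩
          have hstep : ∀ w : P, rk w = i → (coverGraph rk i).Reachable w z := by
            intro w hw
            rcases hbelow w (by omega) with hwa | hwb
            · have hconnA := hA.tree i h1i (by rw [hvA]; omega)
              rw [slice_connected_iff] at hconnA
              have hr := hconnA.2 ⟨w, hwa⟩ ⟨z, le_trans hzc hca.le⟩ hw hzrk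
              exact reachable_restrict_push hLa i hr
            · have hconnB := hB.tree i h1i (by rw [hvB]; omega)
              rw [slice_connected_iff] at hconnB
              have hr := hconnB.2 ⟨w, hwb⟩ ⟨z, le_trans hzc hcb.le⟩ hw hzrk
              exact reachable_restrict_push hLb i hr
          exact (hstep x hx).trans (hstep y hy).symm
        · -- i = rk a = rk t - 1 : the vertices are exactly a and b
          have hmem : ∀ w : P, rk w = i → w = a ∨ w = b := by
            intro w hw
            rcases hbelow w (by omega) with hwa | hwb
            · left
              rcases eq_or_lt_of_le hwa with he | hlt
              · exact he
              · have := hV.rk_strictMono _ _ hlt; omega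
            · right
              rcases eq_or_lt_of_le hwb with he | hlt
              · exact he
              · have := hV.rk_strictMono _ _ hlt; omega
          have hadj : (coverGraph rk i).Adj a b := ⟨hab, by omega, by omega, t, hat, hbt⟩
          rcases hmem x hx with rfl | rfl <;> rcases hmem y hy with rfl | rfl
          · rfl
          · exact hadj.reachable
          · exact hadj.symm.reachable
          · rfl
      refine hV.rvine_of_connected hp ?_
      intro i h1i hiR
      rw [slice_connected_iff]
      rw [hRt] at hiR
      exact ⟨hV.exists_rk_eq h1i (by rw [hRt]; omega), hreach i h1i hiR⟩

/-! ### The extension step -/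

section VExt

/-- `VExt P a b` is `P` with one new top-ish node added, covering `a` and `b`. -/
def VExt (P : Type) (_ _ : P) : Type := Option P

variable {P : Type} [PartialOrder P] [Finite P] (a b : P)

protected def VExt.le : Option P → Option P → Prop
  | some x, some y => x ≤ y
  | some x, none => x ≤ a ∨ x ≤ b
  | none, some _ => False
  | none, none => True

instance : PartialOrder (VExt P a b) where
  le := VExt.le a b
  le_refl x := by
    cases x with
    | none => exact trivial
    | some x => exact le_refl x
  le_trans x y z hxy hyz := by
    cases x with
    | none =>
      cases y with
      | none =>
        cases z with
        | none => exact trivial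
        | some z => exact hyz.elim
      | some y => exact hxy.elim
    | some x =>
      cases y with
      | none =>
        cases z with
        | none => exact hxy
        | some z => exact hyz.elim
      | some y =>
        cases z with
        | none =>
          rcases hyz with h | h
          · exact Or.inl (le_trans hxy h)
          · exact Or.inr (le_trans hxy h)
        | some z => exact le_trans hxy hyz
  le_antisymm x y hxy hyx := by
    cases x with
    | none =>
      cases y with
      | none => rfl
      | some y => exact hxy.elim
    | some x =>
      cases y with
      | none => exact hyx.elim
      | some y => exact congrArg some (le_antisymm hxy hyx)

instance : Finite (VExt P a b) :=
  Finite.of_equiv _ (Equiv.optionEquivSumPUnit.{0,0} P).symm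

def VExt.up (x : P) : VExt P a b := some x

def VExt.top : VExt P a b := none

def VExt.rkE (rk : P → ℕ) (i : ℕ) : VExt P a b → ℕ := fun x => Option.elim x (i + 1) rk

lemma VExt.up_or_top (z : VExt P a b) :
    (∃ x : P, z = VExt.up a b x) ∨ z = VExt.top a b := by
  revert z
  show ∀ z : Option P, _
  intro z
  cases z with
  | some x => exact Or.inl ⟨x, rfl⟩
  | none => exact Or.inr rfl

lemma VExt.up_injective : Function.Injective (VExt.up a b) :=
  Option.some_injective P

@[simp] lemma VExt.up_le_up {x y : P} : VExt.up a b x ≤ VExt.up a b y ↔ x ≤ y := Iff.rfl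

@[simp] lemma VExt.up_le_top {x : P} : VExt.up a b x ≤ VExt.top a b ↔ x ≤ a ∨ x ≤ b := Iff.rfl

@[simp] lemma VExt.not_top_le_up {x : P} : ¬ (VExt.top a b ≤ VExt.up a b x) := fun h => h

@[simp] lemma VExt.up_lt_up {x y : P} : VExt.up a b x < VExt.up a b y ↔ x < y := by
  rw [lt_iff_le_not_ge, lt_iff_le_not_ge]
  exact Iff.rfl

@[simp] lemma VExt.up_lt_top {x : P} : VExt.up a b x < VExt.top a b ↔ x ≤ a ∨ x ≤ b := by
  rw [lt_iff_le_not_ge]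
  constructor
  · exact fun h => h.1
  · exact fun h => ⟨h, VExt.not_top_le_up a b⟩

@[simp] lemma VExt.not_top_lt {z : VExt P a b} : ¬ (VExt.top a b < z) := by
  rcases VExt.up_or_top a b z with ⟨x, rfl⟩ | rfl
  · exact fun h => VExt.not_top_le_up a b h.le
  · exact lt_irrefl _

@[simp] lemma VExt.rkE_up (rk : P → ℕ) (i : ℕ) (x : P) :
    VExt.rkE a b rk i (VExt.up a b x) = rk x := rfl

@[simp] lemma VExt.rkE_top (rk : P → ℕ) (i : ℕ) :
    VExt.rkE a b rk i (VExt.top a b) = i + 1 := rfl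

lemma VExt.covBy_up_up {x y : P} : VExt.up a b x ⋖ VExt.up a b y ↔ x ⋖ y := by
  constructor
  · rintro ⟨h1, h2⟩
    refine ⟨(VExt.up_lt_up a b).1 h1, fun c hc1 hc2 => ?_⟩
    exact h2 ((VExt.up_lt_up a b).2 hc1) ((VExt.up_lt_up a b).2 hc2)
  · rintro ⟨h1, h2⟩
    refine ⟨(VExt.up_lt_up a b).2 h1, fun z hz1 hz2 => ?_⟩
    rcases VExt.up_or_top a b z with ⟨c, rfl⟩ | rfl
    · exact h2 ((VExt.up_lt_up a b).1 hz1) ((VExt.up_lt_up a b).1 hz2)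
    · exact VExt.not_top_lt a b hz2

lemma VExt.isMin_up {x : P} : IsMin (VExt.up a b x) ↔ IsMin x := by
  constructor
  · intro h z hz
    exact h (show VExt.up a b z ≤ VExt.up a b x from hz)
  · intro h z hz
    rcases VExt.up_or_top a b z with ⟨u, rfl⟩ | rfl
    · exact h (show u ≤ x from hz)
    · exact absurd hz (VExt.not_top_le_up a b)

lemma VExt.not_isMin_top : ¬ IsMin (VExt.top a b) := by
  intro h
  exact VExt.not_top_le_up a b (h (show VExt.up a b a ≤ VExt.top a b from Or.inl (le_refl a)))

end VExt

section VExtMain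

variable {P : Type} [PartialOrder P] [Finite P] {rk : P → ℕ} {i : ℕ} {a b : P}

/-- Bundle of assumptions for the extension step. -/
structure ExtData (rk : P → ℕ) (i : ℕ) (a b : P) : Prop where
  hV : IsVine rk
  hra : rk a = i
  hrb : rk b = i
  h1i : 1 ≤ i
  hnr : ¬ (coverGraph rk i).Reachable a b
  hc : 2 ≤ i → ∃ c : P, c ⋖ a ∧ c ⋖ b

namespace ExtData

variable (D : ExtData rk i a b)

include D

lemma hab : a ≠ b := fun he => D.hnr (he ▸ Reachable.refl a)

lemma hnocov : ∀ v : P, ¬ (a ⋖ v ∧ b ⋖ v) := fun v ⟨h1, h2⟩ =>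
  D.hnr (SimpleGraph.Adj.reachable ⟨D.hab, D.hra, D.hrb, v, h1, h2⟩)

lemma covBy_up_top {x : P} : VExt.up a b x ⋖ VExt.top a b ↔ x = a ∨ x = b := by
  constructor
  · rintro ⟨h1, h2⟩
    rcases (VExt.up_lt_top a b).1 h1 with hxa | hxb
    · left
      rcases eq_or_lt_of_le hxa with he | hlt
      · exact he
      · exact absurd ((VExt.up_lt_top a b).2 (Or.inl (le_refl a)))
          (h2 ((VExt.up_lt_up a b).2 hlt))
    · right
      rcases eq_or_lt_of_le hxb with he | hlt
      · exact he
      · exact absurd ((VExt.up_lt_top a b).2 (Or.inr (le_refl b)))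
          (h2 ((VExt.up_lt_up a b).2 hlt))
  · intro hx
    have hkey : ∀ x : P, x = a ∨ x = b → VExt.up a b x ⋖ VExt.top a b := by
      intro x hx
      have hle : x ≤ a ∨ x ≤ b := by
        rcases hx with rfl | rfl
        · exact Or.inl (le_refl x)
        · exact Or.inr (le_refl x)
      refine ⟨(VExt.up_lt_top a b).2 hle, fun z hz1 hz2 => ?_⟩
      rcases VExt.up_or_top a b z with ⟨u, rfl⟩ | rfl
      · have hxu : x < u := (VExt.up_lt_up a b).1 hz1
        rcases (VExt.up_lt_top a b).1 hz2 with hua | hub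
        · rcases hx with rfl | rfl
          · exact absurd (lt_of_lt_of_le hxu hua) (lt_irrefl x)
          · have h1 := D.hV.rk_strictMono _ _ hxu
            have h2 := D.hV.rk_mono hua
            rw [D.hra, D.hrb] at *
            omega
        · rcases hx with rfl | rfl
          · have h1 := D.hV.rk_strictMono _ _ hxu
            have h2 := D.hV.rk_mono hub
            rw [D.hra, D.hrb] at *
            omega
          · exact absurd (lt_of_lt_of_le hxu hub) (lt_irrefl x)
      · exact VExt.not_top_lt a b hz2
    exact hkey x hx

lemma covers_top_set :
    {z : VExt P a b | z ⋖ VExt.top a b} = {VExt.up a b a, VExt.up a b b} := by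
  ext z
  rcases VExt.up_or_top a b z with ⟨x, rfl⟩ | rfl
  · simp only [Set.mem_setOf_eq, Set.mem_insert_iff, Set.mem_singleton_iff]
    rw [D.covBy_up_top]
    constructor
    · rintro (rfl | rfl)
      · exact Or.inl rfl
      · exact Or.inr rfl
    · rintro (he | he)
      · exact Or.inl (VExt.up_injective a b he)
      · exact Or.inr (VExt.up_injective a b he)
  · simp only [Set.mem_setOf_eq, Set.mem_insert_iff, Set.mem_singleton_iff]
    constructor
    · intro hcov
      exact absurd hcov.lt (VExt.not_top_lt a b)
    · rintro (he | he) <;> exact absurd he.symm (fun h => Option.some_ne_none _ h)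

lemma adj_to_up {j : ℕ} {u v : VExt P a b}
    (h : (coverGraph (VExt.rkE a b rk i) j).Adj u v) : ∃ x : P, u = VExt.up a b x := by
  rcases VExt.up_or_top a b u with ⟨x, rfl⟩ | rfl
  · exact ⟨x, rfl⟩
  · obtain ⟨hne, hu, hv, w, h1, h2⟩ := h
    exact absurd h1.lt (VExt.not_top_lt a b)

lemma adj_up_up {j : ℕ} {x y : P} :
    (coverGraph (VExt.rkE a b rk i) j).Adj (VExt.up a b x) (VExt.up a b y) ↔
      (coverGraph rk j).Adj x y ∨ (j = i ∧ ((x = a ∧ y = b) ∨ (x = b ∧ y = a))) := by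
  constructor
  · rintro ⟨hne, hx, hy, v, hxv, hyv⟩
    have hx' : rk x = j := hx
    have hy' : rk y = j := hy
    have hnexy : x ≠ y := fun he => hne (congrArg _ he)
    rcases VExt.up_or_top a b v with ⟨w, rfl⟩ | rfl
    · exact Or.inl ⟨hnexy, hx', hy', w, (VExt.covBy_up_up a b).1 hxv, (VExt.covBy_up_up a b).1 hyv⟩
    · right
      have hxab := D.covBy_up_top.1 hxv
      have hyab := D.covBy_up_top.1 hyv
      rcases hxab with hxa | hxa <;> rcases hyab with hya | hya
      · exact absurd (hxa.trans hya.symm) hnexy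
      · exact ⟨by rw [← hx', hxa]; exact D.hra, Or.inl ⟨hxa, hya⟩⟩
      · exact ⟨by rw [← hx', hxa]; exact D.hrb, Or.inr ⟨hxa, hya⟩⟩
      · exact absurd (hxa.trans hya.symm) hnexy
  · rintro (⟨hne, hx, hy, v, hxv, hyv⟩ | ⟨rfl, hpair⟩)
    · exact ⟨fun he => hne (VExt.up_injective a b he), hx, hy, VExt.up a b v,
        (VExt.covBy_up_up a b).2 hxv, (VExt.covBy_up_up a b).2 hyv⟩
    · rcases hpair with ⟨hxa, hyb⟩ | ⟨hxb, hya⟩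
      · rw [hxa, hyb]
        exact ⟨fun he => D.hab (VExt.up_injective a b he), D.hra, D.hrb, VExt.top a b,
          D.covBy_up_top.2 (Or.inl rfl), D.covBy_up_top.2 (Or.inr rfl)⟩
      · rw [hxb, hya]
        exact ⟨fun he => D.hab.symm (VExt.up_injective a b he), D.hrb, D.hra, VExt.top a b,
          D.covBy_up_top.2 (Or.inr rfl), D.covBy_up_top.2 (Or.inl rfl)⟩

lemma adj_up_up_ne {j : ℕ} (hj : j ≠ i) {x y : P} :
    (coverGraph (VExt.rkE a b rk i) j).Adj (VExt.up a b x) (VExt.up a b y) ↔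
      (coverGraph rk j).Adj x y := by
  rw [D.adj_up_up]
  constructor
  · rintro (h | ⟨rfl, _⟩)
    · exact h
    · exact absurd rfl hj
  · exact Or.inl

lemma adj_up_up_i {x y : P} :
    (coverGraph (VExt.rkE a b rk i) i).Adj (VExt.up a b x) (VExt.up a b y) ↔
      ((coverGraph rk i) ⊔ SimpleGraph.fromEdgeSet {s(a, b)}).Adj x y := by
  rw [D.adj_up_up, SimpleGraph.sup_adj, SimpleGraph.fromEdgeSet_adj]
  constructor
  · rintro (h | ⟨-, hpair⟩)
    · exact Or.inl h
    · rcases hpair with ⟨h1, h2⟩ | ⟨h1, h2⟩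
      · exact Or.inr ⟨by rw [h1, h2]; exact rfl, by rw [h1, h2]; exact D.hab⟩
      · exact Or.inr ⟨by rw [h1, h2]; exact Sym2.eq_swap, by rw [h1, h2]; exact D.hab.symm⟩
  · rintro (h | ⟨hs, hne⟩)
    · exact Or.inl h
    · refine Or.inr ⟨rfl, ?_⟩
      have := Sym2.eq_iff.1 (by simpa using hs)
      rcases this with ⟨h1, h2⟩ | ⟨h1, h2⟩
      · exact Or.inl ⟨h1, h2⟩
      · exact Or.inr ⟨h1, h2⟩

lemma reach_up_ne {j : ℕ} (hj : j ≠ i) {x y : P} :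
    (coverGraph (VExt.rkE a b rk i) j).Reachable (VExt.up a b x) (VExt.up a b y) ↔
      (coverGraph rk j).Reachable x y := by
  constructor
  · exact reachable_of_pullback (VExt.up a b) (VExt.up_injective a b)
      (fun p q h => (D.adj_up_up_ne hj).1 h) (fun u w h => D.adj_to_up h)
  · exact reachable_of_pushforward (VExt.up a b) (fun p q h => (D.adj_up_up_ne hj).2 h)

lemma reach_up_i {x y : P} :
    (coverGraph (VExt.rkE a b rk i) i).Reachable (VExt.up a b x) (VExt.up a b y) ↔
      ((coverGraph rk i) ⊔ SimpleGraph.fromEdgeSet {s(a, b)}).Reachable x y := by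
  constructor
  · exact reachable_of_pullback (VExt.up a b) (VExt.up_injective a b)
      (fun p q h => D.adj_up_up_i.1 h) (fun u w h => D.adj_to_up h)
  · exact reachable_of_pushforward (VExt.up a b) (fun p q h => D.adj_up_up_i.2 h)

lemma isVine_ext : IsVine (VExt.rkE a b rk i) := by
  constructor
  · intro x y hxy
    rcases VExt.up_or_top a b x with ⟨u, rfl⟩ | rfl
    · rcases VExt.up_or_top a b y with ⟨v, rfl⟩ | rfl
      · exact D.hV.rk_strictMono _ _ ((VExt.up_lt_up a b).1 hxy)
      · rcases (VExt.up_lt_top a b).1 hxy with h | h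
        · have := D.hV.rk_mono h
          show rk u < i + 1
          rw [D.hra] at this
          omega
        · have := D.hV.rk_mono h
          show rk u < i + 1
          rw [D.hrb] at this
          omega
    · exact absurd hxy (VExt.not_top_lt a b)
  · intro x y hxy
    rcases VExt.up_or_top a b x with ⟨u, rfl⟩ | rfl
    · rcases VExt.up_or_top a b y with ⟨v, rfl⟩ | rfl
      · exact D.hV.rk_covBy _ _ ((VExt.covBy_up_up a b).1 hxy)
      · rcases D.covBy_up_top.1 hxy with hua | hua
        · show i + 1 = rk u + 1
          rw [hua, D.hra]
        · show i + 1 = rk u + 1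
          rw [hua, D.hrb]
    · exact absurd hxy.lt (VExt.not_top_lt a b)
  · intro x hx
    rcases VExt.up_or_top a b x with ⟨u, rfl⟩ | rfl
    · exact D.hV.rk_min u ((VExt.isMin_up a b).1 hx)
    · exact absurd hx (VExt.not_isMin_top a b)
  · intro v hv
    rcases VExt.up_or_top a b v with ⟨u, rfl⟩ | rfl
    · have hu : ¬ IsMin u := fun h => hv ((VExt.isMin_up a b).2 h)
      have him : {z : VExt P a b | z ⋖ VExt.up a b u} = VExt.up a b '' {x : P | x ⋖ u} := by
        ext z
        rcases VExt.up_or_top a b z with ⟨w, rfl⟩ | rfl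
        · simp only [Set.mem_setOf_eq, Set.mem_image]
          constructor
          · intro h
            exact ⟨w, (VExt.covBy_up_up a b).1 h, rfl⟩
          · rintro ⟨w', hw', he⟩
            obtain rfl := VExt.up_injective a b he
            exact (VExt.covBy_up_up a b).2 hw'
        · simp only [Set.mem_setOf_eq, Set.mem_image]
          constructor
          · intro h
            exact absurd h.lt (VExt.not_top_lt a b)
          · rintro ⟨w', _, he⟩
            exact absurd he.symm (fun h => Option.some_ne_none _ h.symm)
      rw [him, Set.ncard_image_of_injective _ (VExt.up_injective a b)]
      exact D.hV.covers_two u hu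
    · rw [D.covers_top_set]
      exact Set.ncard_pair (fun he => D.hab (VExt.up_injective a b he))
  · intro x y hne hrk v w hxv hyv hxw hyw
    rcases VExt.up_or_top a b x with ⟨p, rfl⟩ | rfl
    swap
    · exact absurd hxv.lt (VExt.not_top_lt a b)
    rcases VExt.up_or_top a b y with ⟨q, rfl⟩ | rfl
    swap
    · exact absurd hyv.lt (VExt.not_top_lt a b)
    have hpq : p ≠ q := fun he => hne (congrArg _ he)
    have hrk' : rk p = rk q := hrk
    rcases VExt.up_or_top a b v with ⟨v', rfl⟩ | rfl <;>
      rcases VExt.up_or_top a b w with ⟨w', rfl⟩ | rfl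
    · exact congrArg _ (D.hV.cover_unique p q hpq hrk' v' w'
        ((VExt.covBy_up_up a b).1 hxv) ((VExt.covBy_up_up a b).1 hyv)
        ((VExt.covBy_up_up a b).1 hxw) ((VExt.covBy_up_up a b).1 hyw))
    · -- w = top : {p, q} = {a, b} and they have a common cover v'
      exfalso
      have hx' : p ⋖ v' := (VExt.covBy_up_up a b).1 hxv
      have hy' : q ⋖ v' := (VExt.covBy_up_up a b).1 hyv
      rcases D.covBy_up_top.1 hxw with hpa | hpa <;> rcases D.covBy_up_top.1 hyw with hqa | hqa
      · exact hpq (hpa.trans hqa.symm)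
      · exact D.hnocov v' ⟨hpa ▸ hx', hqa ▸ hy'⟩
      · exact D.hnocov v' ⟨hqa ▸ hy', hpa ▸ hx'⟩
      · exact hpq (hpa.trans hqa.symm)
    · exfalso
      have hx' : p ⋖ w' := (VExt.covBy_up_up a b).1 hxw
      have hy' : q ⋖ w' := (VExt.covBy_up_up a b).1 hyw
      rcases D.covBy_up_top.1 hxv with hpa | hpa <;> rcases D.covBy_up_top.1 hyv with hqa | hqa
      · exact hpq (hpa.trans hqa.symm)
      · exact D.hnocov w' ⟨hpa ▸ hx', hqa ▸ hy'⟩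
      · exact D.hnocov w' ⟨hqa ▸ hy', hpa ▸ hx'⟩
      · exact hpq (hpa.trans hqa.symm)
    · rfl
  · intro j
    by_cases hj : j = i
    · subst hj
      refine isAcyclic_of_pullback (VExt.up a b) (VExt.up_injective a b)
        (fun x y => D.adj_up_up_i) (fun u w h => D.adj_to_up h) ?_
      exact isAcyclic_sup_edge (D.hV.forest j) D.hnr
    · refine isAcyclic_of_pullback (VExt.up a b) (VExt.up_injective a b)
        (fun x y => D.adj_up_up_ne hj) (fun u w h => D.adj_to_up h) ?_
      exact D.hV.forest j

lemma proximity_ext (hp : Proximity rk) : Proximity (VExt.rkE a b rk i) := by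
  intro x y hne hrk h2 ⟨v, hxv, hyv⟩
  rcases VExt.up_or_top a b x with ⟨p, rfl⟩ | rfl
  swap
  · exact absurd hxv.lt (VExt.not_top_lt a b)
  rcases VExt.up_or_top a b y with ⟨q, rfl⟩ | rfl
  swap
  · exact absurd hyv.lt (VExt.not_top_lt a b)
  have hpq : p ≠ q := fun he => hne (congrArg _ he)
  rcases VExt.up_or_top a b v with ⟨v', rfl⟩ | rfl
  · obtain ⟨c, hc1, hc2⟩ := hp p q hpq hrk h2
      ⟨v', (VExt.covBy_up_up a b).1 hxv, (VExt.covBy_up_up a b).1 hyv⟩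
    exact ⟨VExt.up a b c, (VExt.covBy_up_up a b).2 hc1, (VExt.covBy_up_up a b).2 hc2⟩
  · have h2' : 2 ≤ rk p := h2
    rcases D.covBy_up_top.1 hxv with hpa | hpa <;> rcases D.covBy_up_top.1 hyv with hqa | hqa
    · exact absurd (hpa.trans hqa.symm) hpq
    · obtain ⟨c, hc1, hc2⟩ := D.hc (by rw [hpa, D.hra] at h2'; omega)
      refine ⟨VExt.up a b c, (VExt.covBy_up_up a b).2 ?_, (VExt.covBy_up_up a b).2 ?_⟩
      · rw [hpa]; exact hc1
      · rw [hqa]; exact hc2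
    · obtain ⟨c, hc1, hc2⟩ := D.hc (by rw [hpa, D.hrb] at h2'; omega)
      refine ⟨VExt.up a b c, (VExt.covBy_up_up a b).2 ?_, (VExt.covBy_up_up a b).2 ?_⟩
      · rw [hpa]; exact hc2
      · rw [hqa]; exact hc1
    · exact absurd (hpa.trans hqa.symm) hpq

lemma mins_eq : {z : VExt P a b | IsMin z} = VExt.up a b '' {x : P | IsMin x} := by
  ext z
  rcases VExt.up_or_top a b z with ⟨x, rfl⟩ | rfl
  · simp only [Set.mem_setOf_eq, Set.mem_image]
    constructor
    · intro h
      exact ⟨x, (VExt.isMin_up a b).1 h, rfl⟩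
    · rintro ⟨x', hx', he⟩
      obtain rfl := VExt.up_injective a b he
      exact (VExt.isMin_up a b).2 hx'
  · simp only [Set.mem_setOf_eq, Set.mem_image]
    constructor
    · intro h
      exact absurd h (VExt.not_isMin_top a b)
    · rintro ⟨x', _, he⟩
      exact absurd he.symm (fun h => Option.some_ne_none _ h.symm)

/-- The order embedding of `P` into its extension. -/
def upOE : P ↪o VExt P a b :=
  ⟨⟨VExt.up a b, VExt.up_injective a b⟩, Iff.rfl⟩

lemma range_upOE_isLowerSet : IsLowerSet (Set.range (VExt.up a b)) := by
  rintro u v hvu ⟨x, rfl⟩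
  rcases VExt.up_or_top a b v with ⟨y, rfl⟩ | rfl
  · exact ⟨y, rfl⟩
  · exact absurd hvu (VExt.not_top_le_up a b)

end ExtData

end VExtMain

/-! ### Finding an unreachable pair with a common child -/

lemma exists_adjacent_unreachable {P : Type} [PartialOrder P] [Finite P] {rk : P → ℕ}
    (hV : IsVine rk) {j : ℕ} (h1j : 1 ≤ j)
    (hgood : ∀ x y : P, rk x = j → rk y = j → (coverGraph rk j).Reachable x y)
    {x y : P} (hx : rk x = j + 1) (hy : rk y = j + 1)
    (hnr : ¬ (coverGraph rk (j + 1)).Reachable x y) :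
    ∃ a b : P, rk a = j + 1 ∧ rk b = j + 1 ∧ ¬ (coverGraph rk (j + 1)).Reachable a b ∧
      ∃ c : P, c ⋖ a ∧ c ⋖ b := by
  by_contra hcon
  push_neg at hcon
  have H : ∀ a b : P, rk a = j + 1 → rk b = j + 1 → (∃ c : P, c ⋖ a ∧ c ⋖ b) →
      (coverGraph rk (j + 1)).Reachable a b := by
    intro a b ha hb hcc
    by_contra hr
    obtain ⟨c, hc1, hc2⟩ := hcc
    exact (hcon a b ha hb hr c hc1) hc2
  have W : ∀ (u v : P), (coverGraph rk j).Walk u v → ∀ p q : P, rk p = j + 1 → rk q = j + 1 →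
      u ⋖ p → v ⋖ q → (coverGraph rk (j + 1)).Reachable p q := by
    intro u v w
    induction w with
    | nil =>
      rename_i u
      intro p q hp hq hup huq
      exact H p q hp hq ⟨u, hup, huq⟩
    | cons hadj w ih =>
      rename_i u u' v
      intro p q hp hq hup huq
      obtain ⟨hne, hu, hu', z, huz, hu'z⟩ := hadj
      have hz : rk z = j + 1 := by
        have h1 := hV.rk_covBy _ _ huz
        have hu2 : rk u = j := hu
        omega
      exact (H p z hp hz ⟨u, hup, huz⟩).trans (ih z q hz hq hu'z huq)
  have hxmin : ¬ IsMin x := by rw [hV.isMin_iff_rk]; omega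
  have hymin : ¬ IsMin y := by rw [hV.isMin_iff_rk]; omega
  obtain ⟨x1, x2, _, hx1, _, _⟩ := hV.covers_pair hxmin
  obtain ⟨y1, y2, _, hy1, _, _⟩ := hV.covers_pair hymin
  have hrx1 : rk x1 = j := by have := hV.rk_covBy _ _ hx1; omega
  have hry1 : rk y1 = j := by have := hV.rk_covBy _ _ hy1; omega
  obtain ⟨w⟩ := hgood x1 y1 hrx1 hry1
  exact hnr (W x1 y1 w x y hx hy hx1 hy1)

/-! ### Ideal-of-R-vine lemmas -/

lemma IsRVine.isIdeal {P : Type} [PartialOrder P] [Finite P] {rk : P → ℕ} (h : IsRVine rk) :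
    IsIdealOfRVine rk :=
  ⟨P, ‹_›, ‹_›, rk, (OrderIso.refl P).toOrderEmbedding, h, fun _ => rfl,
    fun u v _ _ => ⟨v, rfl⟩⟩

lemma IsIdealOfRVine.comp {P Q : Type} [PartialOrder P] [Finite P] [PartialOrder Q] [Finite Q]
    {rkP : P → ℕ} {rkQ : Q → ℕ} (f : P ↪o Q) (hrk : ∀ x, rkQ (f x) = rkP x)
    (hlow : IsLowerSet (Set.range f)) (hQ : IsIdealOfRVine rkQ) : IsIdealOfRVine rkP := by
  obtain ⟨R, iR, iF, rkR, g, hR, hgrk, hglow⟩ := hQ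
  refine ⟨R, iR, iF, rkR, f.trans g, hR, fun x => (hgrk (f x)).trans (hrk x), ?_⟩
  rintro u v hvu ⟨x, rfl⟩
  obtain ⟨y, rfl⟩ := hglow hvu ⟨f x, rfl⟩
  have hyfx : y ≤ f x := g.le_iff_le.1 hvu
  obtain ⟨w, rfl⟩ := hlow hyfx ⟨x, rfl⟩
  exact ⟨w, rfl⟩

/-! ### The completion theorem : a vine with proximity is an ideal of an R-vine -/

theorem completion : ∀ (k : ℕ) (P : Type) (iP : PartialOrder P) (iF : Finite P)
    (rk : P → ℕ) (j : ℕ), IsVine rk → Proximity rk →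
    (∀ ℓ (x y : P), 1 ≤ ℓ → ℓ ≤ j → rk x = ℓ → rk y = ℓ → (coverGraph rk ℓ).Reachable x y) →
    {x : P | IsMin x}.ncard ≤ j + k →
    IsIdealOfRVine rk := by
  intro k
  induction k with
  | zero =>
    intro P iP iF rk j hV hp hgood hm
    have hRj : vineRank rk ≤ j := by
      by_contra hR
      push_neg at hR
      have key : ∀ d, d ≤ j → {x : P | rk x = d + 1}.ncard + d = {x : P | IsMin x}.ncard := by
        intro d
        induction d with
        | zero =>
          intro _
          have hms : {x : P | IsMin x} = {x : P | rk x = 1} := by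
            ext z; simp [hV.isMin_iff_rk]
          rw [hms]
          norm_num
        | succ d ih =>
          intro hdj
          have hconn : ((coverGraph rk (d + 1)).induce {x : P | rk x = d + 1}).Connected := by
            rw [slice_connected_iff]
            exact ⟨hV.exists_rk_eq (by omega) (by omega),
              fun x y hx hy => hgood (d + 1) x y (by omega) (by omega) hx hy⟩
          have hstep := hV.count_step (i := d + 1) (by omega) hconn
          have := ih (by omega)
          omega
      have hkey := key j le_rfl
      obtain ⟨x, hx⟩ := hV.exists_rk_eq (i := j + 1) (by omega) (by omega)
      have hpos : 0 < {x' : P | rk x' = j + 1}.ncard := (Set.ncard_pos (Set.toFinite _)).2 ⟨x, hx⟩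
      omega
    refine (hV.rvine_of_connected hp ?_).isIdeal
    intro i h1i hiR
    rw [slice_connected_iff]
    exact ⟨hV.exists_rk_eq h1i hiR,
      fun x y hx hy => hgood i x y h1i (by omega) hx hy⟩
  | succ k ih =>
    intro P iP iF rk j hV hp hgood hm
    have inner : ∀ (d : ℕ) (P : Type) (iP : PartialOrder P) (iF : Finite P) (rk : P → ℕ),
        IsVine rk → Proximity rk →
        (∀ ℓ (x y : P), 1 ≤ ℓ → ℓ ≤ j → rk x = ℓ → rk y = ℓ → (coverGraph rk ℓ).Reachable x y) →
        {x : P | IsMin x}.ncard ≤ j + (k + 1) →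
        {p : P × P | rk p.1 = j + 1 ∧ rk p.2 = j + 1 ∧
          ¬ (coverGraph rk (j + 1)).Reachable p.1 p.2}.ncard ≤ d →
        IsIdealOfRVine rk := by
      intro d
      induction d with
      | zero =>
        intro P iP iF rk hV hp hgood hm hS
        refine ih P iP iF rk (j + 1) hV hp ?_ (by omega)
        intro ℓ x y h1ℓ hℓ hx hy
        rcases Nat.lt_or_ge ℓ (j + 1) with hc | hc
        · exact hgood ℓ x y h1ℓ (by omega) hx hy
        · have hℓ' : ℓ = j + 1 := by omega
          subst hℓ'
          by_contra hr
          have hpos : 0 < {p : P × P | rk p.1 = j + 1 ∧ rk p.2 = j + 1 ∧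
              ¬ (coverGraph rk (j + 1)).Reachable p.1 p.2}.ncard :=
            (Set.ncard_pos (Set.toFinite _)).2 ⟨(x, y), hx, hy, hr⟩
          omega
      | succ d ihd =>
        intro P iP iF rk hV hp hgood hm hS
        by_cases hle : {p : P × P | rk p.1 = j + 1 ∧ rk p.2 = j + 1 ∧
            ¬ (coverGraph rk (j + 1)).Reachable p.1 p.2}.ncard ≤ d
        · exact ihd P iP iF rk hV hp hgood hm hle
        · have hne : {p : P × P | rk p.1 = j + 1 ∧ rk p.2 = j + 1 ∧
              ¬ (coverGraph rk (j + 1)).Reachable p.1 p.2}.Nonempty := by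
            rw [Set.nonempty_iff_ne_empty]
            intro he
            rw [he, Set.ncard_empty] at hle
            omega
          obtain ⟨⟨x, y⟩, hx, hy, hxy⟩ := hne
          obtain ⟨a, b, hra, hrb, hnr, hcc⟩ : ∃ a b : P, rk a = j + 1 ∧ rk b = j + 1 ∧
              ¬ (coverGraph rk (j + 1)).Reachable a b ∧
              (2 ≤ j + 1 → ∃ c : P, c ⋖ a ∧ c ⋖ b) := by
            rcases Nat.eq_zero_or_pos j with rfl | hj
            · exact ⟨x, y, hx, hy, hxy, by omega⟩
            · obtain ⟨a, b, h1, h2, h3, h4⟩ := exists_adjacent_unreachable hV hj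
                (fun u v hu hv => hgood j u v hj le_rfl hu hv) hx hy hxy
              exact ⟨a, b, h1, h2, h3, fun _ => h4⟩
          have D : ExtData rk (j + 1) a b := ⟨hV, hra, hrb, by omega, hnr, hcc⟩
          refine IsIdealOfRVine.comp (rkQ := VExt.rkE a b rk (j + 1)) (ExtData.upOE (P := P) (a := a) (b := b)) (fun x => rfl) D.range_upOE_isLowerSet ?_
          refine ihd (VExt P a b) _ _ (VExt.rkE a b rk (j + 1)) D.isVine_ext
            (D.proximity_ext hp) ?_ ?_ ?_
          · intro ℓ x' y' h1ℓ hℓ hx' hy'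
            rcases VExt.up_or_top a b x' with ⟨u, rfl⟩ | rfl
            swap
            · exfalso
              have : (j + 1) + 1 = ℓ := hx'
              omega
            rcases VExt.up_or_top a b y' with ⟨v, rfl⟩ | rfl
            swap
            · exfalso
              have : (j + 1) + 1 = ℓ := hy'
              omega
            rw [D.reach_up_ne (by omega)]
            exact hgood ℓ u v h1ℓ hℓ hx' hy'
          · rw [D.mins_eq, Set.ncard_image_of_injective _ (VExt.up_injective a b)]
            exact hm
          · -- the number of unreachable pairs strictly decreased
            set S : Set (P × P) := {p : P × P | rk p.1 = j + 1 ∧ rk p.2 = j + 1 ∧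
              ¬ (coverGraph rk (j + 1)).Reachable p.1 p.2} with hSdef
            have hinj : Function.Injective
                (fun p : P × P => (VExt.up a b p.1, VExt.up a b p.2)) := by
              rintro ⟨p1, p2⟩ ⟨q1, q2⟩ hpq
              have h1 := congrArg Prod.fst hpq
              have h2 := congrArg Prod.snd hpq
              simp only at h1 h2
              exact Prod.ext (VExt.up_injective a b h1) (VExt.up_injective a b h2)
            have habS : (a, b) ∈ S := ⟨hra, hrb, hnr⟩
            have hsub : {p : VExt P a b × VExt P a b |
                VExt.rkE a b rk (j + 1) p.1 = j + 1 ∧ VExt.rkE a b rk (j + 1) p.2 = j + 1 ∧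
                ¬ (coverGraph (VExt.rkE a b rk (j + 1)) (j + 1)).Reachable p.1 p.2} ⊆
                (fun p : P × P => (VExt.up a b p.1, VExt.up a b p.2)) '' (S \ {(a, b)}) := by
              rintro ⟨u, v⟩ ⟨hu, hv, huv⟩
              rcases VExt.up_or_top a b u with ⟨p, rfl⟩ | rfl
              swap
              · exfalso
                have : (j + 1) + 1 = j + 1 := hu
                omega
              rcases VExt.up_or_top a b v with ⟨q, rfl⟩ | rfl
              swap
              · exfalso
                have : (j + 1) + 1 = j + 1 := hv
                omega
              have hpq : ¬ ((coverGraph rk (j + 1)) ⊔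
                  SimpleGraph.fromEdgeSet {s(a, b)}).Reachable p q := by
                intro hr
                exact huv (D.reach_up_i.2 hr)
              have hpqS : (p, q) ∈ S := ⟨hu, hv, fun hr =>
                hpq (hr.mono le_sup_left)⟩
              have hpqne : (p, q) ≠ (a, b) := by
                intro he
                apply hpq
                have h1 : p = a := congrArg Prod.fst he
                have h2 : q = b := congrArg Prod.snd he
                rw [h1, h2]
                refine SimpleGraph.Adj.reachable ?_
                exact Or.inr ((SimpleGraph.fromEdgeSet_adj _).2 ⟨rfl, D.hab⟩)
              exact ⟨(p, q), ⟨hpqS, hpqne⟩, rfl⟩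
            have hcard1 := Set.ncard_le_ncard hsub (Set.toFinite _)
            rw [Set.ncard_image_of_injective _ hinj,
              Set.ncard_diff_singleton_of_mem habS] at hcard1
            have hSpos : 0 < S.ncard := (Set.ncard_pos (Set.toFinite _)).2 ⟨(a, b), habS⟩
            omega
    exact inner ({p : P × P | rk p.1 = j + 1 ∧ rk p.2 = j + 1 ∧
      ¬ (coverGraph rk (j + 1)).Reachable p.1 p.2}.ncard) P iP iF rk hV hp hgood hm le_rfl

/-! ### Main theorem -/

/-- For a vine `P`, the following are equivalent: (1) `P` is an ideal of an R-vine
(an m-vine); (2) `P` satisfies the proximity condition; (3) `P` is an LR-vine. -/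
theorem mvine_tfae {P : Type} [PartialOrder P] [Finite P]
    (rk : P → ℕ) (h : IsVine rk) :
    List.TFAE [IsIdealOfRVine rk, Proximity rk, IsLRVine rk] := by
  tfae_have 1 → 2 := by
    rintro ⟨Q, iQ, iF, rkQ, f, hQ, hrk, hlow⟩ x y hne hrkxy h2 ⟨v, hxv, hyv⟩
    have hcov : ∀ p q : P, p ⋖ q → f p ⋖ f q := by
      intro p q hpq
      refine ⟨f.lt_iff_lt.2 hpq.lt, fun z hz1 hz2 => ?_⟩
      obtain ⟨w, rfl⟩ := hlow hz2.le ⟨q, rfl⟩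
      exact hpq.2 (f.lt_iff_lt.1 hz1) (f.lt_iff_lt.1 hz2)
    have hcov' : ∀ p q : P, f p ⋖ f q → p ⋖ q := by
      intro p q hpq
      exact ⟨f.lt_iff_lt.1 hpq.lt, fun z hz1 hz2 =>
        hpq.2 (f.lt_iff_lt.2 hz1) (f.lt_iff_lt.2 hz2)⟩
    obtain ⟨c, hc1, hc2⟩ := hQ.proximity (f x) (f y) (fun he => hne (f.injective he))
      (by rw [hrk, hrk]; exact hrkxy) (by rw [hrk]; exact h2)
      ⟨f v, hcov _ _ hxv, hcov _ _ hyv⟩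
    obtain ⟨m, rfl⟩ := hlow hc1.le ⟨x, rfl⟩
    exact ⟨m, hcov' _ _ hc1, hcov' _ _ hc2⟩
  tfae_have 2 → 3 := by
    intro hp
    refine ⟨h, fun v => ?_⟩
    have hL : IsLowerSet {x : P | x ≤ v} := fun u w hw hu => le_trans hw hu
    exact rvine_of_top (Nat.card ↥{x : P | x ≤ v}) _ _ _ _ ⟨v, le_refl v⟩ le_rfl
      (h.restrict hL) (Proximity.restrict h hp hL) (fun x => x.2)
  tfae_have 3 → 2 := by
    rintro ⟨hv, hr⟩ a b hne hrk h2 ⟨v, hav, hbv⟩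
    have hL : IsLowerSet {x : P | x ≤ v} := fun u w hw hu => le_trans hw hu
    obtain ⟨c, hc1, hc2⟩ := (hr v).proximity ⟨a, hav.le⟩ ⟨b, hbv.le⟩
      (fun he => hne (congrArg Subtype.val he)) hrk h2
      ⟨⟨v, le_refl v⟩, (lowerset_covBy_iff hL _ _).2 hav, (lowerset_covBy_iff hL _ _).2 hbv⟩
    exact ⟨c.val, (lowerset_covBy_iff hL c _).1 hc1, (lowerset_covBy_iff hL c _).1 hc2⟩
  tfae_have 2 → 1 := by
    intro hp
    exact completion ({x : P | IsMin x}.ncard) P _ _ rk 0 h hp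
      (fun ℓ x y h1 h0 _ _ => absurd (le_trans h1 h0) (by omega)) (by omega)
  tfae_finish
end
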